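/- arXiv:2310.17610 — 11 statements merged into one kernel-verified Lean document; each statement's English description precedes it below -/
import Mathlib

section
/- Let f : ℝ^d → ℝ be a convex continuously differentiable function, let x : [0,∞) → ℝ^d be a gradient flow of f, and let x* ∈ ℝ^d be any point. Then the function L : [0,∞) → ℝ defined by L(t) = t·(f(x(t)) − f(x*)) + (1/2)·‖x(t) − x*‖² is non-increasing on [0,∞). -/
set_option maxHeartbeats 1000000

open Filter MeasureTheory Set

open InnerProductSpace in
lemma grad_convex_ineq {d : ℕ} {f : EuclideanSpace ℝ (Fin d) → ℝ}
    (hconv : ConvexOn ℝ Set.univ f) (hf : ContDiff ℝ 1 f)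
    (y z : EuclideanSpace ℝ (Fin d)) :
    f y - f z ≤ inner ℝ (gradient f y) (y - z) := by
  have hdiff : DifferentiableAt ℝ f y := (hf.differentiable one_ne_zero) y
  have hF : HasFDerivAt f ((toDual ℝ (EuclideanSpace ℝ (Fin d))) (gradient f y)) y :=
    hasGradientAt_iff_hasFDerivAt.mp hdiff.hasGradientAt
  -- the line from y to z
  have hline : HasDerivAt (fun t : ℝ => y + t • (z - y)) (z - y) 0 := by
    simpa using (((hasDerivAt_id (0:ℝ)).smul_const (z - y)).const_add y)
  have h0' : y + (0:ℝ) • (z - y) = y := by simp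
  have hF' : HasFDerivAt f ((toDual ℝ (EuclideanSpace ℝ (Fin d))) (gradient f y))
      (y + (0:ℝ) • (z - y)) := by rw [h0']; exact hF
  have hg : HasDerivAt (fun t : ℝ => f (y + t • (z - y)))
      (inner ℝ (gradient f y) (z - y) : ℝ) 0 := by
    simpa [InnerProductSpace.toDual_apply_apply, Function.comp_def] using hF'.comp_hasDerivAt 0 hline
  have gconv : ConvexOn ℝ Set.univ (fun t : ℝ => f (y + t • (z - y))) := by
    have h := hconv.comp_affineMap (AffineMap.lineMap y z : ℝ →ᵃ[ℝ] (EuclideanSpace ℝ (Fin d)))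
    have hfun : (fun t : ℝ => f (y + t • (z - y)))
        = f ∘ (AffineMap.lineMap y z : ℝ →ᵃ[ℝ] (EuclideanSpace ℝ (Fin d))) := by
      funext t
      simp only [Function.comp_apply, AffineMap.lineMap_apply_module]
      congr 1
      module
    rw [hfun]
    simpa using h
  have hslope := gconv.le_slope_of_hasDerivAt (mem_univ (0:ℝ)) (mem_univ (1:ℝ))
    one_pos hg
  simp only [slope_def_field] at hslope
  have h0 : y + (0:ℝ) • (z - y) = y := by simp
  have h1 : y + (1:ℝ) • (z - y) = z := by simp
  rw [h0, h1] at hslope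
  have : (inner ℝ (gradient f y) (z - y) : ℝ) ≤ f z - f y := by
    simpa using hslope
  have hinner : (inner ℝ (gradient f y) (y - z) : ℝ)
      = -(inner ℝ (gradient f y) (z - y) : ℝ) := by
    rw [← inner_neg_right]; congr 1; abel
  rw [hinner]; linarith

/-- For a convex C¹ function `f : ℝ^d → ℝ`, a gradient flow `x` of `f`
on `[0,∞)` and any point `x*`, the function
`L(t) = t·(f(x(t)) − f(x*)) + ‖x(t) − x*‖²/2` is non-increasing on `[0,∞)`. -/
theorem gradient_flow_lyapunov_antitone
    (d : ℕ) (f : EuclideanSpace ℝ (Fin d) → ℝ)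
    (hconv : ConvexOn ℝ Set.univ f) (hf : ContDiff ℝ 1 f)
    (x : ℝ → EuclideanSpace ℝ (Fin d))
    (hx : ∀ t ∈ Set.Ici (0:ℝ),
      HasDerivWithinAt x (-(gradient f (x t))) (Set.Ici 0) t)
    (xstar : EuclideanSpace ℝ (Fin d)) :
    AntitoneOn (fun t : ℝ => t * (f (x t) - f xstar) + ‖x t - xstar‖ ^ 2 / 2)
      (Set.Ici 0) := by
  set g : ℝ → EuclideanSpace ℝ (Fin d) := fun t => gradient f (x t) with hg
  have hxc : ContinuousOn x (Set.Ici 0) := fun t ht => (hx t ht).continuousWithinAt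
  apply antitoneOn_of_hasDerivWithinAt_nonpos (convex_Ici 0)
    (f' := fun t => (f (x t) - f xstar) + t * (inner ℝ (g t) (-(g t)) : ℝ)
      + ((inner ℝ (-(g t)) (x t - xstar) : ℝ) + (inner ℝ (x t - xstar) (-(g t)) : ℝ)) / 2)
  · exact ((continuousOn_id.mul ((hf.continuous.comp_continuousOn hxc).sub
      continuousOn_const)).add (((hxc.sub continuousOn_const).norm.pow 2).div_const 2))
  · intro t ht
    rw [interior_Ici] at ht
    have hx' : HasDerivAt x (-(g t)) t :=
      (hx t (mem_Ici.mpr (le_of_lt ht))).hasDerivAt (Ici_mem_nhds ht)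
    have hF : HasFDerivAt f ((InnerProductSpace.toDual ℝ (EuclideanSpace ℝ (Fin d))) (g t)) (x t) :=
      hasGradientAt_iff_hasFDerivAt.mp ((hf.differentiable one_ne_zero) (x t)).hasGradientAt
    have h1 : HasDerivAt (fun s => f (x s)) (inner ℝ (g t) (-(g t)) : ℝ) t := by
      simpa [InnerProductSpace.toDual_apply_apply, Function.comp_def] using hF.comp_hasDerivAt t hx'
    have hu : HasDerivAt (fun s => x s - xstar) (-(g t)) t := hx'.sub_const xstar
    have h2 : HasDerivAt (fun s => (inner ℝ (x s - xstar) (x s - xstar) : ℝ))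
        ((inner ℝ (-(g t)) (x t - xstar) : ℝ) + (inner ℝ (x t - xstar) (-(g t)) : ℝ)) t := by
      have := hu.inner ℝ hu
      rwa [add_comm] at this
    have heq : (fun s : ℝ => s * (f (x s) - f xstar) + ‖x s - xstar‖ ^ 2 / 2)
        = fun s : ℝ => s * (f (x s) - f xstar)
          + (inner ℝ (x s - xstar) (x s - xstar) : ℝ) / 2 := by
      funext s; rw [real_inner_self_eq_norm_sq]
    rw [heq]
    have := ((hasDerivAt_id t).mul (h1.sub_const (f xstar))).add (h2.div_const 2)
    simpa [mul_comm, Pi.add_def, Pi.mul_def] using this.hasDerivWithinAt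
  · intro t ht
    rw [interior_Ici] at ht
    have h1 : f (x t) - f xstar ≤ (inner ℝ (g t) (x t - xstar) : ℝ) :=
      grad_convex_ineq hconv hf (x t) xstar
    have h2 : (inner ℝ (g t) (-(g t)) : ℝ) = -(‖g t‖^2) := by
      rw [inner_neg_right, real_inner_self_eq_norm_sq]
    have h3 : (inner ℝ (-(g t)) (x t - xstar) : ℝ) = -(inner ℝ (g t) (x t - xstar) : ℝ) :=
      inner_neg_left _ _
    have h4 : (inner ℝ (x t - xstar) (-(g t)) : ℝ) = -(inner ℝ (g t) (x t - xstar) : ℝ) := by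
      rw [inner_neg_right, real_inner_comm]
    rw [h2, h3, h4]
    have hn : (0:ℝ) ≤ ‖g t‖^2 := sq_nonneg _
    nlinarith [(mem_Ioi.mp ht).le]
end

section
/- Let f : ℝ^d → ℝ be a convex continuously differentiable function and let x : [0,∞) → ℝ^d be a gradient flow of f. Then f(x(t)) converges, as t → ∞, to inf_{y ∈ ℝ^d} f(y) (as an extended real number; in particular, if f is unbounded below then f(x(t)) → −∞). -/
open Filter MeasureTheory Set

open scoped RealInnerProductSpace

section aux

variable {E : Type*} [NormedAddCommGroup E] [InnerProductSpace ℝ E] [CompleteSpace E]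

/-- First-order condition for convexity: the graph lies above the tangent plane. -/
lemma my_grad_ineq {f : E → ℝ} (hconv : ConvexOn ℝ Set.univ f) {a g : E}
    (hg : HasGradientAt f g a) (b : E) :
    f a + ⟪g, b - a⟫ ≤ f b := by
  set G : ℝ → ℝ := fun s => f (AffineMap.lineMap a b s) with hG
  have hGc : ConvexOn ℝ Set.univ G := by
    have := hconv.comp_affineMap (AffineMap.lineMap (k := ℝ) a b)
    simpa [hG, Function.comp_def] using this
  have hcurve : HasDerivAt (fun s : ℝ => (AffineMap.lineMap (k := ℝ) a b) s) (b - a) 0 := by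
    simp only [AffineMap.lineMap_apply_module']
    simpa using ((hasDerivAt_id (0 : ℝ)).smul_const (b - a)).add_const a
  have hG0 : HasDerivAt G ⟪g, b - a⟫ 0 := by
    have hla : (AffineMap.lineMap (k := ℝ) a b) (0:ℝ) = a := by simp
    have hfd : HasFDerivAt f (InnerProductSpace.toDual ℝ E g)
        ((AffineMap.lineMap (k := ℝ) a b) (0:ℝ)) := by
      rw [hla]; exact hg.hasFDerivAt
    have := hfd.comp_hasDerivAt 0 hcurve
    simpa [hG, InnerProductSpace.toDual_apply_apply, Function.comp_def] using this
  have hslope := hGc.le_slope_of_hasDerivAt (mem_univ (0 : ℝ)) (mem_univ 1) one_pos hG0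
  have h1 : slope G 0 1 = G 1 - G 0 := by simp [slope_def_field]
  have hG1 : G 1 = f b := by simp [hG]
  have hG0' : G 0 = f a := by simp [hG]
  rw [h1, hG1, hG0'] at hslope
  linarith

end aux

/-- For a convex C¹ function `f : ℝ^d → ℝ` and a gradient flow `x` of `f`
on `[0,∞)`, the values `f(x(t))` converge, as `t → ∞`, to `inf f` computed in the
extended real numbers (which may be `−∞`). -/
theorem gradient_flow_tendsto_iInf
    (d : ℕ) (f : EuclideanSpace ℝ (Fin d) → ℝ)
    (hconv : ConvexOn ℝ Set.univ f) (hf : ContDiff ℝ 1 f)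
    (x : ℝ → EuclideanSpace ℝ (Fin d))
    (hx : ∀ t ∈ Set.Ici (0:ℝ),
      HasDerivWithinAt x (-(gradient f (x t))) (Set.Ici 0) t) :
    Filter.Tendsto (fun t : ℝ => (f (x t) : EReal)) Filter.atTop
      (nhds (⨅ y : EuclideanSpace ℝ (Fin d), (f y : EReal))) := by
  have hdiff : Differentiable ℝ f := hf.differentiable one_ne_zero
  have hgrad : ∀ z, HasGradientAt f (gradient f z) z := fun z =>
    (hdiff z).hasGradientAt
  -- Key estimate: for every y and T > 0, T * (f (x T) - f y) ≤ ‖x 0 - y‖² / 2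
  have key : ∀ (y : EuclideanSpace ℝ (Fin d)) {T : ℝ}, 0 < T →
      T * (f (x T) - f y) ≤ ‖x 0 - y‖ ^ 2 / 2 := by
    intro y T hT
    set ψ : ℝ → ℝ := fun t => ⟪x t - y, x t - y⟫ / 2 + t * (f (x t) - f y) with hψ
    set ψ' : ℝ → ℝ := fun t =>
      (⟪x t - y, -(gradient f (x t))⟫ + ⟪-(gradient f (x t)), x t - y⟫) / 2 +
        ((f (x t) - f y) + t * (-⟪gradient f (x t), gradient f (x t)⟫)) with hψ'
    have hD : ∀ t ∈ Set.Ici (0:ℝ), HasDerivWithinAt ψ (ψ' t) (Set.Ici 0) t := by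
      intro t ht
      have hxt := hx t ht
      have hxy : HasDerivWithinAt (fun t => x t - y) (-(gradient f (x t))) (Set.Ici 0) t :=
        hxt.sub_const y
      have hinner := (hxy.inner ℝ hxy).div_const 2
      have hfx : HasDerivWithinAt (fun t => f (x t))
          (-⟪gradient f (x t), gradient f (x t)⟫) (Set.Ici 0) t := by
        have := (hgrad (x t)).hasFDerivAt.comp_hasDerivWithinAt t hxt
        rw [InnerProductSpace.toDual_apply_apply] at this
        simpa [inner_neg_right, Function.comp_def] using this
      have hmul := (hasDerivWithinAt_id t (Set.Ici 0)).mul (hfx.sub_const (f y))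
      have := hinner.add hmul
      simp only [hψ, hψ', id] at this ⊢
      exact this.congr_deriv (by ring)
    have hψ'le : ∀ t ∈ interior (Set.Ici (0:ℝ)), ψ' t ≤ 0 := by
      intro t ht
      rw [interior_Ici] at ht
      have ht0 : (0:ℝ) < t := ht
      have hcv := my_grad_ineq hconv (hgrad (x t)) y
      have h1 : ⟪gradient f (x t), y - x t⟫ = -⟪gradient f (x t), x t - y⟫ := by
        rw [← inner_neg_right, neg_sub]
      have h2 : (0:ℝ) ≤ ⟪gradient f (x t), gradient f (x t)⟫ := real_inner_self_nonneg
      have h3 : ⟪x t - y, -(gradient f (x t))⟫ = -⟪gradient f (x t), x t - y⟫ := by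
        rw [inner_neg_right, real_inner_comm]
      have h4 : ⟪-(gradient f (x t)), x t - y⟫ = -⟪gradient f (x t), x t - y⟫ := by
        rw [inner_neg_left]
      simp only [hψ', h3, h4]
      nlinarith [hcv, h1, mul_nonneg ht0.le h2]
    have hanti : AntitoneOn ψ (Set.Ici 0) := by
      refine antitoneOn_of_hasDerivWithinAt_nonpos (convex_Ici 0)
        (fun t ht => (hD t ht).continuousWithinAt)
        (fun t ht => ((hD t (interior_subset ht)).mono interior_subset)) hψ'le
    have h01 : ψ T ≤ ψ 0 := hanti (le_refl (0:ℝ)) hT.le hT.le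
    have hψ0 : ψ 0 = ‖x 0 - y‖ ^ 2 / 2 := by
      simp only [hψ, zero_mul, add_zero]
      rw [real_inner_self_eq_norm_sq]
    have hψT : T * (f (x T) - f y) ≤ ψ T := by
      have : (0:ℝ) ≤ ⟪x T - y, x T - y⟫ / 2 :=
        div_nonneg real_inner_self_nonneg (by norm_num)
      simp only [hψ]; linarith
    exact hψT.trans (h01.trans hψ0.le)
  -- Now the limit statement
  rw [tendsto_order]
  constructor
  · intro a ha
    exact Eventually.of_forall fun t => lt_of_lt_of_le ha (iInf_le _ (x t))
  · intro b hb
    obtain ⟨y, hy⟩ := iInf_lt_iff.mp hb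
    induction b with
    | bot => exact absurd hy (by simp)
    | top => exact Eventually.of_forall fun t => EReal.coe_lt_top _
    | coe b' =>
      have hyb : f y < b' := by exact_mod_cast hy
      set C : ℝ := ‖x 0 - y‖ ^ 2 / 2 with hC
      have hC0 : 0 ≤ C := div_nonneg (sq_nonneg _) (by norm_num)
      set ε : ℝ := b' - f y with hε
      have hε0 : 0 < ε := by simp [hε]; linarith
      filter_upwards [eventually_gt_atTop (max 0 (C / ε))] with t ht
      have ht0 : 0 < t := lt_of_le_of_lt (le_max_left _ _) ht
      have htC : C / ε < t := lt_of_le_of_lt (le_max_right _ _) ht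
      have h1 : t * (f (x t) - f y) ≤ C := key y ht0
      have h2 : C < ε * t := by
        rwa [div_lt_iff₀ hε0, mul_comm] at htC
      have h3 : f (x t) < b' := by nlinarith
      exact_mod_cast EReal.coe_lt_coe_iff.mpr h3
end

section
/- Let f : ℝ^d → ℝ be a convex continuously differentiable function, let x* ∈ ℝ^d satisfy f(x*) = inf_{y ∈ ℝ^d} f(y), and let x : [0,∞) → ℝ^d be a gradient flow of f. Then ∫₀^∞ (f(x(t)) − f(x*)) dt ≤ ‖x(0) − x*‖² / 2. -/
open Filter MeasureTheory Set

lemma grad_ineq {d : ℕ} (f : EuclideanSpace ℝ (Fin d) → ℝ)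
    (hconv : ConvexOn ℝ Set.univ f) (hf : ContDiff ℝ 1 f)
    (a b : EuclideanSpace ℝ (Fin d)) :
    f a + inner ℝ (gradient f a) (b - a) ≤ f b := by
  have hdiff := hf.differentiable one_ne_zero
  set g : ℝ → ℝ := f ∘ (AffineMap.lineMap a b) with hg
  have hgconv : ConvexOn ℝ Set.univ g := by
    simpa using hconv.comp_affineMap (AffineMap.lineMap a b)
  have hcurve : HasDerivAt (AffineMap.lineMap a b : ℝ → EuclideanSpace ℝ (Fin d)) (b - a) 0 :=
    AffineMap.hasDerivAt_lineMap
  have hfd : HasFDerivAt f (InnerProductSpace.toDualMap ℝ _ (gradient f a)) a :=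
    (hdiff a).hasGradientAt
  have hgd : HasDerivAt g ((inner ℝ (gradient f a) (b - a) : ℝ)) 0 := by
    have := (hfd.congr_fderiv rfl : HasFDerivAt f _ a)
    rw [show a = (AffineMap.lineMap a b : ℝ → EuclideanSpace ℝ (Fin d)) 0 by simp] at hfd
    have := hfd.comp_hasDerivAt 0 hcurve
    simpa using this
  have hslope := hgconv.le_slope_of_hasDerivAt (Set.mem_univ 0) (Set.mem_univ 1)
    one_pos hgd
  rw [slope_def_field] at hslope
  simp only [hg, Function.comp_apply, AffineMap.lineMap_apply_zero, AffineMap.lineMap_apply_one]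
    at hslope
  have : inner ℝ (gradient f a) (b - a) ≤ f b - f a := by
    have := hslope
    field_simp at this
    linarith
  linarith

/-- For a convex C¹ function `f : ℝ^d → ℝ` with minimizer `x*` and a
gradient flow `x` of `f`, the excess energy is integrable:
`∫₀^∞ (f(x(t)) − f(x*)) dt ≤ ‖x(0) − x*‖²/2`. -/
theorem gradient_flow_excess_energy_integrable
    (d : ℕ) (f : EuclideanSpace ℝ (Fin d) → ℝ)
    (hconv : ConvexOn ℝ Set.univ f) (hf : ContDiff ℝ 1 f)
    (xstar : EuclideanSpace ℝ (Fin d)) (hmin : ∀ y, f xstar ≤ f y)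
    (x : ℝ → EuclideanSpace ℝ (Fin d))
    (hx : ∀ t ∈ Set.Ici (0:ℝ),
      HasDerivWithinAt x (-(gradient f (x t))) (Set.Ici 0) t) :
    ∫⁻ t in Set.Ioi (0:ℝ), ENNReal.ofReal (f (x t) - f xstar) ≤
      ENNReal.ofReal (‖x 0 - xstar‖ ^ 2 / 2) := by
  set h : ℝ → ℝ := fun t => f (x t) - f xstar with hh
  have hxc : ContinuousOn x (Set.Ici 0) := fun t ht => (hx t ht).continuousWithinAt
  have hcont : ContinuousOn h (Set.Ici 0) :=
    ((hf.continuous.comp_continuousOn hxc).sub continuousOn_const)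
  have hint : ∀ T : ℝ, 0 ≤ T → IntervalIntegrable h volume 0 T := by
    intro T hT
    apply ContinuousOn.intervalIntegrable
    apply hcont.mono
    rw [Set.uIcc_of_le hT]
    exact fun s hs => hs.1
  set g : ℝ → ℝ := fun T => (inner ℝ (x T - xstar) (x T - xstar) : ℝ) / 2 with hgdef
  set φ : ℝ → ℝ := fun T => (∫ s in (0:ℝ)..T, h s) + g T with hφdef
  -- derivative of g part
  have hgderiv : ∀ T ∈ Set.Ici (0:ℝ), HasDerivWithinAt g
      (-(inner ℝ (gradient f (x T)) (x T - xstar))) (Set.Ici 0) T := by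
    intro T hT
    have hd : HasDerivWithinAt (fun t => x t - xstar) (-(gradient f (x T))) (Set.Ici 0) T :=
      (hx T hT).sub_const xstar
    have := (hd.inner ℝ hd).div_const 2
    refine this.congr_deriv ?_
    rw [inner_neg_left, inner_neg_right, real_inner_comm (x T - xstar) (gradient f (x T))]
    ring
  -- nonpositivity of φ' candidate
  have hkey : ∀ T, h T + -(inner ℝ (gradient f (x T)) (x T - xstar)) ≤ 0 := by
    intro T
    have := grad_ineq f hconv hf (x T) xstar
    rw [show xstar - x T = -(x T - xstar) by abel, inner_neg_right] at this
    simp only [hh]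
    linarith
  -- φ is antitone on Ici 0
  have hφanti : AntitoneOn φ (Set.Ici 0) := by
    apply antitoneOn_of_deriv_nonpos (convex_Ici 0)
    · -- continuity
      intro T hT
      rcases eq_or_lt_of_le (Set.mem_Ici.mp hT) with rfl | hT'
      · have h1 : HasDerivWithinAt (fun u => ∫ s in (0:ℝ)..u, h s) (h 0) (Set.Ici 0) 0 :=
          intervalIntegral.integral_hasDerivWithinAt_right (hint 0 le_rfl)
            ⟨Set.Ioi 0, self_mem_nhdsWithin,
              (hcont.mono (Set.Ioi_subset_Ici le_rfl)).aestronglyMeasurable measurableSet_Ioi⟩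
            ((hcont 0 Set.self_mem_Ici).mono (Set.Ioi_subset_Ici le_rfl))
        exact (h1.add (hgderiv 0 Set.self_mem_Ici)).continuousWithinAt
      · have h1 : ContinuousAt φ T := by
          have hFA : HasDerivAt (fun u => ∫ s in (0:ℝ)..u, h s) (h T) T := by
            apply intervalIntegral.integral_hasDerivAt_right (hint T hT'.le)
            · exact (hcont.mono (Set.Ioi_subset_Ici le_rfl)).stronglyMeasurableAtFilter
                isOpen_Ioi _ hT'
            · exact (hcont T (Set.mem_Ici.mpr hT'.le)).continuousAt (Ici_mem_nhds hT')
          have hGA := (hgderiv T (Set.mem_Ici.mpr hT'.le)).hasDerivAt (Ici_mem_nhds hT')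
          exact (hFA.add hGA).continuousAt
        exact h1.continuousWithinAt
    · -- differentiability on interior
      intro T hT
      rw [interior_Ici, Set.mem_Ioi] at hT
      have hFA : HasDerivAt (fun u => ∫ s in (0:ℝ)..u, h s) (h T) T := by
        apply intervalIntegral.integral_hasDerivAt_right (hint T hT.le)
        · exact (hcont.mono (Set.Ioi_subset_Ici le_rfl)).stronglyMeasurableAtFilter
            isOpen_Ioi _ hT
        · exact (hcont T (Set.mem_Ici.mpr hT.le)).continuousAt (Ici_mem_nhds hT)
      have hGA := (hgderiv T (Set.mem_Ici.mpr hT.le)).hasDerivAt (Ici_mem_nhds hT)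
      exact (hFA.add hGA).differentiableAt.differentiableWithinAt
    · -- deriv nonpos
      intro T hT
      rw [interior_Ici, Set.mem_Ioi] at hT
      have hFA : HasDerivAt (fun u => ∫ s in (0:ℝ)..u, h s) (h T) T := by
        apply intervalIntegral.integral_hasDerivAt_right (hint T hT.le)
        · exact (hcont.mono (Set.Ioi_subset_Ici le_rfl)).stronglyMeasurableAtFilter
            isOpen_Ioi _ hT
        · exact (hcont T (Set.mem_Ici.mpr hT.le)).continuousAt (Ici_mem_nhds hT)
      have hGA := (hgderiv T (Set.mem_Ici.mpr hT.le)).hasDerivAt (Ici_mem_nhds hT)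
      rw [(show HasDerivAt φ (h T + -(inner ℝ (gradient f (x T)) (x T - xstar))) T from hFA.add hGA).deriv]
      exact hkey T
  -- bound on interval integrals
  set C : ℝ := ‖x 0 - xstar‖ ^ 2 / 2 with hC
  have hφ0 : φ 0 = C := by
    simp only [hφdef, hgdef, intervalIntegral.integral_same, zero_add, hC,
      real_inner_self_eq_norm_sq]
  have hbound : ∀ T : ℝ, 0 ≤ T → ∫ s in Set.Ioc (0:ℝ) T, h s ≤ C := by
    intro T hT
    have h1 : φ T ≤ φ 0 := hφanti Set.self_mem_Ici hT hT
    have h2 : 0 ≤ g T := by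
      have := real_inner_self_nonneg (x := x T - xstar)
      simp only [hgdef]
      linarith
    have h3 : ∫ s in Set.Ioc (0:ℝ) T, h s = ∫ s in (0:ℝ)..T, h s :=
      (intervalIntegral.integral_of_le hT).symm
    rw [h3, hφ0] at *
    simp only [hφdef] at h1
    linarith
  -- pass to lintegral
  have hnn : ∀ t, 0 ≤ h t := fun t => sub_nonneg.2 (hmin (x t))
  set F : ℕ → ℝ → ENNReal := fun n => (Set.Ioc (0:ℝ) (n:ℝ)).indicator
    (fun t => ENNReal.ofReal (h t)) with hF
  have hFmeas : ∀ n : ℕ, AEMeasurable (F n) volume := by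
    intro n
    rw [hF]
    exact (aemeasurable_indicator_iff measurableSet_Ioc).mpr
      ((hcont.mono (fun s hs => hs.1.le)).aemeasurable measurableSet_Ioc).ennreal_ofReal
  have hFmono : Monotone F := by
    intro m n hmn
    intro t
    exact Set.indicator_le_indicator_of_subset
      (Set.Ioc_subset_Ioc le_rfl (by exact_mod_cast hmn)) (fun _ => zero_le) t
  have hFsup : ∀ t, ⨆ n, F n t = (Set.Ioi (0:ℝ)).indicator (fun t => ENNReal.ofReal (h t)) t := by
    intro t
    rcases le_or_gt t 0 with ht | ht
    · have h1 : ∀ n : ℕ, F n t = 0 := fun n =>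
        Set.indicator_of_notMem (fun hc => absurd hc.1 ht.not_gt) _
      have h2 : (Set.Ioi (0:ℝ)).indicator (fun t => ENNReal.ofReal (h t)) t = 0 :=
        Set.indicator_of_notMem (fun hc => absurd (Set.mem_Ioi.mp hc) ht.not_gt) _
      simp [h1, h2]
    · rw [Set.indicator_of_mem (Set.mem_Ioi.mpr ht)]
      obtain ⟨n, hn⟩ := exists_nat_ge t
      apply le_antisymm
      · exact iSup_le fun n => Set.indicator_le' (fun _ _ => le_rfl) (fun _ _ => zero_le) t
      · refine le_trans ?_ (le_iSup _ n)
        rw [hF]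
        simp only
        rw [Set.indicator_of_mem (Set.mem_Ioc.mpr ⟨ht, hn⟩)]
  calc ∫⁻ t in Set.Ioi (0:ℝ), ENNReal.ofReal (h t)
      = ∫⁻ t, (Set.Ioi (0:ℝ)).indicator (fun t => ENNReal.ofReal (h t)) t := by
        rw [lintegral_indicator measurableSet_Ioi _]
    _ = ∫⁻ t, ⨆ n, F n t := by simp_rw [hFsup]
    _ = ⨆ n, ∫⁻ t, F n t := by
        rw [lintegral_iSup' hFmeas (Filter.Eventually.of_forall (fun t m n hmn => hFmono hmn t))]
    _ ≤ ENNReal.ofReal C := by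
        apply iSup_le
        intro n
        rw [hF]
        simp only
        rw [lintegral_indicator measurableSet_Ioc _]
        have hIntg : IntegrableOn h (Set.Ioc (0:ℝ) n) volume := by
          have := (hint n (Nat.cast_nonneg n)).1
          simpa using this
        rw [← MeasureTheory.ofReal_integral_eq_lintegral_ofReal hIntg
          (Filter.Eventually.of_forall (fun t => hnn t))]
        exact ENNReal.ofReal_le_ofReal (hbound n (Nat.cast_nonneg n))
end

section
/- Let f : ℝ^d → ℝ be a convex continuously differentiable function which attains its infimum at some x* ∈ ℝ^d, and let x : [0,∞) → ℝ^d be a gradient flow of f. Then lim_{t→∞} t·(f(x(t)) − inf_{y ∈ ℝ^d} f(y)) = 0. -/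
open Filter MeasureTheory Set

open InnerProductSpace in
private lemma grad_ineq_aux {d : ℕ} {f : EuclideanSpace ℝ (Fin d) → ℝ}
    (hconv : ConvexOn ℝ Set.univ f) (hfd : Differentiable ℝ f)
    (y z : EuclideanSpace ℝ (Fin d)) :
    f y + (inner ℝ (gradient f y) (z - y) : ℝ) ≤ f z := by
  set g : ℝ → ℝ := fun s => f (s • (z - y) + y) with hg
  have hcurve : HasDerivAt (fun s : ℝ => s • (z - y) + y) (z - y) 0 := by
    simpa using ((hasDerivAt_id (0:ℝ)).smul_const (z - y)).add_const y
  have hfg : HasFDerivAt f (toDual ℝ _ (gradient f y)) y :=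
    (hfd y).hasGradientAt.hasFDerivAt
  have hfg' : HasFDerivAt f (toDual ℝ _ (gradient f y)) ((0:ℝ) • (z - y) + y) := by
    simpa using hfg
  have hgder : HasDerivAt g ((inner ℝ (gradient f y) (z - y) : ℝ)) 0 := by
    simpa [toDual_apply_apply, Function.comp_def, hg] using hfg'.comp_hasDerivAt 0 hcurve
  have hgconv : ConvexOn ℝ Set.univ g := by
    have := hconv.comp_affineMap (AffineMap.lineMap y z)
    simpa [AffineMap.lineMap_apply, Function.comp_def, hg] using this
  have := hgconv.le_slope_of_hasDerivAt (Set.mem_univ (0:ℝ)) (Set.mem_univ (1:ℝ))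
    zero_lt_one hgder
  have hs : slope g 0 1 = f z - f y := by
    simp [slope_def_field, hg]
  rw [hs] at this
  linarith

private lemma tail_tendsto_aux (φ : ℝ → ℝ) (hφc : ContinuousOn φ (Set.Ici 0))
    (hφ0 : ∀ t, 0 ≤ φ t) (hanti : AntitoneOn φ (Set.Ici 0)) (C : ℝ)
    (hC : ∀ T, 0 ≤ T → ∫ t in (0:ℝ)..T, φ t ≤ C) :
    Tendsto (fun t : ℝ => t * φ t) atTop (nhds 0) := by
  have hint : ∀ a b : ℝ, 0 ≤ a → 0 ≤ b → IntervalIntegrable φ volume a b := by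
    intro a b ha hb
    apply ContinuousOn.intervalIntegrable
    exact hφc.mono (fun t ht => le_trans (le_min ha hb) ht.1)
  set F : ℝ → ℝ := fun T => ∫ t in (0:ℝ)..(max T 0), φ t with hF
  have hFmono : Monotone F := by
    intro a b hab
    have h1 : (0:ℝ) ≤ max a 0 := le_max_right _ _
    have h2 : max a 0 ≤ max b 0 := max_le_max hab le_rfl
    have := intervalIntegral.integral_add_adjacent_intervals
      (hint 0 (max a 0) le_rfl h1) (hint (max a 0) (max b 0) h1 (le_trans h1 h2))
    have hnn : 0 ≤ ∫ t in (max a 0)..(max b 0), φ t :=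
      intervalIntegral.integral_nonneg h2 (fun u _ => hφ0 u)
    simp only [hF]
    linarith [this]
  have hFbdd : BddAbove (Set.range F) := by
    refine ⟨C, ?_⟩
    rintro _ ⟨T, rfl⟩
    exact hC _ (le_max_right _ _)
  have hFlim : Tendsto F atTop (nhds (⨆ T, F T)) := tendsto_atTop_ciSup hFmono hFbdd
  have hhalf : Tendsto (fun T : ℝ => T / 2) atTop atTop :=
    Tendsto.atTop_div_const (by norm_num) tendsto_id
  have hdiff : Tendsto (fun T => F T - F (T / 2)) atTop (nhds 0) := by
    have := hFlim.sub (hFlim.comp hhalf)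
    simpa using this
  have hub : ∀ᶠ T in atTop, T * φ T ≤ 2 * (F T - F (T / 2)) := by
    filter_upwards [eventually_ge_atTop (0:ℝ)] with T hT
    have hT2 : (0:ℝ) ≤ T / 2 := by linarith
    have hT2T : T / 2 ≤ T := by linarith
    have hFT : F T = ∫ t in (0:ℝ)..T, φ t := by simp [hF, max_eq_left hT]
    have hFT2 : F (T / 2) = ∫ t in (0:ℝ)..(T/2), φ t := by simp [hF, max_eq_left hT2]
    have hsplit := intervalIntegral.integral_add_adjacent_intervals
      (hint 0 (T/2) le_rfl hT2) (hint (T/2) T hT2 hT)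
    have hlow : (T / 2) * φ T ≤ ∫ t in (T/2)..T, φ t := by
      have hconst : ∫ _t in (T/2)..T, φ T = (T - T/2) * φ T := by
        simp [smul_eq_mul]
      have := intervalIntegral.integral_mono_on hT2T
        (intervalIntegrable_const) (hint (T/2) T hT2 hT)
        (fun u hu => hanti (Set.mem_Ici.2 (le_trans hT2 hu.1)) (Set.mem_Ici.2 hT) hu.2)
      rw [hconst] at this
      calc (T/2) * φ T = (T - T/2) * φ T := by ring_nf
        _ ≤ _ := this
    have : F T - F (T/2) = ∫ t in (T/2)..T, φ t := by
      rw [hFT, hFT2]; linarith [hsplit]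
    rw [this]; linarith [hlow]
  have hlb : ∀ᶠ T in atTop, (0:ℝ) ≤ T * φ T := by
    filter_upwards [eventually_ge_atTop (0:ℝ)] with T hT
    exact mul_nonneg hT (hφ0 T)
  have h2 : Tendsto (fun T => 2 * (F T - F (T / 2))) atTop (nhds 0) := by
    simpa using hdiff.const_mul 2
  exact tendsto_of_tendsto_of_tendsto_of_le_of_le' tendsto_const_nhds h2 hlb hub

open InnerProductSpace in
/-- For a convex C¹ function `f : ℝ^d → ℝ` attaining its infimum at `x*`
and a gradient flow `x` of `f`, one has `t·(f(x(t)) − inf f) → 0` as `t → ∞`. -/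
theorem gradient_flow_little_o_one_over_t
    (d : ℕ) (f : EuclideanSpace ℝ (Fin d) → ℝ)
    (hconv : ConvexOn ℝ Set.univ f) (hf : ContDiff ℝ 1 f)
    (xstar : EuclideanSpace ℝ (Fin d)) (hmin : ∀ y, f xstar ≤ f y)
    (x : ℝ → EuclideanSpace ℝ (Fin d))
    (hx : ∀ t ∈ Set.Ici (0:ℝ),
      HasDerivWithinAt x (-(gradient f (x t))) (Set.Ici 0) t) :
    Filter.Tendsto (fun t : ℝ => t * (f (x t) - f xstar)) Filter.atTop (nhds 0) := by
  have hfd : Differentiable ℝ f := hf.differentiable one_ne_zero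
  set φ : ℝ → ℝ := fun t => f (x t) - f xstar with hφ
  have hφ0 : ∀ t, 0 ≤ φ t := fun t => sub_nonneg.2 (hmin _)
  have hxc : ContinuousOn x (Set.Ici 0) := fun t ht => (hx t ht).continuousWithinAt
  have hgradc : Continuous (gradient f) := by
    have h1 : Continuous (fderiv ℝ f) := hf.continuous_fderiv one_ne_zero
    exact (toDual ℝ (EuclideanSpace ℝ (Fin d))).symm.continuous.comp h1
  have hφc : ContinuousOn φ (Set.Ici 0) :=
    (hfd.continuous.comp_continuousOn hxc).sub continuousOn_const
  -- derivative of f ∘ x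
  have hgder : ∀ t ∈ Set.Ici (0:ℝ),
      HasDerivWithinAt (fun s => f (x s)) (-(‖gradient f (x t)‖^2)) (Set.Ici 0) t := by
    intro t ht
    have h1 : HasFDerivAt f (toDual ℝ _ (gradient f (x t))) (x t) :=
      (hfd (x t)).hasGradientAt.hasFDerivAt
    have := h1.comp_hasDerivWithinAt t (hx t ht)
    simpa only [Function.comp_def, toDual_apply_apply, inner_neg_right, real_inner_self_eq_norm_sq]
      using this
  -- φ is antitone on [0, ∞)
  have hφanti : AntitoneOn φ (Set.Ici 0) := by
    have h1 : AntitoneOn (fun s => f (x s)) (Set.Ici 0) := by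
      apply antitoneOn_of_hasDerivWithinAt_nonpos (convex_Ici 0)
        (hfd.continuous.comp_continuousOn hxc)
        (f' := fun t => -(‖gradient f (x t)‖^2))
      · intro t ht
        rw [interior_Ici] at ht ⊢
        exact (((hgder t (Set.mem_Ici.2 (le_of_lt ht))).hasDerivAt (Ici_mem_nhds ht)).hasDerivWithinAt)
      · intro t _
        simp only [neg_nonpos]
        positivity
    intro a ha b hb hab
    exact sub_le_sub_right (h1 ha hb hab) _
  -- the Lyapunov function H and its derivative ψ
  set H : ℝ → ℝ := fun t => (inner ℝ (x t - xstar) (x t - xstar) : ℝ) with hHdef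
  set ψ : ℝ → ℝ := fun t => 2 * (inner ℝ (x t - xstar) (-(gradient f (x t))) : ℝ) with hψdef
  have hHder : ∀ t ∈ Set.Ici (0:ℝ), HasDerivWithinAt H (ψ t) (Set.Ici 0) t := by
    intro t ht
    have h1 : HasDerivWithinAt (fun s => x s - xstar) (-(gradient f (x t))) (Set.Ici 0) t :=
      (hx t ht).sub_const _
    have h2 := HasDerivWithinAt.inner (𝕜 := ℝ) h1 h1
    have h3 : ψ t = (inner ℝ (x t - xstar) (-(gradient f (x t))) : ℝ)
        + (inner ℝ (-(gradient f (x t))) (x t - xstar) : ℝ) := by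
      simp only [hψdef]
      rw [real_inner_comm (-(gradient f (x t))) (x t - xstar)]
      ring
    rw [h3]
    exact h2
  have hHcont : ContinuousOn H (Set.Ici 0) :=
    ContinuousOn.inner (hxc.sub continuousOn_const) (hxc.sub continuousOn_const)
  have hψcont : ContinuousOn ψ (Set.Ici 0) := by
    apply continuousOn_const.mul
    exact ContinuousOn.inner (hxc.sub continuousOn_const)
      ((hgradc.comp_continuousOn hxc).neg)
  -- pointwise bound ψ t ≤ -(2 * φ t)
  have hψbound : ∀ t ∈ Set.Ici (0:ℝ), ψ t ≤ -(2 * φ t) := by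
    intro t _
    have hgi := grad_ineq_aux hconv hfd (x t) xstar
    have heq : (inner ℝ (x t - xstar) (-(gradient f (x t))) : ℝ)
        = (inner ℝ (gradient f (x t)) (xstar - x t) : ℝ) := by
      rw [real_inner_comm, inner_neg_left, ← inner_neg_right]
      congr 1
      abel
    simp only [hψdef, hφ]
    rw [heq]
    nlinarith [hgi]
  -- integral bound
  have key : ∀ T, 0 ≤ T → ∫ t in (0:ℝ)..T, φ t ≤ H 0 / 2 := by
    intro T hT
    have hIccsub : Set.Icc (0:ℝ) T ⊆ Set.Ici 0 := fun u hu => hu.1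
    have huIcc : Set.uIcc (0:ℝ) T = Set.Icc 0 T := Set.uIcc_of_le hT
    have hψint : IntervalIntegrable ψ volume 0 T := by
      apply ContinuousOn.intervalIntegrable
      rw [huIcc]; exact hψcont.mono hIccsub
    have hφint : IntervalIntegrable φ volume 0 T := by
      apply ContinuousOn.intervalIntegrable
      rw [huIcc]; exact hφc.mono hIccsub
    have hftc : ∫ t in (0:ℝ)..T, ψ t = H T - H 0 := by
      apply intervalIntegral.integral_eq_sub_of_hasDeriv_right_of_le hT
        (hHcont.mono hIccsub)
      · intro t ht
        have ht' : (0:ℝ) < t := ht.1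
        exact ((hHder t (Set.mem_Ici.2 (le_of_lt ht'))).hasDerivAt (Ici_mem_nhds ht')).hasDerivWithinAt
      · exact hψint
    have hmono : ∫ t in (0:ℝ)..T, ψ t ≤ ∫ t in (0:ℝ)..T, -(2 * φ t) := by
      apply intervalIntegral.integral_mono_on hT hψint (hφint.const_mul 2).neg
      intro u hu
      exact hψbound u (Set.mem_Ici.2 hu.1)
    have hneg : ∫ t in (0:ℝ)..T, -(2 * φ t) = -(2 * ∫ t in (0:ℝ)..T, φ t) := by
      rw [intervalIntegral.integral_neg, intervalIntegral.integral_const_mul]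
    have hHT : 0 ≤ H T := real_inner_self_nonneg
    rw [hftc] at hmono
    rw [hneg] at hmono
    linarith
  exact tail_tendsto_aux φ hφc hφ0 hφanti (H 0 / 2) key
end

section
/- Let g : [0,∞) → (0,∞) be a monotone decreasing function with ∫₀^∞ g(t) dt < ∞. Then there exists u₀ ∈ L²((1,∞)) (with Lebesgue measure) such that for every t ≥ 1, (1/2)·∫₁^∞ e^{−2t/s}·u₀(s)²/s ds ≥ g(t). In other words, the gradient flow u(t) of the convex quadratic functional F with initial datum u₀ satisfies F(u(t)) ≥ g(t) for all t ≥ 1, so the energy decay of gradient flows of a fixed quadratic convex functional on a Hilbert space can be slower than any prescribed monotone integrable rate. -/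
open Filter MeasureTheory Set

/-- Shift a set integral by 1 to the left. -/
lemma slow_shift_integral {f : ℝ → ℝ} {S T : Set ℝ} (hS : MeasurableSet S)
    (hT : MeasurableSet T) (h : ∀ s : ℝ, s ∈ T ↔ s - 1 ∈ S) :
    ∫ s in T, f (s - 1) = ∫ s in S, f s := by
  have key : (fun s : ℝ => S.indicator f (s - 1)) = T.indicator (fun s => f (s - 1)) := by
    funext s
    by_cases hs : s ∈ T
    · rw [indicator_of_mem hs, indicator_of_mem ((h s).1 hs)]
    · rw [indicator_of_notMem hs, indicator_of_notMem (fun hc => hs ((h s).2 hc))]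
  rw [← integral_indicator hT, ← integral_indicator hS, ← key,
    integral_sub_right_eq_self (S.indicator f) (1:ℝ)]

lemma slow_shift_integrableOn {f : ℝ → ℝ} {S T : Set ℝ} (hS : MeasurableSet S)
    (hT : MeasurableSet T) (h : ∀ s : ℝ, s ∈ T ↔ s - 1 ∈ S)
    (hf : IntegrableOn f S) : IntegrableOn (fun s => f (s - 1)) T := by
  have key : (fun s : ℝ => S.indicator f (s - 1)) = T.indicator (fun s => f (s - 1)) := by
    funext s
    by_cases hs : s ∈ T
    · rw [indicator_of_mem hs, indicator_of_mem ((h s).1 hs)]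
    · rw [indicator_of_notMem hs, indicator_of_notMem (fun hc => hs ((h s).2 hc))]
  rw [← integrable_indicator_iff hT, ← key]
  exact (((integrable_indicator_iff hS).2 hf).comp_sub_right (1:ℝ))

set_option maxHeartbeats 1000000 in
/-- Slow convergence of gradient flows of a fixed quadratic convex
functional on the Hilbert space `L²((1,∞))`. For any positive, monotone decreasing,
integrable function `g : [0,∞) → (0,∞)` there is an initial datum `u₀ ∈ L²((1,∞))`
such that the gradient flow `u(t)(s) = e^{−t/s}·u₀(s)` of
`F(u) = (1/2)·∫₁^∞ u(s)²/s ds` satisfies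
`F(u(t)) = (1/2)·∫₁^∞ e^{−2t/s}·u₀(s)²/s ds ≥ g(t)` for all `t ≥ 1`. -/
theorem hilbert_gradient_flow_arbitrarily_slow
    (g : ℝ → ℝ) (hpos : ∀ t ∈ Set.Ici (0:ℝ), 0 < g t)
    (hmono : AntitoneOn g (Set.Ici 0))
    (hint : MeasureTheory.IntegrableOn g (Set.Ioi 0)) :
    ∃ u₀ : ℝ → ℝ,
      MeasureTheory.MemLp u₀ 2 (MeasureTheory.volume.restrict (Set.Ioi 1)) ∧
      ∀ t ≥ (1:ℝ),
        g t ≤ (1/2) * ∫ s in Set.Ioi (1:ℝ), Real.exp (-2*t/s) * (u₀ s)^2 / s := by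
  classical
  -- The antitone extension of `g` to all of `ℝ`.
  set G : ℝ → ℝ := fun t => g (max t 0) with hGdef
  have hG_anti : Antitone G := fun a b hab =>
    hmono (mem_Ici.2 (le_max_right _ _)) (mem_Ici.2 (le_max_right _ _)) (max_le_max hab le_rfl)
  have hG_meas : Measurable G := hG_anti.measurable
  have hG_pos : ∀ t, 0 < G t := fun t => hpos _ (mem_Ici.2 (le_max_right _ _))
  have hG_eq : ∀ t : ℝ, 0 ≤ t → G t = g t := fun t ht => by
    simp [hGdef, max_eq_left ht]
  have hG_int : IntegrableOn G (Ioi 0) :=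
    hint.congr_fun (fun s hs => (hG_eq s (le_of_lt hs)).symm) measurableSet_Ioi
  have hG_int' : ∀ a : ℝ, 0 ≤ a → IntegrableOn G (Ioi a) := fun a ha =>
    hG_int.mono_set (Ioi_subset_Ioi ha)
  have hG_intIoc : ∀ a b : ℝ, 0 ≤ a → IntegrableOn G (Ioc a b) := fun a b ha =>
    hG_int.mono_set (fun s hs => lt_of_le_of_lt ha hs.1)
  -- The increment function Δ.
  set Δ : ℝ → ℝ := fun s => G (s - 1) - G s with hΔdef
  have hΔ_nonneg : ∀ s, 0 ≤ Δ s := fun s => sub_nonneg.2 (hG_anti (by linarith))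
  have hΔ_meas : Measurable Δ := (hG_meas.comp (measurable_id.sub measurable_const)).sub hG_meas
  -- integrability of G(s-1) on Ioi a for a ≥ 1
  have hshift_Ioi : ∀ a : ℝ, 1 ≤ a → IntegrableOn (fun s => G (s - 1)) (Ioi a) := by
    intro a ha
    refine slow_shift_integrableOn (f := G) measurableSet_Ioi measurableSet_Ioi
      (fun s => ?_) (hG_int' (a - 1) (by linarith))
    simp [mem_Ioi, sub_lt_sub_iff_right]
  have hΔ_int : ∀ a : ℝ, 1 ≤ a → IntegrableOn Δ (Ioi a) := fun a ha =>
    (hshift_Ioi a ha).sub (hG_int' a (by linarith))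
  -- s * G s is integrable on Ioc a b for 0 ≤ a
  have hmul_int : ∀ a b : ℝ, 0 ≤ a → IntegrableOn (fun s => s * G s) (Ioc a b) := by
    intro a b ha
    refine Integrable.mono' ((hG_intIoc a b ha).const_mul |b|)
      ((measurable_id.mul hG_meas).aestronglyMeasurable) ?_
    rw [ae_restrict_iff' measurableSet_Ioc]
    refine ae_of_all _ (fun s hs => ?_)
    have h0s : 0 ≤ s := le_trans ha hs.1.le
    rw [Real.norm_eq_abs, abs_of_nonneg (mul_nonneg h0s (hG_pos s).le)]
    exact mul_le_mul_of_nonneg_right (le_trans hs.2 (le_abs_self b)) (hG_pos s).le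
  -- (u+1) * G u is integrable on Ioc 0 b
  have haddmul_int : ∀ b : ℝ, IntegrableOn (fun u => (u + 1) * G u) (Ioc 0 b) := by
    intro b
    have h : IntegrableOn (fun u => u * G u + G u) (Ioc 0 b) :=
      (hmul_int 0 b le_rfl).add (hG_intIoc 0 b le_rfl)
    refine h.congr_fun (fun u _ => ?_) measurableSet_Ioc
    ring
  -- s * G (s-1) is integrable on Ioc 1 b
  have hmulshift_int : ∀ b : ℝ, IntegrableOn (fun s => s * G (s - 1)) (Ioc 1 b) := by
    intro b
    have h1 : IntegrableOn (fun s => ((s - 1) + 1) * G (s - 1)) (Ioc 1 b) := by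
      refine slow_shift_integrableOn (f := fun u => (u + 1) * G u)
        measurableSet_Ioc measurableSet_Ioc (fun s => ?_) (haddmul_int (b - 1))
      simp [mem_Ioc, sub_lt_sub_iff_right, sub_le_sub_iff_right, sub_pos]
    refine h1.congr_fun (fun s _ => ?_) measurableSet_Ioc
    ring
  -- s * Δ s integrable on Ioc 1 b
  have hsΔ_Ioc : ∀ b : ℝ, IntegrableOn (fun s => s * Δ s) (Ioc 1 b) := by
    intro b
    have h : IntegrableOn (fun s => s * G (s - 1) - s * G s) (Ioc 1 b) :=
      (hmulshift_int b).sub (hmul_int 1 b zero_le_one)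
    refine h.congr_fun (fun s _ => ?_) measurableSet_Ioc
    simp only [hΔdef]; ring
  -- the crucial uniform bound for ∫ s in Ioc 1 R, s * Δ s
  set C : ℝ := (∫ u in Ioc (0:ℝ) 1, u * G u) + ∫ s in Ioi (0:ℝ), G s with hCdef
  have key_bound : ∀ R : ℝ, 2 ≤ R → (∫ s in Ioc 1 R, s * Δ s) ≤ C := by
    intro R hR
    have h1R : (1:ℝ) ≤ R - 1 := by linarith
    -- split the integral
    have hsplit : (∫ s in Ioc 1 R, s * Δ s)
        = (∫ s in Ioc 1 R, s * G (s - 1)) - ∫ s in Ioc 1 R, s * G s := by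
      rw [← integral_sub (hmulshift_int R) (hmul_int 1 R zero_le_one)]
      refine setIntegral_congr_fun measurableSet_Ioc (fun s _ => ?_)
      simp [hΔdef]; ring
    have hshiftA : (∫ s in Ioc 1 R, s * G (s - 1)) = ∫ u in Ioc 0 (R - 1), (u + 1) * G u := by
      have h2 : (∫ s in Ioc 1 R, s * G (s - 1))
          = ∫ s in Ioc 1 R, ((s - 1) + 1) * G (s - 1) := by
        refine setIntegral_congr_fun measurableSet_Ioc (fun s _ => ?_); ring_nf
      rw [h2]
      exact slow_shift_integral (f := fun u => (u + 1) * G u) measurableSet_Ioc measurableSet_Ioc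
        (fun s => by simp [mem_Ioc, sub_lt_sub_iff_right, sub_le_sub_iff_right, sub_pos])
    have hA : (∫ u in Ioc 0 (R - 1), (u + 1) * G u)
        = (∫ u in Ioc 0 (R - 1), u * G u) + ∫ u in Ioc 0 (R - 1), G u := by
      rw [← integral_add (hmul_int 0 (R-1) le_rfl) (hG_intIoc 0 (R-1) le_rfl)]
      refine setIntegral_congr_fun measurableSet_Ioc (fun u _ => ?_); ring
    -- split Ioc 0 (R-1) = Ioc 0 1 ∪ Ioc 1 (R-1)
    have hsplit1 : (∫ u in Ioc 0 (R - 1), u * G u)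
        = (∫ u in Ioc (0:ℝ) 1, u * G u) + ∫ u in Ioc 1 (R - 1), u * G u := by
      rw [← Ioc_union_Ioc_eq_Ioc (zero_le_one) h1R,
        setIntegral_union (Ioc_disjoint_Ioc_of_le le_rfl) measurableSet_Ioc
          (hmul_int 0 1 le_rfl) (hmul_int 1 (R-1) zero_le_one)]
    -- split Ioc 1 R = Ioc 1 (R-1) ∪ Ioc (R-1) R
    have hsplit2 : (∫ s in Ioc 1 R, s * G s)
        = (∫ s in Ioc 1 (R - 1), s * G s) + ∫ s in Ioc (R - 1) R, s * G s := by
      rw [← Ioc_union_Ioc_eq_Ioc h1R (by linarith : R - 1 ≤ R),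
        setIntegral_union (Ioc_disjoint_Ioc_of_le le_rfl) measurableSet_Ioc
          (hmul_int 1 (R-1) zero_le_one) (hmul_int (R-1) R (by linarith))]
    have hB2 : 0 ≤ ∫ s in Ioc (R - 1) R, s * G s := by
      refine setIntegral_nonneg measurableSet_Ioc (fun s hs => ?_)
      exact mul_nonneg (by linarith [hs.1]) (hG_pos s).le
    have hGR : (∫ u in Ioc 0 (R - 1), G u) ≤ ∫ s in Ioi (0:ℝ), G s := by
      refine setIntegral_mono_set hG_int (ae_of_all _ (fun s => (hG_pos s).le)) ?_
      exact HasSubset.Subset.eventuallyLE (fun s hs => hs.1)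
    rw [hsplit, hshiftA, hA, hsplit1, hsplit2, hCdef]
    linarith
  -- integrability of s * Δ s on Ioi 1
  have hsΔ_int : IntegrableOn (fun s => s * Δ s) (Ioi 1) := by
    refine integrableOn_Ioi_of_intervalIntegral_norm_bounded C 1
      (f := fun s => s * Δ s) (b := fun R : ℝ => R) (l := atTop) hsΔ_Ioc tendsto_id ?_
    filter_upwards [eventually_ge_atTop (2:ℝ)] with R hR
    have h1R : (1:ℝ) ≤ R := by linarith
    rw [intervalIntegral.integral_of_le h1R]
    have : (∫ s in Ioc 1 R, ‖s * Δ s‖) = ∫ s in Ioc 1 R, s * Δ s := by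
      refine setIntegral_congr_fun measurableSet_Ioc (fun s hs => ?_)
      rw [Real.norm_eq_abs, abs_of_nonneg (mul_nonneg (by linarith [hs.1]) (hΔ_nonneg s))]
    rw [this]
    exact key_bound R hR
  -- the initial datum
  set c : ℝ := 2 * Real.exp 2 with hcdef
  have hc_pos : 0 < c := by positivity
  refine ⟨fun s => Real.sqrt (c * (s * Δ s)), ?_, ?_⟩
  · -- Memℒp
    have hmeas : AEStronglyMeasurable (fun s => Real.sqrt (c * (s * Δ s)))
        (volume.restrict (Ioi 1)) := by
      exact (Real.continuous_sqrt.measurable.comp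
        ((measurable_const.mul (measurable_id.mul hΔ_meas)))).aestronglyMeasurable
    rw [memLp_two_iff_integrable_sq hmeas]
    refine (hsΔ_int.const_mul c).congr ?_
    rw [Filter.EventuallyEq, ae_restrict_iff' measurableSet_Ioi]
    refine ae_of_all _ (fun s hs => ?_)
    have hnn : (0:ℝ) ≤ c * (s * Δ s) :=
      mul_nonneg hc_pos.le (mul_nonneg (by linarith [mem_Ioi.1 hs]) (hΔ_nonneg s))
    exact (Real.sq_sqrt hnn).symm
  · -- the main estimate
    intro t ht
    have ht0 : (0:ℝ) ≤ t := by linarith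
    show g t ≤ (1/2) * ∫ s in Set.Ioi (1:ℝ),
      Real.exp (-2*t/s) * (Real.sqrt (c * (s * Δ s)))^2 / s
    -- rewrite the integrand
    have hstepA : (∫ s in Set.Ioi (1:ℝ), Real.exp (-2*t/s) * (Real.sqrt (c * (s * Δ s)))^2 / s)
        = ∫ s in Set.Ioi (1:ℝ), Real.exp (-2*t/s) * (c * Δ s) := by
      refine setIntegral_congr_fun measurableSet_Ioi (fun s hs => ?_)
      have hs1 : (1:ℝ) < s := hs
      have hsne : s ≠ 0 := by linarith
      have hnn : (0:ℝ) ≤ c * (s * Δ s) :=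
        mul_nonneg hc_pos.le (mul_nonneg (by linarith) (hΔ_nonneg s))
      rw [Real.sq_sqrt hnn]
      field_simp
    -- integrability of the new integrand
    have hInt : ∀ a : ℝ, 1 ≤ a →
        IntegrableOn (fun s => Real.exp (-2*t/s) * (c * Δ s)) (Ioi a) := by
      intro a ha
      refine Integrable.mono' ((hΔ_int a ha).const_mul c)
        (((Real.measurable_exp.comp
          ((measurable_const : Measurable fun _ : ℝ => (-2*t)).div measurable_id)).mul
          (measurable_const.mul hΔ_meas)).aestronglyMeasurable) ?_
      rw [ae_restrict_iff' measurableSet_Ioi]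
      refine ae_of_all _ (fun s hs => ?_)
      have hs0 : (0:ℝ) < s := lt_of_le_of_lt (by linarith) hs
      have hexp : Real.exp (-2*t/s) ≤ 1 := by
        rw [Real.exp_le_one_iff]
        apply div_nonpos_of_nonpos_of_nonneg (by linarith) hs0.le
      have hnn : 0 ≤ c * Δ s := mul_nonneg hc_pos.le (hΔ_nonneg s)
      rw [Real.norm_eq_abs, abs_of_nonneg (mul_nonneg (Real.exp_pos _).le hnn)]
      have := mul_le_mul_of_nonneg_right hexp hnn
      simpa using this
    -- kernel lower bound on Ioi t
    have hmono1 : (∫ s in Ioi t, 2 * Δ s) ≤ ∫ s in Ioi t, Real.exp (-2*t/s) * (c * Δ s) := by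
      refine setIntegral_mono_on ((hΔ_int t ht).const_mul 2) (hInt t ht)
        measurableSet_Ioi (fun s hs => ?_)
      have hts : t < s := hs
      have hs0 : (0:ℝ) < s := by linarith
      have h1 : (2:ℝ) ≤ Real.exp (-2*t/s) * c := by
        have heq : Real.exp (-2*t/s) * c = 2 * Real.exp (2 + (-2*t/s)) := by
          rw [hcdef, Real.exp_add]; ring
        rw [heq]
        have h2 : (0:ℝ) ≤ 2 + (-2*t/s) := by
          have hd : 2*t/s ≤ 2 := by
            rw [div_le_iff₀ hs0]; nlinarith
          have hneg : (-2)*t/s = -(2*t/s) := by ring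
          rw [hneg]; linarith
        nlinarith [Real.add_one_le_exp (2 + (-2*t/s))]
      calc 2 * Δ s ≤ (Real.exp (-2*t/s) * c) * Δ s :=
            mul_le_mul_of_nonneg_right h1 (hΔ_nonneg s)
        _ = Real.exp (-2*t/s) * (c * Δ s) := by ring
    -- enlarge the domain
    have hmono2 : (∫ s in Ioi t, Real.exp (-2*t/s) * (c * Δ s))
        ≤ ∫ s in Ioi (1:ℝ), Real.exp (-2*t/s) * (c * Δ s) := by
      refine setIntegral_mono_set (hInt 1 le_rfl) (ae_of_all _ (fun s => ?_))
        (HasSubset.Subset.eventuallyLE (Ioi_subset_Ioi ht))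
      exact mul_nonneg (Real.exp_pos _).le (mul_nonneg hc_pos.le (hΔ_nonneg s))
    -- the tail integral of Δ
    have hsub : (∫ s in Ioi t, Δ s) = (∫ s in Ioi t, G (s - 1)) - ∫ s in Ioi t, G s := by
      simp only [hΔdef]
      exact integral_sub (hshift_Ioi t ht) (hG_int' t (by linarith))
    have hsh : (∫ s in Ioi t, G (s - 1)) = ∫ s in Ioi (t - 1), G s :=
      slow_shift_integral (f := G) measurableSet_Ioi measurableSet_Ioi
        (fun s => by simp [mem_Ioi, sub_lt_sub_iff_right])
    have hdecomp : (∫ s in Ioi (t-1), G s)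
        = (∫ s in Ioc (t-1) t, G s) + ∫ s in Ioi t, G s := by
      rw [← Ioc_union_Ioi_eq_Ioi (by linarith : t - 1 ≤ t),
        setIntegral_union (Ioc_disjoint_Ioi le_rfl) measurableSet_Ioi
          (hG_intIoc (t-1) t (by linarith)) (hG_int' t (by linarith))]
    have htail : (∫ s in Ioi t, Δ s) = ∫ s in Ioc (t-1) t, G s := by
      rw [hsub, hsh, hdecomp]; ring
    -- g t is at most the tail integral
    have hlower : g t ≤ ∫ s in Ioc (t-1) t, G s := by
      have hconst : (∫ _ in Ioc (t-1) t, g t) = g t := by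
        have h1 : t - (t - 1) = 1 := by ring
        rw [setIntegral_const, measureReal_def, Real.volume_Ioc, h1, ENNReal.ofReal_one,
          ENNReal.toReal_one, one_smul]
      rw [← hconst]
      refine setIntegral_mono_on (integrableOn_const measure_Ioc_lt_top.ne)
        (hG_intIoc (t-1) t (by linarith)) measurableSet_Ioc (fun s hs => ?_)
      have hs0 : (0:ℝ) ≤ s := by linarith [hs.1]
      rw [hG_eq s hs0]
      exact hmono hs0 ht0 hs.2
    have final : g t ≤ ∫ s in Ioi t, Δ s := by rw [htail]; exact hlower
    have h2Δ : (∫ s in Ioi t, 2 * Δ s) = 2 * ∫ s in Ioi t, Δ s :=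
      integral_const_mul 2 _
    rw [hstepA]
    have hchain := le_trans hmono1 hmono2
    rw [h2Δ] at hchain
    linarith
end

section
/- Let g : [0,∞) → [0,∞) be a monotone decreasing convex C²-function with lim_{t→∞} g(t) = 0 and ∫₀^∞ √(−g'(t)) dt < ∞. Then there exist a convex continuously differentiable function φ : ℝ → [0,∞) with φ(x) = 0 if and only if x = 0, and a gradient flow x : [0,∞) → ℝ of φ (i.e. a differentiable curve with x'(t) = −φ'(x(t))) such that φ(x(t)) = g(t) for all t ≥ 0. -/
open Filter MeasureTheory Set

/-- Any monotone decreasing, convex, non-negative C² function `g` on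
`[0,∞)` with `g(t) → 0` and `∫₀^∞ √(−g'(t)) dt < ∞` arises as the energy decay curve
of the gradient flow of a convex C¹ function `φ : ℝ → [0,∞)` which vanishes exactly
at `0`, i.e. `φ(x(t)) = g(t)` along some gradient flow `x` of `φ`. -/
theorem convex_decay_realized_by_gradient_flow
    (g : ℝ → ℝ) (hg : ContDiff ℝ 2 g)
    (hnonneg : ∀ t ∈ Set.Ici (0:ℝ), 0 ≤ g t)
    (hmono : AntitoneOn g (Set.Ici 0))
    (hconv : ConvexOn ℝ (Set.Ici 0) g)
    (hlim : Filter.Tendsto g Filter.atTop (nhds 0))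
    (hint : MeasureTheory.IntegrableOn (fun t => Real.sqrt (-(deriv g t))) (Set.Ioi 0)) :
    ∃ φ : ℝ → ℝ, ConvexOn ℝ Set.univ φ ∧ ContDiff ℝ 1 φ ∧ (∀ y, 0 ≤ φ y) ∧
      (∀ y, φ y = 0 ↔ y = 0) ∧
      ∃ x : ℝ → ℝ,
        (∀ t ∈ Set.Ici (0:ℝ), HasDerivWithinAt x (-(deriv φ (x t))) (Set.Ici 0) t) ∧
        ∀ t ∈ Set.Ici (0:ℝ), φ (x t) = g t := by
  classical
  have hgd : Differentiable ℝ g := hg.differentiable (by norm_num)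
  have hg'cont : Continuous (deriv g) := hg.continuous_deriv (by norm_num)
  -- derivative nonpositive on [0,∞)
  have L0 : ∀ t, 0 ≤ t → deriv g t ≤ 0 := by
    intro t ht
    have h1 : deriv g t ≤ slope g t (t+1) :=
      hconv.deriv_le_slope ht (by simp at *; linarith) (by linarith) (hgd t)
    have h2 : g (t+1) ≤ g t := hmono ht (by simp at *; linarith) (by linarith)
    rw [slope_def_field] at h1
    have : (g (t+1) - g t) / (t + 1 - t) ≤ 0 := by
      apply div_nonpos_of_nonpos_of_nonneg <;> linarith
    exact h1.trans this
  -- derivative monotone on [0,∞)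
  have L0b : MonotoneOn (deriv g) (Set.Ici 0) :=
    hconv.monotoneOn_deriv (fun x _ => hgd x)
  rcases eq_or_lt_of_le (L0 0 le_rfl) with h0 | hu0
  · -- degenerate case : deriv g 0 = 0, so g ≡ 0 on [0,∞)
    have hder0 : ∀ t, 0 ≤ t → deriv g t = 0 := by
      intro t ht
      exact le_antisymm (L0 t ht) (h0 ▸ L0b (le_refl (0:ℝ)) ht ht)
    have hgconst : ∀ t, 0 ≤ t → g t = g 0 := by
      intro t ht
      have : ∫ s in (0:ℝ)..t, deriv g s = g t - g 0 :=
        intervalIntegral.integral_deriv_eq_sub (fun x _ => hgd x)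
          (hg'cont.intervalIntegrable 0 t)
      rw [intervalIntegral.integral_congr (g := fun _ => (0:ℝ))
        (fun s hs => by rw [uIcc_of_le ht] at hs; exact hder0 s hs.1)] at this
      simp at this; linarith
    have hg0 : g 0 = 0 := by
      have : Tendsto g atTop (nhds (g 0)) :=
        Tendsto.congr' (by filter_upwards [eventually_ge_atTop 0] with t ht; exact (hgconst t ht).symm)
          tendsto_const_nhds
      exact (tendsto_nhds_unique this hlim)
    refine ⟨fun y => y ^ 2, (even_two).convexOn_pow, by
      have : ContDiff ℝ 1 (id : ℝ → ℝ) := contDiff_id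
      exact this.pow 2, fun y => sq_nonneg y, fun y => pow_eq_zero_iff two_ne_zero, ?_⟩
    refine ⟨fun _ => 0, ?_, ?_⟩
    · intro t ht
      have : deriv (fun y : ℝ => y ^ 2) 0 = 0 := by
        simp [deriv_pow]
      rw [this, neg_zero]
      exact hasDerivWithinAt_const t _ 0
    · intro t ht
      simp [hgconst t ht, hg0]

  · -- main case : deriv g 0 < 0
    set u : ℝ → ℝ := fun t => Real.sqrt (-(deriv g (max t 0))) with hu_def
    have hucont : Continuous u :=
      Real.continuous_sqrt.comp (hg'cont.comp (continuous_id.max continuous_const)).neg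
    have hunonneg : ∀ t, 0 ≤ u t := fun t => Real.sqrt_nonneg _
    have husq : ∀ t, u t ^ 2 = -(deriv g (max t 0)) := fun t =>
      Real.sq_sqrt (by have := L0 (max t 0) (le_max_right _ _); linarith)
    have hu0u : 0 < u 0 := by
      simp only [hu_def, max_self]
      exact Real.sqrt_pos.mpr (by linarith)
    have huanti : Antitone u := by
      intro t1 t2 h
      apply Real.sqrt_le_sqrt
      have := L0b (le_max_right t1 0) (le_max_right t2 0) (max_le_max h le_rfl)
      linarith
    have huzero : ∀ t, u t = 0 → deriv g (max t 0) = 0 := by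
      intro t h
      have h2 := husq t
      rw [h] at h2
      simp at h2
      linarith
    have huint : IntegrableOn u (Set.Ioi 0) := by
      apply (integrableOn_congr_fun ?_ measurableSet_Ioi).mpr hint
      intro x hx
      simp [hu_def, max_eq_left (le_of_lt (Set.mem_Ioi.mp hx))]
    have huII : ∀ a b : ℝ, IntervalIntegrable u volume a b := fun a b =>
      hucont.intervalIntegrable a b
    set I : ℝ := ∫ s in Set.Ioi (0:ℝ), u s with hI_def
    set F : ℝ → ℝ := fun t => ∫ s in (0:ℝ)..t, u s with hF_def
    set X : ℝ → ℝ := fun t => I - F t with hX_def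
    have hFderiv : ∀ t, HasDerivAt F (u t) t := fun t =>
      intervalIntegral.integral_hasDerivAt_right (huII 0 t)
        (hucont.stronglyMeasurable.stronglyMeasurableAtFilter) hucont.continuousAt
    have hXderiv : ∀ t, HasDerivAt X (-(u t)) t := fun t => (hFderiv t).const_sub I
    have hXcont : Continuous X := by
      have : Differentiable ℝ X := fun t => (hXderiv t).differentiableAt
      exact this.continuous
    have hXanti : Antitone X :=
      antitone_of_deriv_nonpos (fun t => (hXderiv t).differentiableAt)
        (fun t => by rw [(hXderiv t).deriv]; simp [hunonneg t])
    have hXtend : Tendsto X atTop (nhds 0) := by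
      have h1 : Tendsto F atTop (nhds I) :=
        intervalIntegral_tendsto_integral_Ioi 0 huint tendsto_id
      have := h1.const_sub I
      simpa using this
    have hXnonneg : ∀ t, 0 ≤ X t := fun t =>
      le_of_tendsto hXtend (by filter_upwards [eventually_ge_atTop t] with s hs; exact hXanti hs)
    have hXF : ∀ t s : ℝ, X t - X s = ∫ x in t..s, u x := by
      intro t s
      have h := intervalIntegral.integral_add_adjacent_intervals (huII 0 t) (huII t s)
      simp only [hX_def, hF_def]
      linarith
    have hg'lim : Tendsto (deriv g) atTop (nhds 0) := by
      rw [Metric.tendsto_atTop]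
      intro ε hε
      refine ⟨max 0 (g 0 / ε) + 1, fun t ht => ?_⟩
      have ht0 : 0 ≤ t := by have := le_max_left (0:ℝ) (g 0 / ε); linarith
      have hlt : -ε < deriv g t := by
        by_contra hcon
        push_neg at hcon
        have hint0 : ∫ s in (0:ℝ)..t, deriv g s = g t - g 0 :=
          intervalIntegral.integral_deriv_eq_sub (fun x _ => hgd x)
            (hg'cont.intervalIntegrable 0 t)
        have hmon : ∫ s in (0:ℝ)..t, deriv g s ≤ ∫ s in (0:ℝ)..t, (-ε) := by
          apply intervalIntegral.integral_mono_on ht0 (hg'cont.intervalIntegrable 0 t)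
            intervalIntegrable_const
          intro x hx
          exact le_trans (L0b hx.1 ht0 hx.2) hcon
        rw [hint0, intervalIntegral.integral_const] at hmon
        simp only [smul_eq_mul, sub_zero] at hmon
        have hgt := hnonneg t ht0
        have h1 : t * ε ≤ g 0 := by nlinarith
        have h2 : t ≤ g 0 / ε := (le_div_iff₀ hε).mpr h1
        have h3 : g 0 / ε < t :=
          lt_of_lt_of_le (lt_of_le_of_lt (le_max_right 0 _) (lt_add_one _)) ht
        linarith
      have hle : deriv g t ≤ 0 := L0 t ht0
      rw [Real.dist_eq, abs_sub_lt_iff]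
      constructor <;> linarith
    have hulim : Tendsto u atTop (nhds 0) := by
      have h1 : Tendsto (fun t => Real.sqrt (-(deriv g t))) atTop (nhds 0) := by
        have hneg : Tendsto (fun t => -(deriv g t)) atTop (nhds 0) := by
          simpa using hg'lim.neg
        have h2 := (Real.continuous_sqrt.continuousAt (x := (0:ℝ))).tendsto.comp hneg
        simpa [Function.comp_def] using h2
      apply h1.congr'
      filter_upwards [eventually_ge_atTop (0:ℝ)] with t ht
      simp [hu_def, max_eq_left ht]
    have hgX : ∀ t, 0 ≤ t → g t ≤ u t * X t := by
      intro t ht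
      have key : ∀ s, t ≤ s → g t ≤ g s + u t * X t := by
        intro s hs
        have hfund : ∫ x in t..s, deriv g x = g s - g t :=
          intervalIntegral.integral_deriv_eq_sub (fun x _ => hgd x)
            (hg'cont.intervalIntegrable t s)
        have hcmp : ∫ x in t..s, (-(deriv g x)) ≤ ∫ x in t..s, u t * u x := by
          apply intervalIntegral.integral_mono_on hs (hg'cont.neg.intervalIntegrable t s)
            ((continuous_const.mul hucont).intervalIntegrable t s)
          intro x hx
          have hx0 : (0:ℝ) ≤ x := le_trans ht hx.1
          have h1 : u x ^ 2 = -(deriv g x) := by rw [husq x, max_eq_left hx0]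
          have h2 : u x ≤ u t := huanti hx.1
          show -(deriv g x) ≤ u t * u x
          nlinarith [hunonneg x]
        have hconstint : ∫ x in t..s, u t * u x = u t * (X t - X s) := by
          rw [intervalIntegral.integral_const_mul, ← hXF t s]
        rw [intervalIntegral.integral_neg, hfund] at hcmp
        rw [hconstint] at hcmp
        have hXs := hXnonneg s
        have hut := hunonneg t
        nlinarith [mul_nonneg hut hXs]
      have hlim2 : Tendsto (fun s => g s + u t * X t) atTop (nhds (0 + u t * X t)) :=
        hlim.add_const _
      have := ge_of_tendsto hlim2
        (by filter_upwards [eventually_ge_atTop t] with s hs; exact key s hs)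
      linarith
    have hXeqFTC : ∀ a b : ℝ, a ≤ b → (∀ s ∈ Set.Icc a b, u s = 0) → X b = X a := by
      intro a b hab hz
      have h1 := hXF a b
      rw [intervalIntegral.integral_congr (g := fun _ => (0:ℝ))
        (fun x hx => by rw [uIcc_of_le hab] at hx; exact hz x hx)] at h1
      simp at h1
      linarith
    have hconstu : ∀ a b : ℝ, a < b → X a = X b → ∀ s ∈ Set.Icc a b, u s = 0 := by
      intro a b hab heq
      have hmid : ∀ s ∈ Set.Ioo a b, u s = 0 := by
        intro s hs
        have hXconst : ∀ r, r ∈ Set.Icc a b → X r = X a := fun r hr =>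
          le_antisymm (hXanti hr.1) (heq ▸ hXanti hr.2)
        have hev : X =ᶠ[nhds s] (fun _ => X a) := by
          filter_upwards [Ioo_mem_nhds hs.1 hs.2] with r hr
          exact hXconst r (Ioo_subset_Icc_self hr)
        have h1 : deriv X s = 0 := by rw [hev.deriv_eq]; simp
        have h2 : deriv X s = -(u s) := (hXderiv s).deriv
        linarith [h1, h2]
      intro s hs
      rcases eq_or_lt_of_le hs.1 with h1 | h1
      · rw [← h1]
        have hten : Tendsto u (nhdsWithin a (Set.Ioi a)) (nhds (u a)) :=
          hucont.continuousAt.continuousWithinAt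
        have hten2 : Tendsto u (nhdsWithin a (Set.Ioi a)) (nhds 0) := by
          apply Tendsto.congr' ?_ tendsto_const_nhds
          filter_upwards [Ioo_mem_nhdsGT_of_mem (Set.left_mem_Ico.mpr hab)] with r hr
          exact (hmid r hr).symm
        exact tendsto_nhds_unique hten hten2
      rcases eq_or_lt_of_le hs.2 with h2 | h2
      · rw [h2]
        have hten : Tendsto u (nhdsWithin b (Set.Iio b)) (nhds (u b)) :=
          hucont.continuousAt.continuousWithinAt
        have hten2 : Tendsto u (nhdsWithin b (Set.Iio b)) (nhds 0) := by
          apply Tendsto.congr' ?_ tendsto_const_nhds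
          filter_upwards [Ioo_mem_nhdsLT_of_mem (Set.right_mem_Ioc.mpr hab)] with r hr
          exact (hmid r hr).symm
        exact tendsto_nhds_unique hten hten2
      · exact hmid s ⟨h1, h2⟩
    have hXzero : ∀ t, 0 ≤ t → X t = 0 → (∀ s, t ≤ s → u s = 0) ∧ g t = 0 := by
      intro t ht hXt
      have hXs0 : ∀ r, t ≤ r → X r = 0 := fun r hr =>
        le_antisymm (hXt ▸ hXanti hr) (hXnonneg r)
      have hz : ∀ s, t ≤ s → u s = 0 := by
        intro s hs
        have := hconstu t (s+1) (by linarith) (by rw [hXs0 t le_rfl, hXs0 (s+1) (by linarith)])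
        exact this s ⟨hs, by linarith⟩
      have hder : ∀ s, t ≤ s → deriv g s = 0 := by
        intro s hs
        have := huzero s (hz s hs)
        rwa [max_eq_left (le_trans ht hs)] at this
      have hgs : ∀ s, t ≤ s → g s = g t := by
        intro s hs
        have hfund : ∫ x in t..s, deriv g x = g s - g t :=
          intervalIntegral.integral_deriv_eq_sub (fun x _ => hgd x)
            (hg'cont.intervalIntegrable t s)
        rw [intervalIntegral.integral_congr (g := fun _ => (0:ℝ))
          (fun x hx => by rw [uIcc_of_le hs] at hx; exact hder x hx.1)] at hfund
        simp at hfund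
        linarith
      refine ⟨hz, ?_⟩
      have hgconst2 : ∀ᶠ s in atTop, g t = g s := by
        filter_upwards [eventually_ge_atTop t] with s hs
        exact (hgs s hs).symm
      have hten : Tendsto g atTop (nhds (g t)) := Tendsto.congr' hgconst2 tendsto_const_nhds
      exact tendsto_nhds_unique hten hlim
    have hb : 0 < X 0 := by
      rcases lt_or_eq_of_le (hXnonneg 0) with h | h
      · exact h
      · exfalso
        have := (hXzero 0 le_rfl h.symm).1 0 le_rfl
        rw [this] at hu0u
        exact lt_irrefl 0 hu0u
    have hXlin : ∀ t, t ≤ 0 → X t = X 0 - u 0 * t := by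
      intro t ht
      have h1 := hXF 0 t
      have h2 : ∫ x in (0:ℝ)..t, u x = ∫ x in (0:ℝ)..t, u 0 := by
        apply intervalIntegral.integral_congr
        intro x hx
        rw [uIcc_of_ge ht] at hx
        have : max x 0 = 0 := max_eq_right hx.2
        simp [hu_def, this]
      rw [h2, intervalIntegral.integral_const] at h1
      simp only [smul_eq_mul, sub_zero] at h1
      nlinarith [h1]
    -- the inverse function T
    set T : ℝ → ℝ := fun y => sInf {t | X t ≤ y} with hT_def
    have hsetne : ∀ y, 0 < y → {t | X t ≤ y}.Nonempty := by
      intro y hy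
      obtain ⟨t, htt⟩ := (hXtend.eventually_lt_const hy).exists
      exact ⟨t, le_of_lt htt⟩
    have hsetbdd : ∀ y : ℝ, BddBelow {t | X t ≤ y} := by
      intro y
      refine ⟨min 0 ((X 0 - y) / u 0), fun t htmem => ?_⟩
      rcases le_or_gt 0 t with h | h
      · exact le_trans (min_le_left _ _) h
      · have hXl := hXlin t h.le
        have h2 : X 0 - u 0 * t ≤ y := by rw [← hXl]; exact htmem
        have h3 : (X 0 - y) / u 0 ≤ t := by
          rw [div_le_iff₀ hu0u]
          nlinarith
        exact le_trans (min_le_right _ _) h3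
    have hTmem : ∀ y, 0 < y → X (T y) ≤ y := by
      intro y hy
      have hcl : IsClosed {t | X t ≤ y} := isClosed_le hXcont continuous_const
      exact hcl.csInf_mem (hsetne y hy) (hsetbdd y)
    have hTlb : ∀ y t, X t ≤ y → T y ≤ t := fun y t h => csInf_le (hsetbdd y) h
    have hXT : ∀ y, 0 < y → X (T y) = y := by
      intro y hy
      refine le_antisymm (hTmem y hy) ?_
      by_contra hcon
      push_neg at hcon
      have hev : ∀ᶠ r in nhds (T y), X r < y :=
        (hXcont.continuousAt (x := T y)).eventually_lt_const hcon
      obtain ⟨r, hr, hrmem⟩ :=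
        ((hev.filter_mono (nhdsWithin_le_nhds (s := Set.Iio (T y)))).and
          eventually_mem_nhdsWithin).exists
      have := hTlb y r hr.le
      exact absurd hrmem (by simp [Set.mem_Iio]; linarith)
    have htlt : ∀ y t, 0 < y → y < X t → t < T y := by
      intro y t hy h
      by_contra hc
      push_neg at hc
      have h2 := hXanti hc
      rw [hXT y hy] at h2
      linarith
    have hTanti : ∀ y z, 0 < y → y ≤ z → T z ≤ T y := by
      intro y z hy hyz
      apply le_csInf (hsetne y hy)
      intro t htmem
      exact hTlb z t (le_trans htmem hyz)
    have huT : ∀ y, 0 < y → 0 < u (T y) := by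
      intro y hy
      rcases lt_or_eq_of_le (hunonneg (T y)) with h | h
      · exact h
      exfalso
      have hz : ∀ s, T y ≤ s → u s = 0 := fun s hs =>
        le_antisymm (h ▸ huanti hs) (hunonneg s)
      have hten : Tendsto X atTop (nhds (X (T y))) := by
        apply Tendsto.congr' ?_ tendsto_const_nhds
        filter_upwards [eventually_ge_atTop (T y)] with s hs
        exact (hXeqFTC (T y) s hs (fun r hr => hz r hr.1)).symm
      have h0 := tendsto_nhds_unique hten hXtend
      rw [hXT y hy] at h0
      linarith
    have hTpos : ∀ y, 0 < y → y ≤ X 0 → 0 ≤ T y := by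
      intro y hy hyX
      by_contra hcon
      push_neg at hcon
      have hXl := hXlin (T y) hcon.le
      rw [hXT y hy] at hXl
      nlinarith [mul_pos_of_neg_of_neg (neg_neg_iff_pos.mpr hu0u) hcon]
    have hXstrict : ∀ a y, 0 < y → a < T y → y < X a := by
      intro a y hy ha
      have h2 := hXF a (T y)
      have h3 : ∫ x in a..(T y), u (T y) ≤ ∫ x in a..(T y), u x := by
        apply intervalIntegral.integral_mono_on ha.le intervalIntegrable_const (huII _ _)
        intro x hx
        exact huanti hx.2
      rw [intervalIntegral.integral_const] at h3
      have h4 : 0 < (T y - a) * u (T y) := mul_pos (by linarith) (huT y hy)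
      have h5 := hXT y hy
      simp only [smul_eq_mul] at h3
      nlinarith
    have hXright : ∀ y b, 0 < y → T y < b → X b < y := by
      intro y b hy hby
      rcases lt_or_eq_of_le (hXanti hby.le) with h | h
      · rwa [hXT y hy] at h
      exfalso
      have := hconstu (T y) b hby h.symm (T y) ⟨le_rfl, hby.le⟩
      exact absurd this (ne_of_gt (huT y hy))
    have hTcont : ∀ y, 0 < y → ContinuousAt T y := by
      intro y hy
      rw [ContinuousAt, tendsto_order]
      constructor
      · intro a ha
        obtain ⟨a', ha1, ha2⟩ := exists_between ha
        have hXa' : y < X a' := hXstrict a' y hy ha2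
        filter_upwards [eventually_lt_nhds hXa', eventually_gt_nhds hy] with z hz1 hz2
        exact lt_trans ha1 (htlt z a' hz2 hz1)
      · intro b hbb
        obtain ⟨b', hb1, hb2⟩ := exists_between hbb
        have hXb' : X b' < y := hXright y b' hy hb1
        filter_upwards [eventually_gt_nhds hXb'] with z hz1
        exact lt_of_le_of_lt (hTlb z b' hz1.le) hb2
    -- the function G
    set G : ℝ → ℝ := fun t => if 0 ≤ t then g t else g 0 + deriv g 0 * t with hG_def
    have hlinderiv : ∀ t : ℝ, HasDerivAt (fun r => g 0 + deriv g 0 * r) (deriv g 0) t := by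
      intro t
      simpa using ((hasDerivAt_id t).const_mul (deriv g 0)).const_add (g 0)
    have hGderiv : ∀ t, HasDerivAt G (deriv g (max t 0)) t := by
      intro t
      rcases lt_trichotomy t 0 with h | h | h
      · rw [max_eq_right h.le]
        apply (hlinderiv t).congr_of_eventuallyEq
        filter_upwards [Iio_mem_nhds h] with r hr
        simp [hG_def, not_le.mpr (show r < 0 from hr)]
      · subst h
        rw [max_self]
        have h1 : HasDerivWithinAt G (deriv g 0) (Set.Ici 0) 0 := by
          apply ((hgd 0).hasDerivAt.hasDerivWithinAt).congr
          · intro r hr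
            simp [hG_def, show (0:ℝ) ≤ r from hr]
          · simp [hG_def]
        have h2 : HasDerivWithinAt G (deriv g 0) (Set.Iic 0) 0 := by
          apply (hlinderiv 0).hasDerivWithinAt.congr
          · intro r hr
            rcases eq_or_lt_of_le (show r ≤ 0 from hr) with rfl | hrlt
            · simp [hG_def]
            · simp [hG_def, not_le.mpr hrlt]
          · simp [hG_def]
        have h3 := h2.union h1
        rwa [Set.Iic_union_Ici, hasDerivWithinAt_univ] at h3
      · rw [max_eq_left h.le]
        apply ((hgd t).hasDerivAt).congr_of_eventuallyEq
        filter_upwards [Ioi_mem_nhds h] with r hr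
        simp [hG_def, le_of_lt (show (0:ℝ) < r from hr)]
    have hGpos : ∀ t, t < 0 → 0 < G t := by
      intro t ht
      have hg0 := hnonneg 0 Set.self_mem_Ici
      have : 0 < deriv g 0 * t := mul_pos_of_neg_of_neg hu0 ht
      simp only [hG_def, not_le.mpr ht, if_false]
      linarith
    -- φ and its derivative D
    set φ : ℝ → ℝ := fun y => if y ≤ 0 then y ^ 2 else G (T y) with hφ_def
    set D : ℝ → ℝ := fun y => if y ≤ 0 then 2 * y else u (T y) with hD_def
    have hKEY : Tendsto (fun z => u (T z)) (nhdsWithin 0 (Set.Ioi 0)) (nhds 0) := by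
      rw [tendsto_order]
      constructor
      · intro a ha
        filter_upwards with z
        exact lt_of_lt_of_le ha (hunonneg _)
      · intro ε hε
        have hC : ∃ th, 0 ≤ th ∧ u th < ε ∧ 0 < X th := by
          by_cases hA : ∃ t, 0 ≤ t ∧ X t = 0
          · set A := {t : ℝ | 0 ≤ t ∧ X t = 0} with hA_def
            have hAne : A.Nonempty := hA
            have hAbdd : BddBelow A := ⟨0, fun t ht => ht.1⟩
            have hAcl : IsClosed A := by
              have : A = Set.Ici 0 ∩ X ⁻¹' {0} := by
                ext r; simp [hA_def, Set.mem_Ici]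
              rw [this]
              exact isClosed_Ici.inter (isClosed_singleton.preimage hXcont)
            have htsA : sInf A ∈ A := hAcl.csInf_mem hAne hAbdd
            have hts0 : 0 < sInf A := by
              rcases lt_or_eq_of_le htsA.1 with h | h
              · exact h
              · exfalso
                have hX00 : X 0 = 0 := by
                  have h6 := htsA.2
                  rwa [← h] at h6
                have := (hXzero 0 le_rfl hX00).1 0 le_rfl
                linarith [hu0u]
            have huts : u (sInf A) = 0 := (hXzero _ htsA.1 htsA.2).1 _ le_rfl
            have hev : ∀ᶠ r in nhds (sInf A), u r < ε := by
              have h5 := hucont.continuousAt (x := sInf A)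
              rw [ContinuousAt, huts] at h5
              exact h5.eventually_lt_const hε
            have hev2 : ∀ᶠ r in nhdsWithin (sInf A) (Set.Iio (sInf A)),
                u r < ε ∧ 0 < r ∧ r < sInf A := by
              filter_upwards [hev.filter_mono nhdsWithin_le_nhds,
                (eventually_gt_nhds hts0).filter_mono nhdsWithin_le_nhds,
                eventually_mem_nhdsWithin] with r h1 h2 h3
              exact ⟨h1, h2, h3⟩
            obtain ⟨r, hr1, hr2, hr3⟩ := hev2.exists
            refine ⟨r, hr2.le, hr1, ?_⟩
            rcases lt_or_eq_of_le (hXnonneg r) with h | h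
            · exact h
            · exfalso
              have hrA : r ∈ A := ⟨hr2.le, h.symm⟩
              have := csInf_le hAbdd hrA
              linarith
          · push_neg at hA
            obtain ⟨th, hth1, hth2⟩ :=
              ((hulim.eventually_lt_const hε).and (eventually_ge_atTop (0:ℝ))).exists
            exact ⟨th, hth2, hth1, lt_of_le_of_ne (hXnonneg th) (fun hcc => hA th hth2 hcc.symm)⟩
        obtain ⟨th, hth0, hthe, hthX⟩ := hC
        have hmemIoo : Set.Ioo (0:ℝ) (X th) ∈ nhdsWithin 0 (Set.Ioi 0) :=
          Ioo_mem_nhdsGT_of_mem ⟨le_rfl, hthX⟩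
        filter_upwards [hmemIoo] with z hz
        have hth' := htlt z th hz.1 hz.2
        exact lt_of_le_of_lt (huanti hth'.le) hthe
    have hTderiv : ∀ y, 0 < y → HasDerivAt T (-(u (T y)))⁻¹ y := by
      intro y hy
      apply HasDerivAt.of_local_left_inverse (hTcont y hy) (hXderiv (T y))
        (by simpa using ne_of_gt (huT y hy))
      filter_upwards [eventually_gt_nhds hy] with z hz
      exact hXT z hz
    have hright : ∀ y, 0 < y → HasDerivAt φ (u (T y)) y := by
      intro y hy
      have hcomp : HasDerivAt (fun z => G (T z)) (deriv g (max (T y) 0) * (-(u (T y)))⁻¹) y :=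
        (hGderiv (T y)).comp y (hTderiv y hy)
      have hval : deriv g (max (T y) 0) * (-(u (T y)))⁻¹ = u (T y) := by
        have h1 := husq (T y)
        have h2 : u (T y) ≠ 0 := (huT y hy).ne'
        have h3 : deriv g (max (T y) 0) = -(u (T y) ^ 2) := by linarith
        rw [h3]
        field_simp
      rw [hval] at hcomp
      apply hcomp.congr_of_eventuallyEq
      filter_upwards [eventually_gt_nhds hy] with z hz
      simp [hφ_def, not_le.mpr hz]
    clear hTderiv
    have hφd : ∀ y, HasDerivAt φ (D y) y := by
      intro y
      rcases lt_trichotomy y 0 with h | h | h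
      · have hpow : HasDerivAt (fun z : ℝ => z ^ 2) (2 * y) y := by
          simpa using hasDerivAt_pow 2 y
        have hDy : D y = 2 * y := by simp [hD_def, h.le]
        rw [hDy]
        apply hpow.congr_of_eventuallyEq
        filter_upwards [Iio_mem_nhds h] with z hz
        simp [hφ_def, (show z < 0 from hz).le]
      · subst h
        have hD0 : D 0 = 2 * 0 := by simp [hD_def]
        rw [hD0]
        norm_num
        rw [hasDerivAt_iff_tendsto_slope, ← nhdsLT_sup_nhdsGT, tendsto_sup]
        constructor
        · have heq : ∀ᶠ z in nhdsWithin 0 (Set.Iio 0), z = slope φ 0 z := by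
            filter_upwards [self_mem_nhdsWithin] with z hz
            have hz0 : z < 0 := hz
            have hφz : φ z = z ^ 2 := by simp [hφ_def, hz0.le]
            have hφ0 : φ 0 = 0 := by norm_num [hφ_def]
            rw [slope_def_field, hφz, hφ0, sub_zero, sub_zero, pow_two,
              mul_div_assoc, div_self hz0.ne, mul_one]
          exact Tendsto.congr' heq
            ((continuous_id.tendsto (0:ℝ)).mono_left nhdsWithin_le_nhds)
        · apply squeeze_zero' ?_ ?_ hKEY
          · filter_upwards [Ioo_mem_nhdsGT_of_mem (⟨le_rfl, hb⟩ : (0:ℝ) ∈ Set.Ico 0 (X 0))]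
              with z hz
            have hTz := hTpos z hz.1 hz.2.le
            have hφz : φ z = g (T z) := by simp [hφ_def, hG_def, not_le.mpr hz.1, hTz]
            have hφ0 : φ 0 = 0 := by norm_num [hφ_def]
            rw [slope_def_field, hφz, hφ0, sub_zero, sub_zero]
            exact div_nonneg (hnonneg _ hTz) hz.1.le
          · filter_upwards [Ioo_mem_nhdsGT_of_mem (⟨le_rfl, hb⟩ : (0:ℝ) ∈ Set.Ico 0 (X 0))]
              with z hz
            have hTz := hTpos z hz.1 hz.2.le
            have h1 : g (T z) ≤ u (T z) * z := by
              have h2 := hgX (T z) hTz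
              rwa [hXT z hz.1] at h2
            have hφz : φ z = g (T z) := by simp [hφ_def, hG_def, not_le.mpr hz.1, hTz]
            have hφ0 : φ 0 = 0 := by norm_num [hφ_def]
            rw [slope_def_field, hφz, hφ0, sub_zero, sub_zero, div_le_iff₀ hz.1]
            linarith [h1]
      · have hDy : D y = u (T y) := by simp [hD_def, not_le.mpr h]
        rw [hDy]
        exact hright y h
    have hφdiff : Differentiable ℝ φ := fun y => (hφd y).differentiableAt
    have hderiv_eq : deriv φ = D := funext fun y => (hφd y).deriv
    have hDcont : Continuous D := by
      rw [continuous_iff_continuousAt]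
      intro y
      rcases lt_trichotomy y 0 with h | h | h
      · have heq : D =ᶠ[nhds y] (fun z => 2 * z) := by
          filter_upwards [Iio_mem_nhds h] with z hz
          simp [hD_def, (show z < 0 from hz).le]
        rw [continuousAt_congr heq]
        exact (continuous_const.mul continuous_id).continuousAt
      · subst h
        have hD0 : D 0 = 0 := by simp [hD_def]
        rw [ContinuousAt, hD0]
        have hleft : Tendsto D (nhdsWithin 0 (Set.Iio 0)) (nhds 0) := by
          have h2 : Tendsto (fun z : ℝ => 2 * z) (nhdsWithin 0 (Set.Iio 0)) (nhds 0) := by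
            have hc : Continuous (fun z : ℝ => 2 * z) := continuous_const.mul continuous_id
            have h3 := (hc.tendsto (0:ℝ)).mono_left (nhdsWithin_le_nhds (s := Set.Iio (0:ℝ)))
            simpa using h3
          apply h2.congr'
          filter_upwards [self_mem_nhdsWithin] with z hz
          simp [hD_def, (show z < 0 from hz).le]
        have hrightD : Tendsto D (nhdsWithin 0 (Set.Ioi 0)) (nhds 0) := by
          apply hKEY.congr'
          filter_upwards [self_mem_nhdsWithin] with z hz
          simp [hD_def, not_le.mpr (show (0:ℝ) < z from hz)]
        have hpure : Tendsto D (pure 0) (nhds 0) := by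
          have h4 := tendsto_pure_nhds D 0
          rwa [hD0] at h4
        have hcomb : Tendsto D
            (nhdsWithin 0 (Set.Iio 0) ⊔ nhdsWithin 0 (Set.Ioi 0) ⊔ pure 0) (nhds 0) :=
          tendsto_sup.mpr ⟨tendsto_sup.mpr ⟨hleft, hrightD⟩, hpure⟩
        rwa [nhdsLT_sup_nhdsGT, nhdsNE_sup_pure] at hcomb
      · have heq : D =ᶠ[nhds y] (fun z => u (T z)) := by
          filter_upwards [Ioi_mem_nhds h] with z hz
          simp [hD_def, not_le.mpr (Set.mem_Ioi.mp hz)]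
        rw [continuousAt_congr heq]
        exact (hucont.continuousAt).comp (hTcont y h)
    have hDmono : Monotone D := by
      intro y z hyz
      rcases le_or_gt y 0 with hy | hy
      · rcases le_or_gt z 0 with hz | hz
        · simp only [hD_def, hy, hz, if_true]
          linarith
        · simp only [hD_def, hy, if_true, not_le.mpr hz, if_false]
          calc 2 * y ≤ 0 := by linarith
            _ ≤ u (T z) := hunonneg _
      · have hz : 0 < z := lt_of_lt_of_le hy hyz
        simp only [hD_def, not_le.mpr hy, not_le.mpr hz, if_false]
        exact huanti (hTanti y z hy hyz)
    refine ⟨φ, ?_, ?_, ?_, ?_, X, ?_, ?_⟩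
    · exact Monotone.convexOn_univ_of_deriv hφdiff (by rw [hderiv_eq]; exact hDmono)
    · exact contDiff_one_iff_deriv.mpr ⟨hφdiff, by rw [hderiv_eq]; exact hDcont⟩
    · intro y
      rcases le_or_gt y 0 with h | h
      · simp only [hφ_def, h, if_true]
        positivity
      · simp only [hφ_def, not_le.mpr h, if_false]
        rcases le_or_gt 0 (T y) with h2 | h2
        · simp only [hG_def, h2, if_true]
          exact hnonneg _ h2
        · exact (hGpos _ h2).le
    · intro y
      constructor
      · intro hzero
        by_contra hne
        rcases lt_or_gt_of_ne hne with h | h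
        · have : φ y = y ^ 2 := by simp [hφ_def, h.le]
          rw [this] at hzero
          exact hne (pow_eq_zero_iff two_ne_zero |>.mp hzero)
        · have hyφ : φ y = G (T y) := by simp [hφ_def, not_le.mpr h]
          rcases le_or_gt 0 (T y) with h2 | h2
          · rw [hyφ] at hzero
            have hg0' : g (T y) = 0 := by
              simpa [hG_def, h2] using hzero
            have hgz : ∀ s, T y ≤ s → g s = 0 := fun s hs =>
              le_antisymm (hg0' ▸ hmono h2 (le_trans h2 hs) hs) (hnonneg s (le_trans h2 hs))
            have hder : ∀ s, T y < s → deriv g s = 0 := by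
              intro s hs
              have hev : g =ᶠ[nhds s] (fun _ => 0) := by
                filter_upwards [Ioi_mem_nhds hs] with r hr
                exact hgz r (le_of_lt hr)
              rw [hev.deriv_eq]
              simp
            have huz : ∀ s, T y < s → u s = 0 := by
              intro s hs
              have h0s : (0:ℝ) ≤ s := le_trans h2 hs.le
              simp [hu_def, max_eq_left h0s, hder s hs]
            have hten : Tendsto u (nhdsWithin (T y) (Set.Ioi (T y))) (nhds (u (T y))) :=
              hucont.continuousAt.continuousWithinAt
            have hten2 : Tendsto u (nhdsWithin (T y) (Set.Ioi (T y))) (nhds 0) := by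
              apply Tendsto.congr' ?_ tendsto_const_nhds
              filter_upwards [self_mem_nhdsWithin] with r hr
              exact (huz r hr).symm
            have := tendsto_nhds_unique hten hten2
            exact absurd this (ne_of_gt (huT y h))
          · have := hGpos (T y) h2
            rw [hyφ] at hzero
            linarith
      · rintro rfl
        simp [hφ_def]
    · intro t ht
      have hkey : deriv φ (X t) = u t := by
        rw [hderiv_eq]
        rcases lt_or_eq_of_le (hXnonneg t) with hpos | heq0
        · have hT1 : T (X t) ≤ t := hTlb _ t le_rfl
          have hXa : X (T (X t)) = X t := hXT _ hpos
          have hDval : D (X t) = u (T (X t)) := by simp [hD_def, not_le.mpr hpos]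
          rw [hDval]
          rcases eq_or_lt_of_le hT1 with he | hlt
          · rw [he]
          · have h1 := hconstu (T (X t)) t hlt hXa (T (X t)) ⟨le_rfl, hlt.le⟩
            have h2 := hconstu (T (X t)) t hlt hXa t ⟨hlt.le, le_rfl⟩
            rw [h1, h2]
        · have hu_t : u t = 0 := (hXzero t ht heq0.symm).1 t le_rfl
          rw [← heq0, hu_t]
          simp [hD_def]
      rw [hkey]
      exact (hXderiv t).hasDerivWithinAt
    · intro t ht
      rcases lt_or_eq_of_le (hXnonneg t) with hpos | heq0
      · have hT1 : T (X t) ≤ t := hTlb _ t le_rfl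
        have hXa : X (T (X t)) = X t := hXT _ hpos
        have hT0 : 0 ≤ T (X t) := by
          by_contra hcc
          push_neg at hcc
          have hXl := hXlin (T (X t)) hcc.le
          rw [hXa] at hXl
          have hX0t : X t ≤ X 0 := hXanti ht
          nlinarith [mul_pos_of_neg_of_neg (neg_neg_iff_pos.mpr hu0u) hcc]
        have hφval : φ (X t) = g (T (X t)) := by
          simp [hφ_def, not_le.mpr hpos, hG_def, hT0]
        rw [hφval]
        rcases eq_or_lt_of_le hT1 with he | hlt
        · rw [he]
        · have hz : ∀ s ∈ Set.Icc (T (X t)) t, u s = 0 := hconstu _ t hlt hXa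
          have hder : ∀ s ∈ Set.Icc (T (X t)) t, deriv g s = 0 := by
            intro s hs
            have := huzero s (hz s hs)
            rwa [max_eq_left (le_trans hT0 hs.1)] at this
          have hfund : ∫ x in (T (X t))..t, deriv g x = g t - g (T (X t)) :=
            intervalIntegral.integral_deriv_eq_sub (fun x _ => hgd x)
              (hg'cont.intervalIntegrable _ _)
          rw [intervalIntegral.integral_congr (g := fun _ => (0:ℝ))
            (fun x hx => by rw [uIcc_of_le hlt.le] at hx; exact hder x hx)] at hfund
          simp at hfund
          linarith
      · have hgt0 : g t = 0 := (hXzero t ht heq0.symm).2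
        rw [← heq0, hgt0]
        simp [hφ_def]
end

section
/- Let g : (0,∞) → [0,∞) be a convex, differentiable, monotone decreasing function with lim_{t→∞} g(t) = 0. Then for every t > 0, g(t) ≤ (∫₀^∞ √(−g'(s)) ds)² / (4t). -/
open Filter MeasureTheory Set

/-- For a convex, differentiable, monotone decreasing function
`g : (0,∞) → [0,∞)` with `g(t) → 0` at infinity, one has
`g(t) ≤ (∫₀^∞ √(−g'(s)) ds)² / (4t)` for every `t > 0` (stated multiplied out in
`[0,∞]`, so that it is trivially true when the integral is infinite). -/
theorem convex_decay_length_bound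
    (g : ℝ → ℝ)
    (hconv : ConvexOn ℝ (Set.Ioi 0) g)
    (hdiff : DifferentiableOn ℝ g (Set.Ioi 0))
    (hnonneg : ∀ t ∈ Set.Ioi (0:ℝ), 0 ≤ g t)
    (hmono : AntitoneOn g (Set.Ioi 0))
    (hlim : Filter.Tendsto g Filter.atTop (nhds 0)) :
    ∀ t ∈ Set.Ioi (0:ℝ),
      ENNReal.ofReal (4 * t * g t) ≤
        (∫⁻ s in Set.Ioi (0:ℝ), ENNReal.ofReal (Real.sqrt (-(deriv g s)))) ^ 2 := by
  intro t ht
  have ht0 : (0:ℝ) < t := ht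
  have hdAt : ∀ s ∈ Set.Ioi (0:ℝ), DifferentiableAt ℝ g s := fun s hs =>
    hdiff.differentiableAt (isOpen_Ioi.mem_nhds hs)
  have hdmono : MonotoneOn (deriv g) (Set.Ioi 0) := hconv.monotoneOn_deriv hdAt
  -- deriv nonpositive
  have hdnonpos : ∀ s ∈ Set.Ioi (0:ℝ), deriv g s ≤ 0 := by
    intro s hs
    have hs0 : (0:ℝ) < s := hs
    have hs1 : s + 1 ∈ Set.Ioi (0:ℝ) := by simp only [Set.mem_Ioi]; linarith
    have h1 : deriv g s ≤ slope g s (s + 1) :=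
      hconv.deriv_le_slope hs hs1 (by linarith) (hdAt s hs)
    have h2 : g (s + 1) ≤ g s := hmono hs hs1 (by linarith)
    rw [slope_def_field] at h1
    have : (g (s+1) - g s) / (s + 1 - s) ≤ 0 := by
      apply div_nonpos_of_nonpos_of_nonneg <;> linarith
    linarith
  set a : ℝ := Real.sqrt (-(deriv g t)) with ha_def
  have ha0 : 0 ≤ a := Real.sqrt_nonneg _
  have hmeas : Measurable fun s => ENNReal.ofReal (Real.sqrt (-(deriv g s))) :=
    ((measurable_deriv g).neg.sqrt).ennreal_ofReal
  -- FTC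
  have hFTC : ∀ T, t ≤ T → ∫ s in Set.Ioc t T, -deriv g s = g t - g T := by
    intro T hT
    have hsub : Set.uIcc t T ⊆ Set.Ioi 0 := by
      rw [Set.uIcc_of_le hT]
      intro x hx
      exact lt_of_lt_of_le ht0 hx.1
    have hint : IntervalIntegrable (deriv g) volume t T :=
      (hdmono.mono hsub).intervalIntegrable
    have hft := intervalIntegral.integral_deriv_eq_sub
      (fun x hx => hdAt x (hsub hx)) hint
    rw [intervalIntegral.integral_of_le hT] at hft
    rw [MeasureTheory.integral_neg, hft]
    ring
  -- bound on (t, ∞): ofReal (g t) ≤ ofReal a * ∫ sqrt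
  have hy : ENNReal.ofReal (g t) ≤
      ENNReal.ofReal a * ∫⁻ s in Set.Ioi t, ENNReal.ofReal (Real.sqrt (-(deriv g s))) := by
    have hstep : ∀ T, t ≤ T → ENNReal.ofReal (g t - g T) ≤
        ∫⁻ s in Set.Ioi t, ENNReal.ofReal (-(deriv g s)) := by
      intro T hT
      have hsub : Set.uIcc t T ⊆ Set.Ioi 0 := by
        rw [Set.uIcc_of_le hT]; intro x hx; exact lt_of_lt_of_le ht0 hx.1
      have hint : IntervalIntegrable (deriv g) volume t T :=
        (hdmono.mono hsub).intervalIntegrable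
      have hinteg : IntegrableOn (fun s => -deriv g s) (Set.Ioc t T) volume := hint.neg.1
      have hnn : 0 ≤ᵐ[volume.restrict (Set.Ioc t T)] fun s => -deriv g s := by
        refine (ae_restrict_iff' measurableSet_Ioc).2 (Filter.Eventually.of_forall ?_)
        intro s hs
        simp only [Pi.zero_apply, neg_nonneg]
        exact hdnonpos s (lt_trans ht0 hs.1)
      calc ENNReal.ofReal (g t - g T)
          = ENNReal.ofReal (∫ s in Set.Ioc t T, -deriv g s) := by rw [hFTC T hT]
        _ = ∫⁻ s in Set.Ioc t T, ENNReal.ofReal (-(deriv g s)) :=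
            ofReal_integral_eq_lintegral_ofReal hinteg hnn
        _ ≤ ∫⁻ s in Set.Ioi t, ENNReal.ofReal (-(deriv g s)) :=
            lintegral_mono_set Set.Ioc_subset_Ioi_self
    have hlim' : Filter.Tendsto (fun T => ENNReal.ofReal (g t - g T)) Filter.atTop
        (nhds (ENNReal.ofReal (g t))) := by
      have : Filter.Tendsto (fun T => g t - g T) Filter.atTop (nhds (g t - 0)) :=
        tendsto_const_nhds.sub hlim
      rw [sub_zero] at this
      exact (ENNReal.continuous_ofReal.tendsto _).comp this
    have h1 : ENNReal.ofReal (g t) ≤ ∫⁻ s in Set.Ioi t, ENNReal.ofReal (-(deriv g s)) :=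
      le_of_tendsto hlim' (Filter.eventually_atTop.2 ⟨t, hstep⟩)
    refine h1.trans ?_
    rw [← lintegral_const_mul' _ _ ENNReal.ofReal_ne_top]
    refine setLIntegral_mono (hmeas.const_mul _) ?_
    intro s hs
    have hst : t ≤ s := le_of_lt hs
    have hs0 : s ∈ Set.Ioi (0:ℝ) := lt_trans ht0 hs
    have hmle : deriv g t ≤ deriv g s := hdmono (Set.mem_Ioi.2 ht0) hs0 hst
    have hu0 : 0 ≤ -(deriv g s) := neg_nonneg.2 (hdnonpos s hs0)
    have hsq : Real.sqrt (-(deriv g s)) ≤ a := by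
      apply Real.sqrt_le_sqrt; linarith
    have key : -(deriv g s) ≤ a * Real.sqrt (-(deriv g s)) := by
      nlinarith [Real.mul_self_sqrt hu0,
        mul_le_mul_of_nonneg_right hsq (Real.sqrt_nonneg (-(deriv g s)))]
    calc ENNReal.ofReal (-(deriv g s)) ≤ ENNReal.ofReal (a * Real.sqrt (-(deriv g s))) :=
          ENNReal.ofReal_le_ofReal key
      _ = ENNReal.ofReal a * ENNReal.ofReal (Real.sqrt (-(deriv g s))) :=
          ENNReal.ofReal_mul ha0
  -- bound on (0, t]
  have hx : ENNReal.ofReal (t * a) ≤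
      ∫⁻ s in Set.Ioc 0 t, ENNReal.ofReal (Real.sqrt (-(deriv g s))) := by
    have : ∀ s ∈ Set.Ioc (0:ℝ) t, ENNReal.ofReal a ≤
        ENNReal.ofReal (Real.sqrt (-(deriv g s))) := by
      intro s hs
      have hs0 : s ∈ Set.Ioi (0:ℝ) := hs.1
      have hmle : deriv g s ≤ deriv g t := hdmono hs0 (Set.mem_Ioi.2 ht0) hs.2
      exact ENNReal.ofReal_le_ofReal (Real.sqrt_le_sqrt (by linarith))
    calc ENNReal.ofReal (t * a)
        = ENNReal.ofReal a * volume (Set.Ioc (0:ℝ) t) := by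
          rw [Real.volume_Ioc, sub_zero, ← ENNReal.ofReal_mul ha0, mul_comm]
      _ = ∫⁻ _ in Set.Ioc (0:ℝ) t, ENNReal.ofReal a := (setLIntegral_const _ _).symm
      _ ≤ ∫⁻ s in Set.Ioc 0 t, ENNReal.ofReal (Real.sqrt (-(deriv g s))) :=
          setLIntegral_mono hmeas this
  -- split the integral
  set I := ∫⁻ s in Set.Ioi (0:ℝ), ENNReal.ofReal (Real.sqrt (-(deriv g s))) with hI_def
  have hsplit : I = (∫⁻ s in Set.Ioc 0 t, ENNReal.ofReal (Real.sqrt (-(deriv g s)))) +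
      ∫⁻ s in Set.Ioi t, ENNReal.ofReal (Real.sqrt (-(deriv g s))) := by
    rw [hI_def, ← Set.Ioc_union_Ioi_eq_Ioi (le_of_lt ht0),
      lintegral_union measurableSet_Ioi Set.Ioc_disjoint_Ioi_same]
  set x := ∫⁻ s in Set.Ioc (0:ℝ) t, ENNReal.ofReal (Real.sqrt (-(deriv g s)))
  set y := ∫⁻ s in Set.Ioi t, ENNReal.ofReal (Real.sqrt (-(deriv g s)))
  -- case a = 0
  rcases eq_or_lt_of_le ha0 with ha0' | hapos
  · have : ENNReal.ofReal (g t) ≤ 0 := by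
      have := hy
      rw [← ha0', ENNReal.ofReal_zero, zero_mul] at this
      exact this
    have hgt : g t ≤ 0 := by
      by_contra h
      push_neg at h
      rw [le_zero_iff, ENNReal.ofReal_eq_zero] at this
      linarith
    have : 4 * t * g t ≤ 0 := by nlinarith
    calc ENNReal.ofReal (4 * t * g t) = 0 := by
          rw [ENNReal.ofReal_eq_zero]; exact this
      _ ≤ I ^ 2 := zero_le
  -- main case a > 0
  rcases eq_or_ne I ⊤ with hItop | hIfin
  · rw [hItop]
    simp [ENNReal.top_pow]
  have hxfin : x ≠ ⊤ := by
    intro h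
    rw [hsplit, h, top_add] at hIfin
    exact hIfin rfl
  have hyfin : y ≠ ⊤ := by
    intro h
    rw [hsplit, h, add_top] at hIfin
    exact hIfin rfl
  set X := x.toReal with hX_def
  set Y := y.toReal with hY_def
  have hX0 : 0 ≤ X := ENNReal.toReal_nonneg
  have hY0 : 0 ≤ Y := ENNReal.toReal_nonneg
  have h1 : t * a ≤ X := by
    rw [← ENNReal.ofReal_le_iff_le_toReal hxfin]
    exact hx
  have h2 : g t ≤ a * Y := by
    have : ENNReal.ofReal (g t) ≤ ENNReal.ofReal (a * Y) := by
      rw [ENNReal.ofReal_mul ha0, hY_def, ENNReal.ofReal_toReal hyfin]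
      exact hy
    rw [ENNReal.ofReal_le_ofReal_iff (by positivity)] at this
    exact this
  have hgt0 : 0 ≤ g t := hnonneg t ht
  have hreal : 4 * t * g t ≤ (X + Y) ^ 2 := by
    have e1 : t * g t ≤ t * (a * Y) := mul_le_mul_of_nonneg_left h2 ht0.le
    have e2 : t * a * Y ≤ X * Y := mul_le_mul_of_nonneg_right h1 hY0
    nlinarith [sq_nonneg (X - Y)]
  calc ENNReal.ofReal (4 * t * g t) ≤ ENNReal.ofReal ((X + Y) ^ 2) :=
        ENNReal.ofReal_le_ofReal hreal
    _ = ENNReal.ofReal (X + Y) ^ 2 := (ENNReal.ofReal_pow (by positivity) 2)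
    _ = (x + y) ^ 2 := by
        rw [ENNReal.ofReal_add hX0 hY0, hX_def, hY_def,
          ENNReal.ofReal_toReal hxfin, ENNReal.ofReal_toReal hyfin]
    _ = I ^ 2 := by rw [hsplit]
end

section
/- Let g : (0,∞) → [0,∞) be a convex, differentiable, monotone decreasing function with lim_{t→∞} g(t) = 0 and ∫₀^∞ √(−g'(s)) ds < ∞. Then for every t > 0, g(t) ≤ √(−g'(t)) · ∫₀^∞ √(−g'(s)) ds; in particular, ∫₀^∞ g(t) dt < ∞. -/
open Filter MeasureTheory Set

/-- For a convex, differentiable, monotone decreasing function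
`g : (0,∞) → [0,∞)` with `g(t) → 0` at infinity and `∫₀^∞ √(−g'(s)) ds < ∞`, one has
`g(t) ≤ √(−g'(t)) · ∫₀^∞ √(−g'(s)) ds` for every `t > 0`; in particular `g` is
integrable on `(0,∞)`. -/
theorem convex_decay_integrable_of_sqrt_deriv_integrable
    (g : ℝ → ℝ)
    (hconv : ConvexOn ℝ (Set.Ioi 0) g)
    (hdiff : DifferentiableOn ℝ g (Set.Ioi 0))
    (hnonneg : ∀ t ∈ Set.Ioi (0:ℝ), 0 ≤ g t)
    (hmono : AntitoneOn g (Set.Ioi 0))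
    (hlim : Filter.Tendsto g Filter.atTop (nhds 0))
    (hint : MeasureTheory.IntegrableOn (fun s => Real.sqrt (-(deriv g s))) (Set.Ioi 0)) :
    (∀ t ∈ Set.Ioi (0:ℝ),
      g t ≤ Real.sqrt (-(deriv g t)) * ∫ s in Set.Ioi (0:ℝ), Real.sqrt (-(deriv g s))) ∧
    MeasureTheory.IntegrableOn g (Set.Ioi 0) := by
  set φ : ℝ → ℝ := fun s => Real.sqrt (-(deriv g s)) with hφ
  -- differentiability at points
  have hd : ∀ x ∈ Set.Ioi (0:ℝ), DifferentiableAt ℝ g x := fun x hx =>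
    (hdiff x hx).differentiableAt (isOpen_Ioi.mem_nhds hx)
  -- derivative nonpositive
  have hnp : ∀ t ∈ Set.Ioi (0:ℝ), deriv g t ≤ 0 := by
    intro t ht
    have ht1 : t + 1 ∈ Set.Ioi (0:ℝ) := by simp only [Set.mem_Ioi] at ht ⊢; linarith
    have h := hconv.deriv_le_slope ht ht1 (lt_add_one t) (hd t ht)
    have hs : slope g t (t + 1) ≤ 0 := by
      rw [slope_def_field]
      have := hmono ht ht1 (by linarith)
      apply div_nonpos_of_nonpos_of_nonneg <;> linarith
    linarith
  -- derivative monotone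
  have hmd : MonotoneOn (deriv g) (Set.Ioi 0) := hconv.monotoneOn_deriv hd
  -- φ nonneg
  have hφ0 : ∀ s, 0 ≤ φ s := fun s => Real.sqrt_nonneg _
  have hC : 0 ≤ ∫ s in Set.Ioi (0:ℝ), φ s :=
    setIntegral_nonneg measurableSet_Ioi fun s _ => hφ0 s
  -- key estimate
  have key : ∀ t ∈ Set.Ioi (0:ℝ), g t ≤ φ t * ∫ s in Set.Ioi (0:ℝ), φ s := by
    intro t ht
    have hsub : Set.Ioi t ⊆ Set.Ioi (0:ℝ) := Set.Ioi_subset_Ioi (le_of_lt ht)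
    -- pointwise bound on (t,∞)
    have hpt : ∀ s ∈ Set.Ioi t, -(deriv g s) ≤ φ t * φ s := by
      intro s hs
      have hs0 : s ∈ Set.Ioi (0:ℝ) := hsub hs
      have h1 : deriv g t ≤ deriv g s := hmd ht hs0 (le_of_lt hs)
      have h2 : 0 ≤ -(deriv g s) := by linarith [hnp s hs0]
      have h3 : -(deriv g s) = φ s * φ s := (Real.mul_self_sqrt h2).symm
      have h4 : φ s ≤ φ t := Real.sqrt_le_sqrt (by linarith)
      calc -(deriv g s) = φ s * φ s := h3
        _ ≤ φ t * φ s := mul_le_mul_of_nonneg_right h4 (hφ0 s)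
    -- integrability of deriv g on Ioi t
    have hintt : IntegrableOn φ (Set.Ioi t) := hint.mono_set hsub
    have hbdd : IntegrableOn (fun s => φ t * φ s) (Set.Ioi t) := hintt.const_mul _
    have hderint : IntegrableOn (deriv g) (Set.Ioi t) := by
      refine hbdd.mono' ((measurable_deriv g).aestronglyMeasurable.restrict) ?_
      rw [ae_restrict_iff' measurableSet_Ioi]
      filter_upwards with s hs
      have hs0 : s ∈ Set.Ioi (0:ℝ) := hsub hs
      have := hpt s hs
      have h2 : deriv g s ≤ 0 := hnp s hs0
      rw [Real.norm_eq_abs, abs_of_nonpos h2]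
      exact this
    -- FTC
    have hFTC : ∫ s in Set.Ioi t, deriv g s = 0 - g t := by
      refine integral_Ioi_of_hasDerivAt_of_tendsto
        ((hd t ht).continuousAt.continuousWithinAt) ?_ hderint hlim
      exact fun x hx => (hd x (hsub hx)).hasDerivAt
    have hgt : g t = ∫ s in Set.Ioi t, -(deriv g s) := by
      rw [integral_neg, hFTC]; ring
    have step1 : g t ≤ ∫ s in Set.Ioi t, φ t * φ s := by
      rw [hgt]
      exact setIntegral_mono_on hderint.neg hbdd measurableSet_Ioi hpt
    have step2 : (∫ s in Set.Ioi t, φ t * φ s) = φ t * ∫ s in Set.Ioi t, φ s := by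
      exact MeasureTheory.integral_const_mul _ _
    have step3 : (∫ s in Set.Ioi t, φ s) ≤ ∫ s in Set.Ioi (0:ℝ), φ s := by
      refine setIntegral_mono_set hint ?_ (HasSubset.Subset.eventuallyLE hsub)
      filter_upwards with s using hφ0 s
    calc g t ≤ ∫ s in Set.Ioi t, φ t * φ s := step1
      _ = φ t * ∫ s in Set.Ioi t, φ s := step2
      _ ≤ φ t * ∫ s in Set.Ioi (0:ℝ), φ s :=
        mul_le_mul_of_nonneg_left step3 (hφ0 t)
  refine ⟨key, ?_⟩
  -- integrability of g
  refine (hint.mul_const (∫ s in Set.Ioi (0:ℝ), φ s)).mono'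
    (hdiff.continuousOn.aestronglyMeasurable measurableSet_Ioi) ?_
  rw [ae_restrict_iff' measurableSet_Ioi]
  filter_upwards with s hs
  rw [Real.norm_eq_abs, abs_of_nonneg (hnonneg s hs)]
  exact key s hs
end

section
/- Let g, G : [0,∞) → [0,∞) be decreasing, differentiable, convex functions with g(t) > 0 for all t, lim_{t→∞} g(t) = lim_{t→∞} G(t) = 0, and liminf_{t→∞} G(t)/g(t) > 0. If ∫₁^∞ √(−g'(t)) dt = +∞, then ∫₁^∞ √(−G'(t)) dt = +∞. -/
open Filter MeasureTheory Set
open scoped ENNReal NNReal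

private lemma sqrt_add_le' {x y : ℝ} (hx : 0 ≤ x) (hy : 0 ≤ y) :
    Real.sqrt (x + y) ≤ Real.sqrt x + Real.sqrt y := by
  have h1 := Real.sq_sqrt hx
  have h2 := Real.sq_sqrt hy
  have h3 := Real.sqrt_nonneg x
  have h4 := Real.sqrt_nonneg y
  have h : x + y ≤ (Real.sqrt x + Real.sqrt y) ^ 2 := by nlinarith [mul_nonneg h3 h4]
  calc Real.sqrt (x + y) ≤ Real.sqrt ((Real.sqrt x + Real.sqrt y) ^ 2) := Real.sqrt_le_sqrt h
    _ = _ := Real.sqrt_sq (by positivity)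

private lemma sqrt_two_pow (n : ℕ) : Real.sqrt ((2:ℝ)^n) = (Real.sqrt 2)^n := by
  induction n with
  | zero => simp
  | succ n ih =>
    rw [pow_succ, Real.sqrt_mul (by positivity), ih, pow_succ]

private lemma iUnion_Ioc_pow : Set.Ioi (1:ℝ) = ⋃ n : ℕ, Set.Ioc ((2:ℝ)^n) ((2:ℝ)^(n+1)) := by
  ext t
  simp only [Set.mem_Ioi, Set.mem_iUnion, Set.mem_Ioc]
  constructor
  · intro ht
    have hex : ∃ n : ℕ, t ≤ (2:ℝ)^(n+1) := by
      obtain ⟨n, hn⟩ := pow_unbounded_of_one_lt t (by norm_num : (1:ℝ) < 2)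
      exact ⟨n, le_of_lt (lt_of_lt_of_le hn (pow_le_pow_right₀ one_le_two (Nat.le_succ n)))⟩
    classical
    refine ⟨Nat.find hex, ?_, Nat.find_spec hex⟩
    rcases Nat.eq_zero_or_eq_succ_pred (Nat.find hex) with h0 | hs
    · rw [h0]; simpa using ht
    · rw [hs]
      have := Nat.find_min hex (m := Nat.find hex - 1) (by omega)
      push_neg at this
      simpa [Nat.succ_eq_add_one, Nat.sub_add_cancel (by omega : 1 ≤ Nat.find hex)] using this
  · rintro ⟨n, h1, _⟩
    have : (1:ℝ) ≤ 2^n := one_le_pow₀ (by norm_num)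
    linarith

private lemma pairwise_Ioc_pow :
    Pairwise (Function.onFun Disjoint fun n : ℕ => Set.Ioc ((2:ℝ)^n) ((2:ℝ)^(n+1))) := by
  intro m n hmn
  have key : ∀ a b : ℕ, a < b → Disjoint (Set.Ioc ((2:ℝ)^a) ((2:ℝ)^(a+1))) (Set.Ioc ((2:ℝ)^b) ((2:ℝ)^(b+1))) := by
    intro a b hab
    rw [Set.Ioc_disjoint_Ioc]
    calc min ((2:ℝ)^(a+1)) ((2:ℝ)^(b+1)) ≤ (2:ℝ)^(a+1) := min_le_left _ _
      _ ≤ (2:ℝ)^b := pow_le_pow_right₀ one_le_two hab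
      _ ≤ max ((2:ℝ)^a) ((2:ℝ)^b) := le_max_right _ _
  rcases lt_or_gt_of_ne hmn with h | h
  · exact key m n h
  · exact (key n m h).symm

private lemma diffAt' {h : ℝ → ℝ} (hdiff : DifferentiableOn ℝ h (Set.Ici 0)) {t : ℝ} (ht : 0 < t) :
    DifferentiableAt ℝ h t :=
  (hdiff t (le_of_lt ht)).differentiableAt (Ici_mem_nhds ht)

private lemma neg_deriv_le' {h : ℝ → ℝ} (hconv : ConvexOn ℝ (Set.Ici 0) h)
    (hdiff : DifferentiableOn ℝ h (Set.Ici 0)) (hnn : ∀ t ∈ Set.Ici (0:ℝ), 0 ≤ h t)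
    {t : ℝ} (ht : 1 ≤ t) : -(deriv h t) ≤ 2 * h (t/2) / t := by
  have ht0 : 0 < t := lt_of_lt_of_le one_pos ht
  have h2 : 0 < t/2 := by linarith
  have hs := hconv.slope_le_deriv (x := t/2) (y := t) (le_of_lt h2) (le_of_lt ht0)
      (by linarith) (diffAt' hdiff ht0)
  rw [slope_def_field] at hs
  have htt : t - t/2 = t/2 := by ring
  rw [htt, div_le_iff₀ h2] at hs
  have hnn' : 0 ≤ h t := hnn t (le_of_lt ht0)
  rw [le_div_iff₀ ht0]
  nlinarith

private lemma le_neg_deriv' {h : ℝ → ℝ} (hconv : ConvexOn ℝ (Set.Ici 0) h)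
    (hdiff : DifferentiableOn ℝ h (Set.Ici 0)) {t b : ℝ} (ht : 0 < t) (htb : t ≤ b) :
    (h b - h (2*b)) / b ≤ -(deriv h t) := by
  have hb : 0 < b := lt_of_lt_of_le ht htb
  have hmono := (hconv.subset (Set.Ioi_subset_Ici le_rfl) (convex_Ioi 0)).monotoneOn_deriv
      (fun x hx => diffAt' hdiff hx)
  have h1 : deriv h t ≤ deriv h b := hmono ht hb htb
  have h2 := hconv.deriv_le_slope (x := b) (y := 2*b) hb.le (by linarith : (0:ℝ) ≤ 2*b)
      (by linarith) (diffAt' hdiff hb)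
  rw [slope_def_field] at h2
  have hbb : 2*b - b = b := by ring
  rw [hbb] at h2
  have h3 : deriv h t ≤ (h (2*b) - h b) / b := h1.trans h2
  have h4 : (h b - h (2*b)) / b = -((h (2*b) - h b) / b) := by ring
  rw [h4]
  exact neg_le_neg h3

private lemma sqrt_aux1 {p u : ℝ} (hp : 0 < p) (hu : 0 ≤ u) :
    Real.sqrt (2*u/p) * p = Real.sqrt 2 * Real.sqrt (p*u) := by
  have h1 : Real.sqrt (2*u/p) * p = Real.sqrt (2*u/p) * Real.sqrt (p^2) := by
    rw [Real.sqrt_sq hp.le]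
  rw [h1, ← Real.sqrt_mul (by positivity)]
  rw [show 2*u/p*p^2 = 2*(p*u) by field_simp]
  rw [Real.sqrt_mul (by norm_num)]

private lemma sqrt_aux2 {p d : ℝ} (hp : 0 < p) (hd : 0 ≤ d) :
    Real.sqrt (d/(2*p)) * p = Real.sqrt (p/2 * d) := by
  have h1 : Real.sqrt (d/(2*p)) * p = Real.sqrt (d/(2*p)) * Real.sqrt (p^2) := by
    rw [Real.sqrt_sq hp.le]
  rw [h1, ← Real.sqrt_mul (by positivity)]
  congr 1
  field_simp

set_option maxHeartbeats 1600000 in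
theorem sqrt_deriv_integral_comparison
    (g G : ℝ → ℝ)
    (hgpos : ∀ t ∈ Set.Ici (0:ℝ), 0 < g t)
    (hGnonneg : ∀ t ∈ Set.Ici (0:ℝ), 0 ≤ G t)
    (hgmono : AntitoneOn g (Set.Ici 0)) (hGmono : AntitoneOn G (Set.Ici 0))
    (hgconv : ConvexOn ℝ (Set.Ici 0) g) (hGconv : ConvexOn ℝ (Set.Ici 0) G)
    (hgdiff : DifferentiableOn ℝ g (Set.Ici 0))
    (hGdiff : DifferentiableOn ℝ G (Set.Ici 0))
    (hglim : Filter.Tendsto g Filter.atTop (nhds 0))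
    (hGlim : Filter.Tendsto G Filter.atTop (nhds 0))
    (hliminf : ∃ c > (0:ℝ), ∀ᶠ t in Filter.atTop, c ≤ G t / g t)
    (hgint : ∫⁻ t in Set.Ioi (1:ℝ), ENNReal.ofReal (Real.sqrt (-(deriv g t))) = ⊤) :
    ∫⁻ t in Set.Ioi (1:ℝ), ENNReal.ofReal (Real.sqrt (-(deriv G t))) = ⊤ := by
  classical
  by_contra hcon
  set q : ℕ → ℝ := fun n => (2:ℝ)^n / 2 with hq_def
  have hq_pos : ∀ n, 0 < q n := fun n => by positivity
  have hp_pos : ∀ n : ℕ, (0:ℝ) < (2:ℝ)^n := fun n => by positivity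
  have hq_mono : Monotone q := by
    intro a b hab
    have := pow_le_pow_right₀ (by norm_num : (1:ℝ) ≤ 2) hab
    simp only [hq_def]
    linarith
  have hdecomp : ∀ F : ℝ → ℝ≥0∞, (∫⁻ t in Set.Ioi (1:ℝ), F t)
      = ∑' n : ℕ, ∫⁻ t in Set.Ioc ((2:ℝ)^n) ((2:ℝ)^(n+1)), F t := by
    intro F
    rw [iUnion_Ioc_pow, lintegral_iUnion (fun n => measurableSet_Ioc) pairwise_Ioc_pow F]
  ------------------------------------------------------------------
  -- Part 1 : the g-side series diverges
  ------------------------------------------------------------------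
  have hg_piece : ∀ n : ℕ, (∫⁻ t in Set.Ioc ((2:ℝ)^n) ((2:ℝ)^(n+1)),
      ENNReal.ofReal (Real.sqrt (-(deriv g t))))
      ≤ ENNReal.ofReal (Real.sqrt 2 * Real.sqrt ((2:ℝ)^n * g (q n))) := by
    intro n
    have hp : (0:ℝ) < (2:ℝ)^n := hp_pos n
    have hp1 : (1:ℝ) ≤ (2:ℝ)^n := one_le_pow₀ (by norm_num)
    have h2p : (2:ℝ)^(n+1) = 2 * (2:ℝ)^n := by rw [pow_succ]; ring
    have hqn : q n = (2:ℝ)^n / 2 := rfl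
    have hgp2 : 0 ≤ g (q n) := (hgpos (q n) (hq_pos n).le).le
    have hpt : ∀ t ∈ Set.Ioc ((2:ℝ)^n) ((2:ℝ)^(n+1)),
        Real.sqrt (-(deriv g t)) ≤ Real.sqrt (2 * g (q n) / (2:ℝ)^n) := by
      intro t ht
      obtain ⟨ht1, ht2⟩ := ht
      have htp : 1 ≤ t := le_trans hp1 ht1.le
      have h1 : -(deriv g t) ≤ 2 * g (t/2) / t := neg_deriv_le' hgconv hgdiff
        (fun s hs => (hgpos s hs).le) htp
      have h2 : g (t/2) ≤ g (q n) := hgmono (hq_pos n).le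
        (by positivity : (0:ℝ) ≤ t/2) (by rw [hqn]; linarith)
      have h3 : 2 * g (t/2) / t ≤ 2 * g (q n) / (2:ℝ)^n :=
        div_le_div₀ (by linarith) (by linarith) hp ht1.le
      exact Real.sqrt_le_sqrt (by linarith)
    calc (∫⁻ t in Set.Ioc ((2:ℝ)^n) ((2:ℝ)^(n+1)), ENNReal.ofReal (Real.sqrt (-(deriv g t))))
        ≤ ∫⁻ _ in Set.Ioc ((2:ℝ)^n) ((2:ℝ)^(n+1)),
            ENNReal.ofReal (Real.sqrt (2 * g (q n) / (2:ℝ)^n)) :=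
          setLIntegral_mono' measurableSet_Ioc (fun t ht => ENNReal.ofReal_le_ofReal (hpt t ht))
      _ = ENNReal.ofReal (Real.sqrt (2 * g (q n) / (2:ℝ)^n))
            * volume (Set.Ioc ((2:ℝ)^n) ((2:ℝ)^(n+1))) := setLIntegral_const _ _
      _ = ENNReal.ofReal (Real.sqrt (2 * g (q n) / (2:ℝ)^n)) * ENNReal.ofReal ((2:ℝ)^n) := by
          rw [Real.volume_Ioc]
          congr 1
          rw [h2p]; ring
      _ = ENNReal.ofReal (Real.sqrt (2 * g (q n) / (2:ℝ)^n) * (2:ℝ)^n) :=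
          (ENNReal.ofReal_mul (Real.sqrt_nonneg _)).symm
      _ = ENNReal.ofReal (Real.sqrt 2 * Real.sqrt ((2:ℝ)^n * g (q n))) := by
          rw [sqrt_aux1 hp hgp2]
  have hSg : ∑' n : ℕ, ENNReal.ofReal (Real.sqrt ((2:ℝ)^n * g (q n))) = ⊤ := by
    by_contra hS
    have h1 : (⊤:ℝ≥0∞) ≤ ∑' n : ℕ,
        ENNReal.ofReal (Real.sqrt 2 * Real.sqrt ((2:ℝ)^n * g (q n))) := by
      rw [← hgint, hdecomp]
      exact ENNReal.tsum_le_tsum hg_piece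
    have h2 : ∑' n : ℕ, ENNReal.ofReal (Real.sqrt 2 * Real.sqrt ((2:ℝ)^n * g (q n)))
        = ENNReal.ofReal (Real.sqrt 2)
          * ∑' n : ℕ, ENNReal.ofReal (Real.sqrt ((2:ℝ)^n * g (q n))) := by
      rw [← ENNReal.tsum_mul_left]
      exact tsum_congr fun n => ENNReal.ofReal_mul (Real.sqrt_nonneg 2)
    rw [h2] at h1
    exact (ENNReal.mul_ne_top ENNReal.ofReal_ne_top hS) (top_le_iff.mp h1)
  ------------------------------------------------------------------
  -- Part 2 : comparison, the G-side series diverges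
  ------------------------------------------------------------------
  obtain ⟨c, hc0, hev⟩ := hliminf
  obtain ⟨T, hT⟩ := Filter.eventually_atTop.mp hev
  have hqtop : Filter.Tendsto q Filter.atTop Filter.atTop := by
    have h1 : Filter.Tendsto (fun n : ℕ => (2:ℝ)^n) Filter.atTop Filter.atTop :=
      tendsto_pow_atTop_atTop_of_one_lt (by norm_num)
    exact h1.atTop_div_const (by norm_num)
  obtain ⟨N₀, hN₀⟩ := Filter.eventually_atTop.mp (hqtop.eventually_ge_atTop (max T 0))
  have hcomp : ∀ n, N₀ ≤ n → ENNReal.ofReal (Real.sqrt ((2:ℝ)^n * g (q n)))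
      ≤ ENNReal.ofReal (Real.sqrt c⁻¹) * ENNReal.ofReal (Real.sqrt ((2:ℝ)^n * G (q n))) := by
    intro n hn
    have hq1 : max T 0 ≤ q n := hN₀ n hn
    have hqT : T ≤ q n := le_trans (le_max_left _ _) hq1
    have hq0 : (0:ℝ) ≤ q n := le_trans (le_max_right _ _) hq1
    have hgq : 0 < g (q n) := hgpos _ hq0
    have hcg : c * g (q n) ≤ G (q n) := by
      have := hT (q n) hqT
      rw [le_div_iff₀ hgq] at this
      linarith
    have hr : (2:ℝ)^n * g (q n) ≤ c⁻¹ * ((2:ℝ)^n * G (q n)) := by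
      rw [inv_mul_eq_div, le_div_iff₀ hc0]
      nlinarith [hp_pos n]
    calc ENNReal.ofReal (Real.sqrt ((2:ℝ)^n * g (q n)))
        ≤ ENNReal.ofReal (Real.sqrt (c⁻¹ * ((2:ℝ)^n * G (q n)))) :=
          ENNReal.ofReal_le_ofReal (Real.sqrt_le_sqrt hr)
      _ = ENNReal.ofReal (Real.sqrt c⁻¹ * Real.sqrt ((2:ℝ)^n * G (q n))) := by
          rw [Real.sqrt_mul (by positivity)]
      _ = _ := ENNReal.ofReal_mul (Real.sqrt_nonneg _)
  have hSG : ∑' n : ℕ, ENNReal.ofReal (Real.sqrt ((2:ℝ)^n * G (q n))) = ⊤ := by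
    by_contra hS
    have hhead : (∑ n ∈ Finset.range N₀, ENNReal.ofReal (Real.sqrt ((2:ℝ)^n * g (q n)))) ≠ ⊤ :=
      (ENNReal.sum_lt_top.mpr fun _ _ => ENNReal.ofReal_lt_top).ne
    have htotal := hSg
    rw [← Summable.sum_add_tsum_nat_add' (f := fun n => ENNReal.ofReal (Real.sqrt ((2:ℝ)^n * g (q n)))) (k := N₀) ENNReal.summable] at htotal
    have htail : ∑' n : ℕ, ENNReal.ofReal (Real.sqrt ((2:ℝ)^(n+N₀) * g (q (n+N₀)))) = ⊤ := by
      rcases ENNReal.add_eq_top.mp htotal with h | h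
      · exact absurd h hhead
      · exact h
    have htail_le : ∑' n : ℕ, ENNReal.ofReal (Real.sqrt ((2:ℝ)^(n+N₀) * G (q (n+N₀))))
        ≤ ∑' n : ℕ, ENNReal.ofReal (Real.sqrt ((2:ℝ)^n * G (q n))) := by
      conv_rhs => rw [← Summable.sum_add_tsum_nat_add' (f := fun n => ENNReal.ofReal (Real.sqrt ((2:ℝ)^n * G (q n)))) (k := N₀) ENNReal.summable]
      exact le_add_self
    have hle : ∑' n : ℕ, ENNReal.ofReal (Real.sqrt ((2:ℝ)^(n+N₀) * g (q (n+N₀))))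
        ≤ ENNReal.ofReal (Real.sqrt c⁻¹)
          * ∑' n : ℕ, ENNReal.ofReal (Real.sqrt ((2:ℝ)^(n+N₀) * G (q (n+N₀)))) := by
      rw [← ENNReal.tsum_mul_left]
      exact ENNReal.tsum_le_tsum fun n => hcomp (n+N₀) (Nat.le_add_left _ _)
    rw [htail] at hle
    exact (ENNReal.mul_ne_top ENNReal.ofReal_ne_top
      (ne_top_of_le_ne_top hS htail_le)) (top_le_iff.mp hle)
  ------------------------------------------------------------------
  -- Part 3 : the G-side, lower bounds on pieces
  ------------------------------------------------------------------
  set d : ℕ → ℝ := fun n => G (q n) - G (q (n+1)) with hd_def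
  have hd_nn : ∀ n, 0 ≤ d n := by
    intro n
    have := hGmono (hq_pos n).le (hq_pos (n+1)).le (hq_mono (Nat.le_succ n))
    simp only [hd_def]
    linarith
  have hG_piece : ∀ n : ℕ, ENNReal.ofReal (Real.sqrt (q n * d (n+2)))
      ≤ ∫⁻ t in Set.Ioc ((2:ℝ)^n) ((2:ℝ)^(n+1)),
          ENNReal.ofReal (Real.sqrt (-(deriv G t))) := by
    intro n
    have hp : (0:ℝ) < (2:ℝ)^n := hp_pos n
    have h2p : (2:ℝ)^(n+1) = 2 * (2:ℝ)^n := by rw [pow_succ]; ring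
    have hqn2 : q (n+2) = 2 * (2:ℝ)^n := by
      show (2:ℝ)^(n+2) / 2 = _
      rw [pow_succ, pow_succ]; ring
    have hqn3 : q (n+3) = 2 * (2 * (2:ℝ)^n) := by
      show (2:ℝ)^(n+3) / 2 = _
      rw [pow_succ, pow_succ, pow_succ]; ring
    have hdn2 : d (n+2) = G (2 * (2:ℝ)^n) - G (2 * (2 * (2:ℝ)^n)) := by
      simp only [hd_def]
      rw [hqn2, show n+2+1 = n+3 from rfl, hqn3]
    have hpt : ∀ t ∈ Set.Ioc ((2:ℝ)^n) ((2:ℝ)^(n+1)),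
        Real.sqrt (d (n+2) / (2 * (2:ℝ)^n)) ≤ Real.sqrt (-(deriv G t)) := by
      intro t ht
      have h1 : (G (2 * (2:ℝ)^n) - G (2 * (2 * (2:ℝ)^n))) / (2 * (2:ℝ)^n) ≤ -(deriv G t) :=
        le_neg_deriv' hGconv hGdiff (lt_trans hp ht.1) (by rw [← h2p]; exact ht.2)
      apply Real.sqrt_le_sqrt
      rw [hdn2]
      exact h1
    calc ENNReal.ofReal (Real.sqrt (q n * d (n+2)))
        = ENNReal.ofReal (Real.sqrt (d (n+2) / (2 * (2:ℝ)^n)) * (2:ℝ)^n) := by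
          rw [sqrt_aux2 hp (hd_nn _)]
      _ = ENNReal.ofReal (Real.sqrt (d (n+2) / (2 * (2:ℝ)^n))) * ENNReal.ofReal ((2:ℝ)^n) :=
          ENNReal.ofReal_mul (Real.sqrt_nonneg _)
      _ = ENNReal.ofReal (Real.sqrt (d (n+2) / (2 * (2:ℝ)^n)))
            * volume (Set.Ioc ((2:ℝ)^n) ((2:ℝ)^(n+1))) := by
          rw [Real.volume_Ioc]
          congr 1
          rw [h2p]; ring
      _ = ∫⁻ _ in Set.Ioc ((2:ℝ)^n) ((2:ℝ)^(n+1)),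
            ENNReal.ofReal (Real.sqrt (d (n+2) / (2 * (2:ℝ)^n))) := (setLIntegral_const _ _).symm
      _ ≤ _ := setLIntegral_mono' measurableSet_Ioc
            (fun t ht => ENNReal.ofReal_le_ofReal (hpt t ht))
  have hA : (∑' n : ℕ, ∫⁻ t in Set.Ioc ((2:ℝ)^n) ((2:ℝ)^(n+1)),
      ENNReal.ofReal (Real.sqrt (-(deriv G t)))) ≠ ⊤ := by
    rw [← hdecomp]; exact hcon
  have hDsum : ∑' n : ℕ, ENNReal.ofReal (Real.sqrt (q n * d n)) ≠ ⊤ := by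
    have hshift : ∀ n : ℕ, ENNReal.ofReal (Real.sqrt (q (n+2) * d (n+2)))
        ≤ 2 * ENNReal.ofReal (Real.sqrt (q n * d (n+2))) := by
      intro n
      have hq4 : q (n+2) = 4 * q n := by
        show (2:ℝ)^(n+2) / 2 = 4 * ((2:ℝ)^n / 2)
        rw [pow_succ, pow_succ]; ring
      have hsq : Real.sqrt (q (n+2) * d (n+2)) = 2 * Real.sqrt (q n * d (n+2)) := by
        rw [hq4, show 4 * q n * d (n+2) = 2^2 * (q n * d (n+2)) by ring,
          Real.sqrt_mul (by norm_num : (0:ℝ) ≤ 2^2), Real.sqrt_sq (by norm_num : (0:ℝ) ≤ 2)]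
      rw [hsq, ENNReal.ofReal_mul (by norm_num : (0:ℝ) ≤ 2)]
      simp
    have htail : ∑' n : ℕ, ENNReal.ofReal (Real.sqrt (q (n+2) * d (n+2)))
        ≤ 2 * ∑' n : ℕ, ∫⁻ t in Set.Ioc ((2:ℝ)^n) ((2:ℝ)^(n+1)),
            ENNReal.ofReal (Real.sqrt (-(deriv G t))) := by
      rw [← ENNReal.tsum_mul_left]
      exact ENNReal.tsum_le_tsum fun n => (hshift n).trans (mul_le_mul_right (hG_piece n) 2)
    have h2A : (2:ℝ≥0∞) * ∑' n : ℕ, (∫⁻ t in Set.Ioc ((2:ℝ)^n) ((2:ℝ)^(n+1)),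
        ENNReal.ofReal (Real.sqrt (-(deriv G t)))) ≠ ⊤ :=
      ENNReal.mul_ne_top (by norm_num) hA
    rw [← Summable.sum_add_tsum_nat_add' (f := fun n => ENNReal.ofReal (Real.sqrt (q n * d n))) (k := 2) ENNReal.summable]
    exact ENNReal.add_ne_top.mpr ⟨(ENNReal.sum_lt_top.mpr fun _ _ => ENNReal.ofReal_lt_top).ne,
      ne_top_of_le_ne_top h2A htail⟩
  ------------------------------------------------------------------
  -- Part 4 : subadditivity of sqrt along the telescoping series
  ------------------------------------------------------------------
  have hsub : ∀ n N, n ≤ N → Real.sqrt (G (q n))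
      ≤ (∑ m ∈ Finset.Ico n N, Real.sqrt (d m)) + Real.sqrt (G (q N)) := by
    intro n N hnN
    induction N, hnN using Nat.le_induction with
    | base => simp
    | succ N hnN ih =>
      have key : Real.sqrt (G (q N)) ≤ Real.sqrt (d N) + Real.sqrt (G (q (N+1))) := by
        have hGq : G (q N) = d N + G (q (N+1)) := by simp [hd_def]
        rw [hGq]
        exact sqrt_add_le' (hd_nn N) (hGnonneg _ (hq_pos _).le)
      rw [Finset.sum_Ico_succ_top hnN]
      linarith
  have hlim0 : Filter.Tendsto (fun N => Real.sqrt (G (q N))) Filter.atTop (nhds 0) := by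
    have h1 : Filter.Tendsto (fun N => G (q N)) Filter.atTop (nhds 0) := hGlim.comp hqtop
    have h2 := (Real.continuous_sqrt.tendsto 0).comp h1
    rw [Real.sqrt_zero] at h2
    exact h2
  have hE : ∀ n : ℕ, ENNReal.ofReal (Real.sqrt (G (q n)))
      ≤ ∑' m : ℕ, (if n ≤ m then ENNReal.ofReal (Real.sqrt (d m)) else 0) := by
    intro n
    refine ENNReal.le_of_forall_pos_le_add fun ε hε _ => ?_
    obtain ⟨N, hN⟩ := Filter.eventually_atTop.mp
      (hlim0.eventually (gt_mem_nhds (by exact_mod_cast hε : (0:ℝ) < (ε:ℝ))))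
    have h1 := hsub n (max N n) (le_max_right _ _)
    have h2 : Real.sqrt (G (q (max N n))) ≤ (ε:ℝ) := (hN (max N n) (le_max_left _ _)).le
    calc ENNReal.ofReal (Real.sqrt (G (q n)))
        ≤ ENNReal.ofReal ((∑ m ∈ Finset.Ico n (max N n), Real.sqrt (d m))
            + Real.sqrt (G (q (max N n)))) := ENNReal.ofReal_le_ofReal h1
      _ ≤ ENNReal.ofReal (∑ m ∈ Finset.Ico n (max N n), Real.sqrt (d m))
            + ENNReal.ofReal (Real.sqrt (G (q (max N n)))) := ENNReal.ofReal_add_le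
      _ ≤ (∑' m : ℕ, if n ≤ m then ENNReal.ofReal (Real.sqrt (d m)) else 0) + (ε:ℝ≥0∞) := by
          gcongr
          · rw [ENNReal.ofReal_sum_of_nonneg (fun m _ => Real.sqrt_nonneg _)]
            calc (∑ m ∈ Finset.Ico n (max N n), ENNReal.ofReal (Real.sqrt (d m)))
                = ∑ m ∈ Finset.Ico n (max N n),
                    (if n ≤ m then ENNReal.ofReal (Real.sqrt (d m)) else 0) :=
                  Finset.sum_congr rfl (fun m hm => (if_pos (Finset.mem_Ico.mp hm).1).symm)
              _ ≤ _ := ENNReal.sum_le_tsum _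
          · calc ENNReal.ofReal (Real.sqrt (G (q (max N n)))) ≤ ENNReal.ofReal (ε:ℝ) :=
                  ENNReal.ofReal_le_ofReal h2
              _ = (ε : ℝ≥0∞) := ENNReal.ofReal_coe_nnreal
  ------------------------------------------------------------------
  -- Part 5 : geometric bound for the weights
  ------------------------------------------------------------------
  have hgeo : ∀ m : ℕ, (∑' n : ℕ, if n ≤ m then ENNReal.ofReal (Real.sqrt (q n)) else 0)
      ≤ ENNReal.ofReal (Real.sqrt 2 / (Real.sqrt 2 - 1)) * ENNReal.ofReal (Real.sqrt (q m)) := by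
    intro m
    have heq : (∑' n : ℕ, if n ≤ m then ENNReal.ofReal (Real.sqrt (q n)) else 0)
        = ∑ n ∈ Finset.range (m+1), ENNReal.ofReal (Real.sqrt (q n)) := by
      rw [tsum_eq_sum (s := Finset.range (m+1))
        (fun n hn => if_neg (fun hc => hn (Finset.mem_range.mpr (Nat.lt_succ_of_le hc))))]
      exact Finset.sum_congr rfl fun n hn => if_pos (Nat.lt_succ_iff.mp (Finset.mem_range.mp hn))
    have hs1 : 1 < Real.sqrt 2 := by
      rw [show (1:ℝ) = Real.sqrt 1 by simp]
      exact Real.sqrt_lt_sqrt (by norm_num) (by norm_num)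
    have hs0 : 0 < Real.sqrt 2 := lt_trans one_pos hs1
    rw [heq, ← ENNReal.ofReal_sum_of_nonneg (fun _ _ => Real.sqrt_nonneg _),
      ← ENNReal.ofReal_mul (div_nonneg hs0.le (by linarith))]
    apply ENNReal.ofReal_le_ofReal
    have hqs : ∀ n : ℕ, Real.sqrt (q n) = (Real.sqrt 2)^n / Real.sqrt 2 := by
      intro n
      show Real.sqrt ((2:ℝ)^n / 2) = _
      rw [Real.sqrt_div (by positivity) 2, sqrt_two_pow]
    simp only [hqs]
    rw [← Finset.sum_div, geom_sum_eq (ne_of_gt hs1) (m+1)]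
    have hsm : (0:ℝ) < (Real.sqrt 2)^m := pow_pos hs0 m
    have hR : Real.sqrt 2 / (Real.sqrt 2 - 1) * ((Real.sqrt 2)^m / Real.sqrt 2)
        = (Real.sqrt 2 * (Real.sqrt 2)^m) / ((Real.sqrt 2 - 1) * Real.sqrt 2) := by
      field_simp
    have hnum : (Real.sqrt 2)^(m+1) - 1 ≤ Real.sqrt 2 * (Real.sqrt 2)^m := by
      rw [pow_succ]
      nlinarith
    have hden : (0:ℝ) < (Real.sqrt 2 - 1) * Real.sqrt 2 := by nlinarith
    rw [hR, div_div, div_le_div_iff₀ hden hden]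
    nlinarith [hnum, hden, hsm]
  ------------------------------------------------------------------
  -- Part 6 : putting everything together
  ------------------------------------------------------------------
  have hTbound : ∑' n : ℕ, ENNReal.ofReal (Real.sqrt (q n)) * ENNReal.ofReal (Real.sqrt (G (q n)))
      ≤ ENNReal.ofReal (Real.sqrt 2 / (Real.sqrt 2 - 1))
        * ∑' m : ℕ, ENNReal.ofReal (Real.sqrt (q m * d m)) := by
    calc ∑' n : ℕ, ENNReal.ofReal (Real.sqrt (q n)) * ENNReal.ofReal (Real.sqrt (G (q n)))
        ≤ ∑' n : ℕ, ENNReal.ofReal (Real.sqrt (q n))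
            * ∑' m : ℕ, (if n ≤ m then ENNReal.ofReal (Real.sqrt (d m)) else 0) :=
          ENNReal.tsum_le_tsum fun n => mul_le_mul_right (hE n) _
      _ = ∑' n : ℕ, ∑' m : ℕ,
            (if n ≤ m then ENNReal.ofReal (Real.sqrt (q n)) * ENNReal.ofReal (Real.sqrt (d m))
             else 0) := by
          refine tsum_congr fun n => ?_
          rw [← ENNReal.tsum_mul_left]
          exact tsum_congr fun m => by rw [mul_ite, mul_zero]
      _ = ∑' m : ℕ, ∑' n : ℕ,
            (if n ≤ m then ENNReal.ofReal (Real.sqrt (q n)) * ENNReal.ofReal (Real.sqrt (d m))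
             else 0) := ENNReal.tsum_comm
      _ = ∑' m : ℕ, (∑' n : ℕ, if n ≤ m then ENNReal.ofReal (Real.sqrt (q n)) else 0)
            * ENNReal.ofReal (Real.sqrt (d m)) := by
          refine tsum_congr fun m => ?_
          rw [← ENNReal.tsum_mul_right]
          exact tsum_congr fun n => by rw [ite_mul, zero_mul]
      _ ≤ ∑' m : ℕ, (ENNReal.ofReal (Real.sqrt 2 / (Real.sqrt 2 - 1))
            * ENNReal.ofReal (Real.sqrt (q m))) * ENNReal.ofReal (Real.sqrt (d m)) :=
          ENNReal.tsum_le_tsum fun m => mul_le_mul_left (hgeo m) _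
      _ = ENNReal.ofReal (Real.sqrt 2 / (Real.sqrt 2 - 1))
            * ∑' m : ℕ, ENNReal.ofReal (Real.sqrt (q m)) * ENNReal.ofReal (Real.sqrt (d m)) := by
          simp_rw [mul_assoc]
          rw [ENNReal.tsum_mul_left]
      _ = ENNReal.ofReal (Real.sqrt 2 / (Real.sqrt 2 - 1))
            * ∑' m : ℕ, ENNReal.ofReal (Real.sqrt (q m * d m)) := by
          congr 1
          refine tsum_congr fun m => ?_
          rw [← ENNReal.ofReal_mul (Real.sqrt_nonneg _), ← Real.sqrt_mul (hq_pos m).le]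
  have hfin : ∑' n : ℕ, ENNReal.ofReal (Real.sqrt ((2:ℝ)^n * G (q n))) ≠ ⊤ := by
    have hb : ∀ n : ℕ, ENNReal.ofReal (Real.sqrt ((2:ℝ)^n * G (q n)))
        = ENNReal.ofReal (Real.sqrt 2)
          * (ENNReal.ofReal (Real.sqrt (q n)) * ENNReal.ofReal (Real.sqrt (G (q n)))) := by
      intro n
      rw [← ENNReal.ofReal_mul (Real.sqrt_nonneg _),
        ← ENNReal.ofReal_mul (Real.sqrt_nonneg 2)]
      congr 1
      rw [← Real.sqrt_mul (hq_pos n).le, ← Real.sqrt_mul (by norm_num : (0:ℝ) ≤ 2)]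
      congr 1
      show (2:ℝ)^n * G ((2:ℝ)^n / 2) = 2 * ((2:ℝ)^n / 2 * G ((2:ℝ)^n / 2))
      ring
    simp_rw [hb]
    rw [ENNReal.tsum_mul_left]
    exact ENNReal.mul_ne_top ENNReal.ofReal_ne_top
      (ne_top_of_le_ne_top (ENNReal.mul_ne_top ENNReal.ofReal_ne_top hDsum) hTbound)
  exact hfin hSG
end

section
/- Let f : ℝ → ℝ be a convex C²-function which attains its infimum at some x* ∈ ℝ, and let x : [0,∞) → ℝ be a gradient flow of f. Then liminf_{t→∞} t·(log t)²·(f(x(t)) − inf f) = 0; equivalently, there do not exist ε > 0 and T > 1 such that f(x(t)) − inf f ≥ ε/(t·(log t)²) for all t ≥ T. -/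
open Filter MeasureTheory Set Topology



/-- Supporting-line (gradient) inequality for a differentiable convex function on ℝ. -/
lemma grad_ineq_s11 {f : ℝ → ℝ} (hconv : ConvexOn ℝ Set.univ f)
    (hd : Differentiable ℝ f) (z y : ℝ) :
    f z + deriv f z * (y - z) ≤ f y := by
  rcases lt_trichotomy z y with h | h | h
  · have h1 := hconv.deriv_le_slope (mem_univ z) (mem_univ y) h (hd z)
    rw [slope_def_field] at h1
    have hy : 0 < y - z := by linarith
    rw [le_div_iff₀ hy] at h1
    linarith
  · simp [h]
  · have h1 := hconv.slope_le_deriv (mem_univ y) (mem_univ z) h (hd z)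
    rw [slope_def_field] at h1
    have hy : 0 < z - y := by linarith
    rw [div_le_iff₀ hy] at h1
    nlinarith
lemma grad_ineq' {f : ℝ → ℝ} (hconv : ConvexOn ℝ Set.univ f)
    (hd : Differentiable ℝ f) (z y : ℝ) :
    f z - f y ≤ deriv f z * (z - y) := by
  have := grad_ineq_s11 hconv hd z y; nlinarith

/-- Drift lemma. -/
lemma drift {x p : ℝ → ℝ}
    (hx : ∀ t ∈ Set.Ici (0:ℝ), HasDerivWithinAt x (-(p t)) (Set.Ici 0) t)
    {a b c : ℝ} (ha : 0 ≤ a) (hab : a ≤ b)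
    (hc : ∀ s, a ≤ s → s ≤ b → c ≤ p s) :
    x b + c * b ≤ x a + c * a := by
  have hcont : ContinuousOn x (Set.Icc a b) := by
    intro t ht
    exact ((hx t (show (0:ℝ) ≤ t from le_trans ha ht.1)).continuousWithinAt).mono
      (fun s hs => le_trans ha hs.1)
  have hmain : AntitoneOn (fun t => x t + c * t) (Set.Icc a b) := by
    apply antitoneOn_of_hasDerivWithinAt_nonpos (convex_Icc a b)
      (f' := fun t => -(p t) + c)
    · exact hcont.add (continuous_const.mul continuous_id).continuousOn
    · intro t ht
      rw [interior_Icc] at ht ⊢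
      have h1 : HasDerivWithinAt x (-(p t)) (Set.Ioo a b) t :=
        (hx t (le_trans ha ht.1.le)).mono (fun s hs => le_trans ha hs.1.le)
      have h2 : HasDerivWithinAt (fun t => c * t) c (Set.Ioo a b) t := by
        simpa using ((hasDerivAt_id t).const_mul c).hasDerivWithinAt
      exact h1.add h2
    · intro t ht
      rw [interior_Icc] at ht
      have := hc t ht.1.le ht.2.le
      linarith
  have := hmain (Set.left_mem_Icc.2 hab) (Set.right_mem_Icc.2 hab) hab
  simpa using this

/-- Log-log increment bound. -/
lemma loglog_diff {s t : ℝ} (hs : 2 ≤ s) (hst : s ≤ t) :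
    Real.log (Real.log t) - Real.log (Real.log s) ≤ (t - s) / (s * Real.log s) := by
  have hlogs : 0 < Real.log s := Real.log_pos (by linarith)
  have hslogs : 0 < s * Real.log s := by positivity
  have key : ∀ u ∈ Set.Icc s t, HasDerivWithinAt
      (fun u => Real.log (Real.log u) - u / (s * Real.log s))
      (1 / (u * Real.log u) - 1 / (s * Real.log s)) (Set.Icc s t) u := by
    intro u hu
    have hu2 : (2:ℝ) ≤ u := le_trans hs hu.1
    have hu0 : (0:ℝ) < u := by linarith
    have hlogu : 0 < Real.log u := Real.log_pos (by linarith)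
    have h1 : HasDerivAt (fun u => Real.log (Real.log u)) (1 / (u * Real.log u)) u := by
      have := (Real.hasDerivAt_log hlogu.ne').comp u (Real.hasDerivAt_log hu0.ne')
      exact this.congr_deriv (by rw [one_div, mul_inv, mul_comm])
    have h2 : HasDerivAt (fun u => u / (s * Real.log s)) (1 / (s * Real.log s)) u := by
      simpa using (hasDerivAt_id u).div_const (s * Real.log s)
    exact (h1.sub h2).hasDerivWithinAt
  have hanti : AntitoneOn (fun u => Real.log (Real.log u) - u / (s * Real.log s))
      (Set.Icc s t) := by
    apply antitoneOn_of_hasDerivWithinAt_nonpos (convex_Icc s t)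
    · exact fun u hu => ((key u hu).continuousWithinAt)
    · intro u hu
      rw [interior_Icc] at hu ⊢
      exact ((key u (Set.Ioo_subset_Icc_self hu)).mono Set.Ioo_subset_Icc_self)
    · intro u hu
      rw [interior_Icc] at hu
      obtain ⟨hus, hut⟩ := hu
      have hu2 : (2:ℝ) ≤ u := by linarith
      have hlogu : 0 < Real.log u := Real.log_pos (by linarith)
      have h1 : Real.log s ≤ Real.log u := Real.log_le_log (by linarith) (by linarith)
      have hmono : s * Real.log s ≤ u * Real.log u := by nlinarith
      have h1 : 1 / (u * Real.log u) ≤ 1 / (s * Real.log s) :=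
        one_div_le_one_div_of_le hslogs hmono
      linarith
  have h2 : Real.log (Real.log t) - t / (s * Real.log s) ≤
      Real.log (Real.log s) - s / (s * Real.log s) :=
    hanti (Set.left_mem_Icc.2 hst) (Set.right_mem_Icc.2 hst) hst
  have h3 : (t - s) / (s * Real.log s)
      = t / (s * Real.log s) - s / (s * Real.log s) := by ring
  linarith



set_option maxHeartbeats 2000000 in
lemma key (f : ℝ → ℝ) (hconv : ConvexOn ℝ Set.univ f) (hf : ContDiff ℝ 2 f)
    (xstar : ℝ) (hmin : ∀ y, f xstar ≤ f y) (x : ℝ → ℝ)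
    (hx : ∀ t ∈ Set.Ici (0:ℝ), HasDerivWithinAt x (-(deriv f (x t))) (Set.Ici 0) t)
    (hp : ∀ t : ℝ, 0 ≤ t → 0 < deriv f (x t))
    (ε T : ℝ) (hε : 0 < ε) (hT : 1 < T)
    (hbd : ∀ t ≥ T, ε / (t * (Real.log t) ^ 2) ≤ f (x t) - f xstar) : False := by
  have hd : Differentiable ℝ f := hf.differentiable two_ne_zero
  have hdc : Continuous (deriv f) := hf.continuous_deriv one_le_two
  set p : ℝ → ℝ := fun t => deriv f (x t) with hpdef
  -- x is antitone on [0,∞)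
  have hxanti : ∀ a b : ℝ, 0 ≤ a → a ≤ b → x b ≤ x a := by
    intro a b ha hab
    have := drift hx ha hab (c := 0) (fun s hs _ => (hp s (ha.trans hs)).le)
    simpa using this
  have hmono_deriv : MonotoneOn (deriv f) Set.univ :=
    hconv.monotoneOn_deriv (fun y _ => hd y)
  have hloc : IsLocalMin f xstar := by
    unfold IsLocalMin IsMinFilter
    exact Filter.Eventually.of_forall hmin
  have hstar0 : deriv f xstar = 0 := hloc.deriv_eq_zero
  have hxgt : ∀ t : ℝ, 0 ≤ t → xstar < x t := by
    intro t ht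
    by_contra hle
    push_neg at hle
    have h1 : p t ≤ deriv f xstar := hmono_deriv (mem_univ _) (mem_univ _) hle
    rw [hstar0] at h1
    exact absurd (hp t ht) (by linarith)
  -- the limit of x
  set y : ℝ → ℝ := fun t => x (max t 0) with hydef
  have hyanti : Antitone y := fun s t hst =>
    hxanti _ _ (le_max_right s 0) (max_le_max hst le_rfl)
  have hybdd : BddBelow (Set.range y) := by
    refine ⟨xstar, ?_⟩
    rintro _ ⟨t, rfl⟩
    exact (hxgt _ (le_max_right t 0)).le
  set xinf : ℝ := ⨅ t, y t with hxinfdef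
  have hytend : Tendsto y atTop (𝓝 xinf) := tendsto_atTop_ciInf hyanti hybdd
  have hxtend : Tendsto x atTop (𝓝 xinf) := by
    refine hytend.congr' ?_
    filter_upwards [eventually_ge_atTop (0:ℝ)] with t ht
    simp [hydef, max_eq_left ht]
  have hxinf_le : ∀ t : ℝ, 0 ≤ t → xinf ≤ x t := by
    intro t ht
    have := ciInf_le hybdd t
    simpa [hydef, max_eq_left ht] using this
  have hstar_le : xstar ≤ xinf := le_ciInf (fun t => (hxgt _ (le_max_right t 0)).le)
  have hpanti : ∀ s t : ℝ, 0 ≤ s → s ≤ t → p t ≤ p s := fun s t hs hst =>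
    hmono_deriv (mem_univ _) (mem_univ _) (hxanti s t hs hst)
  have hptend : Tendsto p atTop (𝓝 (deriv f xinf)) :=
    (hdc.continuousAt.tendsto).comp hxtend
  have hq0 : deriv f xinf = 0 := by
    have hqnn : 0 ≤ deriv f xinf :=
      ge_of_tendsto hptend ((eventually_ge_atTop (0:ℝ)).mono fun t ht => (hp t ht).le)
    rcases eq_or_lt_of_le hqnn with h | hqpos
    · exact h.symm
    · exfalso
      set q := deriv f xinf
      have hqle : ∀ s : ℝ, 0 ≤ s → q ≤ p s := by
        intro s hs
        refine le_of_tendsto hptend ?_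
        filter_upwards [eventually_ge_atTop s] with t ht
        exact hpanti s t hs ht
      set tb : ℝ := max 0 ((x 0 - xstar) / q + 1) with htbdef
      have htb0 : 0 ≤ tb := le_max_left _ _
      have := drift hx le_rfl htb0 (c := q) (fun s hs _ => hqle s hs)
      -- x tb + q * tb ≤ x 0 + q * 0
      have hxtb : x tb ≤ x 0 - q * tb := by linarith [this]
      have htbge : (x 0 - xstar) / q + 1 ≤ tb := le_max_right _ _
      have hq' : q * ((x 0 - xstar) / q + 1) = x 0 - xstar + q := by field_simp
      have hqtb : x 0 - xstar + q ≤ q * tb := by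
        rw [← hq']
        exact mul_le_mul_of_nonneg_left htbge hqpos.le
      have := hxgt tb htb0
      linarith
  have hfxinf : f xinf = f xstar := by
    have h1 := grad_ineq_s11 hconv hd xinf xstar
    rw [hq0] at h1
    simp at h1
    exact le_antisymm h1 (hmin xinf)
  set g : ℝ → ℝ := fun t => f (x t) - f xstar with hgdef
  have hgtend : Tendsto g atTop (𝓝 0) := by
    have h1 : Tendsto (fun t => f (x t)) atTop (𝓝 (f xinf)) :=
      (hf.continuous.continuousAt.tendsto).comp hxtend
    have h2 : Tendsto g atTop (𝓝 (f xinf - f xstar)) := h1.sub_const _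
    rwa [hfxinf, sub_self] at h2
  -- dyadic times
  set τ : ℕ → ℝ := fun j => T * 2 ^ j with hτdef
  have hτpos : ∀ j, 0 < τ j := fun j => by positivity
  have hτ1 : ∀ j, 1 < τ j := by
    intro j
    have h2j : (1:ℝ) ≤ 2 ^ j := one_le_pow₀ (by norm_num)
    simp only [hτdef]
    nlinarith
  have hτT : ∀ j, T ≤ τ j := by
    intro j
    have h2j : (1:ℝ) ≤ 2 ^ j := one_le_pow₀ (by norm_num)
    simp only [hτdef]
    nlinarith
  have hτmono : ∀ j k : ℕ, j ≤ k → τ j ≤ τ k := by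
    intro j k hjk
    have := pow_le_pow_right₀ (by norm_num : (1:ℝ) ≤ 2) hjk
    simp only [hτdef]
    nlinarith
  have hτtop : Tendsto τ atTop atTop := by
    apply Tendsto.const_mul_atTop (by linarith : (0:ℝ) < T)
    exact tendsto_pow_atTop_atTop_of_one_lt (by norm_num : (1:ℝ) < 2)
  have hτsucc : ∀ j, τ (j+1) - τ j = T * 2 ^ j := by
    intro j
    simp only [hτdef, pow_succ]
    ring
  -- increments and derivative values at dyadic times
  set a : ℕ → ℝ := fun j => x (τ j) - x (τ (j+1)) with hadef
  set P : ℕ → ℝ := fun j => p (τ j) with hPdef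
  have ha_nonneg : ∀ j, 0 ≤ a j := by
    intro j
    have := hxanti (τ j) (τ (j+1)) (hτpos j).le (hτmono j (j+1) (Nat.le_succ j))
    simp only [hadef]
    linarith
  have hP_pos : ∀ j, 0 < P j := fun j => hp _ (hτpos j).le
  have hx_le : ∀ j k : ℕ, j ≤ k → x (τ k) ≤ x (τ j) := fun j k hjk =>
    hxanti _ _ (hτpos j).le (hτmono j k hjk)
  set B : ℝ := x (τ 0) - xinf + 1 with hBdef
  have hB1 : 1 ≤ B := by
    have := hxinf_le (τ 0) (hτpos 0).le
    simp only [hBdef]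
    linarith
  have hB0 : 0 < B := by linarith
  have ha_leB : ∀ j, a j ≤ B := by
    intro j
    have h1 := hx_le 0 j (Nat.zero_le j)
    have h2 := hxinf_le (τ (j+1)) (hτpos (j+1)).le
    simp only [hadef, hBdef]
    linarith
  -- discrete speed bound
  have hI2 : ∀ j : ℕ, P (j+1) * (T * 2 ^ j) ≤ a j := by
    intro j
    have hdr := drift hx (hτpos j).le (hτmono j (j+1) (Nat.le_succ j)) (c := P (j+1))
      (fun s hs hs' => hpanti s (τ (j+1)) ((hτpos j).le.trans hs) hs')
    have hts := hτsucc j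
    simp only [hadef]
    rw [← hts, mul_sub]
    linarith [hdr]
  have hPle : ∀ j : ℕ, 1 ≤ j → P j ≤ a (j-1) / (T * 2 ^ (j-1)) := by
    intro j hj
    obtain ⟨i, rfl⟩ : ∃ i, j = i + 1 := ⟨j - 1, (Nat.succ_pred_eq_of_pos hj).symm⟩
    have h1 := hI2 i
    have hpos : (0:ℝ) < T * 2 ^ i := by positivity
    simp only [Nat.add_sub_cancel]
    rw [le_div_iff₀ hpos]
    exact h1
  -- telescoping convexity bound
  have hI1 : ∀ k K : ℕ, k ≤ K →
      f (x (τ k)) - f (x (τ (K+1))) ≤ ∑ j ∈ Finset.Icc k K, P j * a j := by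
    intro k K hkK
    induction K, hkK using Nat.le_induction with
    | base =>
      rw [Finset.Icc_self, Finset.sum_singleton]
      have := grad_ineq_s11 hconv hd (x (τ k)) (x (τ (k+1)))
      simp only [hPdef, hadef, hpdef]
      nlinarith [this]
    | succ K hkK ih =>
      rw [Finset.sum_Icc_succ_top (by omega : k ≤ K + 1)]
      have hstep := grad_ineq_s11 hconv hd (x (τ (K+1))) (x (τ (K+2)))
      have : f (x (τ (K+1))) - f (x (τ (K+2))) ≤ P (K+1) * a (K+1) := by
        simp only [hPdef, hadef, hpdef]
        nlinarith [hstep]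
      linarith

  -- constants
  have hlog2le : Real.log 2 ≤ 1 := by
    have := Real.log_le_sub_one_of_pos (by norm_num : (0:ℝ) < 2)
    linarith
  have hlogT : 0 < Real.log T := Real.log_pos hT
  set Cl : ℝ := Real.log T + 1 with hCldef
  have hCl1 : 1 ≤ Cl := by simp only [hCldef]; linarith
  have hT0 : (0:ℝ) < T := by linarith
  set eps2 : ℝ := ε / (T * Cl ^ 2) with heps2def
  have heps2 : 0 < eps2 := by
    have : (0:ℝ) < T * Cl ^ 2 := by positivity
    positivity
  set m : ℕ → ℝ := fun k => eps2 / (2 ^ k * ((k:ℝ) + 1) ^ 2) with hmdef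
  have hm_pos : ∀ k, 0 < m k := by
    intro k
    have h1 : (0:ℝ) < 2 ^ k * ((k:ℝ)+1)^2 := by positivity
    simp only [hmdef]
    positivity
  have hglower : ∀ k : ℕ, m k ≤ g (τ k) := by
    intro k
    have h1 := hbd (τ k) (hτT k)
    have hlogτ : Real.log (τ k) = Real.log T + (k:ℝ) * Real.log 2 := by
      simp only [hτdef]
      rw [Real.log_mul (by linarith) (by positivity), Real.log_pow]
    have hlogτ_le : Real.log (τ k) ≤ Cl * ((k:ℝ) + 1) := by
      rw [hlogτ]
      have hk0 : (0:ℝ) ≤ (k:ℝ) := Nat.cast_nonneg k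
      have hlog2pos : 0 < Real.log 2 := Real.log_pos (by norm_num)
      simp only [hCldef]
      nlinarith
    have hlogτ_pos : 0 < Real.log (τ k) := Real.log_pos (hτ1 k)
    have hden : τ k * Real.log (τ k) ^ 2 ≤ (T * 2 ^ k) * (Cl * ((k:ℝ)+1)) ^ 2 := by
      have h2 : Real.log (τ k) ^ 2 ≤ (Cl * ((k:ℝ)+1)) ^ 2 := by
        apply pow_le_pow_left₀ hlogτ_pos.le hlogτ_le
      have h3 : τ k = T * 2 ^ k := by simp [hτdef]
      rw [h3]
      have h4 : (0:ℝ) < T * 2 ^ k := by positivity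
      nlinarith
    have hm_eq : m k = ε / ((T * 2 ^ k) * (Cl * ((k:ℝ)+1)) ^ 2) := by
      simp only [hmdef, heps2def]
      rw [div_div]
      congr 1
      ring
    have hpos2 : 0 < τ k * Real.log (τ k) ^ 2 := mul_pos (hτpos k) (pow_pos hlogτ_pos 2)
    have h5 : ε / ((T * 2 ^ k) * (Cl * ((k:ℝ)+1)) ^ 2) ≤ ε / (τ k * Real.log (τ k) ^ 2) :=
      div_le_div_of_nonneg_left hε.le hpos2 hden
    rw [hm_eq]
    exact h5.trans h1
  -- geometric sum bound
  have hgeom : ∀ n : ℕ, ∑ i ∈ Finset.range n, (3/4:ℝ) ^ i < 4 := by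
    intro n
    rw [geom_sum_eq (by norm_num : (3/4:ℝ) ≠ 1)]
    have h1 : (0:ℝ) < (3/4:ℝ) ^ n := by positivity
    have heq : ((3/4:ℝ) ^ n - 1) / ((3/4:ℝ) - 1) = 4 - 4 * (3/4:ℝ)^n := by
      field_simp
      ring
    rw [heq]
    linarith
  -- window extraction constants
  set R : ℝ := 16 * B ^ 2 / eps2 with hRdef
  have hR0 : 0 < R := by positivity
  have hlog32 : 0 < Real.log (3/2) := Real.log_pos (by norm_num)
  set C7 : ℝ := (max (Real.log R) 0 + 2) / Real.log (3/2) with hC7def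
  have hC70 : 0 ≤ C7 := by
    apply div_nonneg _ hlog32.le
    have := le_max_right (Real.log R) 0
    linarith
  set nu : ℕ → ℝ := fun k => eps2 / (16 * ((k:ℝ)+1)^2) with hnudef
  have hnu_pos : ∀ k, 0 < nu k := by
    intro k
    have : (0:ℝ) < 16 * ((k:ℝ)+1)^2 := by positivity
    simp only [hnudef]
    positivity
  -- main extraction
  have hext : ∀ k : ℕ, 1 ≤ k → ∃ j : ℕ, k ≤ j ∧
      Real.sqrt eps2 / (2 * ((k:ℝ) + 1)) ≤ a (j-1) + a j ∧
      (j:ℝ) ≤ (k:ℝ) + C7 * (1 + Real.log ((k:ℝ) + 1)) := by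
    intro k hk
    -- choose K
    have hgτ : Tendsto (fun j : ℕ => g (τ j)) atTop (𝓝 0) := hgtend.comp hτtop
    obtain ⟨N, hN⟩ := Filter.eventually_atTop.1 (hgτ.eventually_lt_const (half_pos (hm_pos k)))
    set K := max k N with hKdef
    have hkK : k ≤ K := le_max_left _ _
    have hsum1 : m k / 2 ≤ ∑ j ∈ Finset.Icc k K, P j * a j := by
      have h1 := hI1 k K hkK
      have h2 := hglower k
      have h3 : g (τ (K+1)) < m k / 2 :=
        hN (K+1) (le_trans (le_max_right k N) (Nat.le_succ K))
      simp only [hgdef] at h2 h3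
      linarith
    -- pointwise bound  P j * a j ≤ 2 * (a (j-1) * a j) / 2 ^ j
    have hptw : ∀ j : ℕ, 1 ≤ j → P j * a j ≤ 2 * (a (j-1) * a j) / 2 ^ j := by
      intro j hj
      have h1 := hPle j hj
      have h2 : P j * a j ≤ a (j-1) / (T * 2 ^ (j-1)) * a j :=
        mul_le_mul_of_nonneg_right h1 (ha_nonneg j)
      refine h2.trans ?_
      obtain ⟨i, rfl⟩ : ∃ i, j = i + 1 := ⟨j - 1, (Nat.succ_pred_eq_of_pos hj).symm⟩
      simp only [Nat.add_sub_cancel]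
      rw [div_mul_eq_mul_div, pow_succ]
      rw [div_le_div_iff₀ (by positivity) (by positivity)]
      have h3 : (0:ℝ) ≤ a i * a (i+1) := mul_nonneg (ha_nonneg i) (ha_nonneg (i+1))
      have h4 : (0:ℝ) < (2:ℝ)^i := by positivity
      nlinarith [mul_nonneg (mul_nonneg h3 h4.le) (by linarith : (0:ℝ) ≤ T - 1)]
    -- the core dyadic-window claim
    have hcore : ∃ j : ℕ, k ≤ j ∧ j ≤ K ∧ nu k * (3/2:ℝ)^(j-k) ≤ a (j-1) * a j := by
      by_contra hno
      push_neg at hno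
      have hterm : ∀ j ∈ Finset.Icc k K,
          P j * a j ≤ 2 * (nu k * (3/2:ℝ)^(j-k)) / 2 ^ j := by
        intro j hj
        rw [Finset.mem_Icc] at hj
        have h1 := hptw j (le_trans hk hj.1)
        have h2 := hno j hj.1 hj.2
        have h3 : (0:ℝ) ≤ (2:ℝ)^j := by positivity
        refine h1.trans ?_
        exact div_le_div_of_nonneg_right (by linarith) h3
      have hsum2 : ∑ j ∈ Finset.Icc k K, P j * a j
          ≤ ∑ j ∈ Finset.Icc k K, 2 * nu k / 2 ^ k * (3/4:ℝ)^(j-k) := by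
        apply Finset.sum_le_sum
        intro j hj
        rw [Finset.mem_Icc] at hj
        have heq : 2 * (nu k * (3/2:ℝ)^(j-k)) / 2 ^ j
            = 2 * nu k / 2 ^ k * (3/4:ℝ)^(j-k) := by
          have h2j : (2:ℝ)^j = 2^(j-k) * 2^k := by
            rw [← pow_add]
            congr 1
            omega
          rw [h2j]
          have h34 : (3/4:ℝ)^(j-k) = (3/2:ℝ)^(j-k) / 2^(j-k) := by
            rw [← div_pow]
            norm_num
          rw [h34]
          field_simp
        rw [← heq]
        exact hterm j (Finset.mem_Icc.2 hj)
      have hsum3 : ∑ j ∈ Finset.Icc k K, 2 * nu k / 2 ^ k * (3/4:ℝ)^(j-k)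
          = 2 * nu k / 2 ^ k * ∑ i ∈ Finset.range (K + 1 - k), (3/4:ℝ)^i := by
        rw [← Finset.mul_sum]
        congr 1
        rw [← Finset.Ico_add_one_right_eq_Icc, Finset.sum_Ico_eq_sum_range]
        apply Finset.sum_congr rfl
        intro i _
        congr 1
        omega
      have hlt : 2 * nu k / 2 ^ k * ∑ i ∈ Finset.range (K + 1 - k), (3/4:ℝ)^i
          < 2 * nu k / 2 ^ k * 4 := by
        apply mul_lt_mul_of_pos_left (hgeom _)
        have : (0:ℝ) < (2:ℝ)^k := by positivity
        have := hnu_pos k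
        positivity
      have hfin : 2 * nu k / 2 ^ k * 4 = m k / 2 := by
        simp only [hnudef, hmdef]
        field_simp
        ring
      rw [hsum3] at hsum2
      rw [hfin] at hlt
      linarith
    obtain ⟨j, hjk, hjK, hbj⟩ := hcore
    have h32_1 : (1:ℝ) ≤ (3/2:ℝ)^(j-k) := one_le_pow₀ (by norm_num)
    have hbj1 : nu k ≤ a (j-1) * a j := by
      have h := mul_le_mul_of_nonneg_left h32_1 (hnu_pos k).le
      rw [mul_one] at h
      exact h.trans hbj
    refine ⟨j, hjk, ?_, ?_⟩
    · -- AM-GM part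
      by_contra hcon
      push_neg at hcon
      have hk1 : (0:ℝ) < (k:ℝ) + 1 := by positivity
      have hs0 : 0 ≤ Real.sqrt eps2 := Real.sqrt_nonneg _
      have hs2 : Real.sqrt eps2 ^ 2 = eps2 := Real.sq_sqrt heps2.le
      have ha1 := ha_nonneg (j-1)
      have ha2 := ha_nonneg j
      have hbj2 : eps2 ≤ a (j-1) * a j * (16 * ((k:ℝ)+1)^2) := by
        have hnuk : nu k = eps2 / (16 * ((k:ℝ)+1)^2) := rfl
        rw [hnuk, div_le_iff₀ (by positivity)] at hbj1
        exact hbj1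
      rw [lt_div_iff₀ (by positivity : (0:ℝ) < 2 * ((k:ℝ)+1))] at hcon
      have h6 : ((a (j-1) + a j) * (2 * ((k:ℝ)+1)))^2 < Real.sqrt eps2 ^ 2 :=
        pow_lt_pow_left₀ hcon (by positivity) (by norm_num)
      rw [hs2] at h6
      nlinarith [mul_nonneg (sq_nonneg (a (j-1) - a j)) (sq_nonneg ((k:ℝ)+1))]
    · -- window part
      have hbjB : a (j-1) * a j ≤ B^2 := by
        nlinarith [ha_leB (j-1), ha_leB j, ha_nonneg (j-1), ha_nonneg j]
      have h32 : (3/2:ℝ)^(j-k) ≤ R * ((k:ℝ)+1)^2 := by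
        have h1 : nu k * (3/2:ℝ)^(j-k) ≤ B^2 := hbj.trans hbjB
        have h2 : (3/2:ℝ)^(j-k) ≤ B^2 / nu k := by
          rw [le_div_iff₀ (hnu_pos k)]
          linarith [h1]
        refine h2.trans_eq ?_
        simp only [hnudef, hRdef]
        field_simp
      have hcast : ((j-k:ℕ):ℝ) = (j:ℝ) - (k:ℝ) := by
        rw [Nat.cast_sub hjk]
      have hlog1 : ((j:ℝ)-(k:ℝ)) * Real.log (3/2) ≤ Real.log (R * ((k:ℝ)+1)^2) := by
        have h3 := Real.log_le_log (by positivity) h32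
        rwa [Real.log_pow, hcast] at h3
      have hlogR2 : Real.log (R * ((k:ℝ)+1)^2)
          = Real.log R + 2 * Real.log ((k:ℝ)+1) := by
        rw [Real.log_mul hR0.ne' (by positivity), Real.log_pow]
        push_cast
        ring
      have hlogk10 : 0 ≤ Real.log ((k:ℝ)+1) := by
        apply Real.log_nonneg
        have : (1:ℝ) ≤ (k:ℝ) := by exact_mod_cast hk
        linarith
      have hfinal : ((j:ℝ)-(k:ℝ)) * Real.log (3/2)
          ≤ (max (Real.log R) 0 + 2) * (1 + Real.log ((k:ℝ)+1)) := by
        have h1 := le_max_left (Real.log R) 0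
        have h2 := le_max_right (Real.log R) 0
        nlinarith [hlog1, hlogR2]
      have h4 : (j:ℝ) - (k:ℝ) ≤ C7 * (1 + Real.log ((k:ℝ)+1)) := by
        rw [hC7def, div_mul_eq_mul_div, le_div_iff₀ hlog32]
        linarith [hfinal]
      linarith

  -- totalized extraction function
  have hch : ∀ k : ℕ, ∃ j : ℕ, 1 ≤ k → (k ≤ j ∧
      Real.sqrt eps2 / (2 * ((k:ℝ) + 1)) ≤ a (j-1) + a j ∧
      (j:ℝ) ≤ (k:ℝ) + C7 * (1 + Real.log ((k:ℝ) + 1))) := by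
    intro k
    by_cases hk : 1 ≤ k
    · obtain ⟨j, h⟩ := hext k hk
      exact ⟨j, fun _ => h⟩
    · exact ⟨1, fun h => absurd h hk⟩
  choose E hE using hch
  -- the recursively defined index sequence
  set seq : ℕ → ℕ := fun n => Nat.rec 1 (fun _ ih => E ih + 2) n with hseqdef
  have hseq0 : seq 0 = 1 := rfl
  have hseqS : ∀ i, seq (i+1) = E (seq i) + 2 := fun i => rfl
  have hseq1 : ∀ i, 1 ≤ seq i := by
    intro i
    induction i with
    | zero => exact le_refl 1
    | succ i ih => rw [hseqS]; omega
  have hEi : ∀ i, seq i ≤ E (seq i) ∧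
      Real.sqrt eps2 / (2 * ((seq i:ℝ) + 1)) ≤ a (E (seq i) - 1) + a (E (seq i)) ∧
      ((E (seq i) :ℝ)) ≤ (seq i:ℝ) + C7 * (1 + Real.log ((seq i:ℝ) + 1)) :=
    fun i => hE (seq i) (hseq1 i)
  have hseq_step : ∀ i, seq i + 2 ≤ seq (i+1) := by
    intro i
    rw [hseqS]
    have := (hEi i).1
    omega
  have hseq_ge : ∀ i, 2*i + 1 ≤ seq i := by
    intro i
    induction i with
    | zero => simp [hseq0]
    | succ i ih => have := hseq_step i; omega
  -- the bounded-sum estimate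
  have hsum_bound : ∀ N : ℕ, ∑ i ∈ Finset.range N, (a (E (seq i) - 1) + a (E (seq i)))
      ≤ x (τ 0) - x (τ (seq N - 1)) := by
    intro N
    induction N with
    | zero =>
      simp [hseq0]
    | succ N ih =>
      rw [Finset.sum_range_succ]
      have hψ : seq N ≤ E (seq N) := (hEi N).1
      have hψ1 : 1 ≤ E (seq N) := le_trans (hseq1 N) hψ
      have htel : a (E (seq N) - 1) + a (E (seq N))
          = x (τ (E (seq N) - 1)) - x (τ (E (seq N) + 1)) := by
        have hpred : (E (seq N) - 1) + 1 = E (seq N) := Nat.succ_pred_eq_of_pos hψ1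
        simp only [hadef]
        rw [hpred]
        ring
      have hmono2 : x (τ (E (seq N) - 1)) ≤ x (τ (seq N - 1)) := hx_le _ _ (by omega)
      have hend : seq (N+1) - 1 = E (seq N) + 1 := by rw [hseqS]; omega
      rw [htel, hend]
      linarith
  have hBsum : ∀ N : ℕ, ∑ i ∈ Finset.range N, (a (E (seq i) - 1) + a (E (seq i))) ≤ B := by
    intro N
    have h1 := hsum_bound N
    have h2 := hxinf_le (τ (seq N - 1)) (hτpos _).le
    simp only [hBdef] at *
    linarith
  have hkey2 : ∀ N : ℕ, ∑ i ∈ Finset.range N,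
      Real.sqrt eps2 / (2 * ((seq i:ℝ) + 1)) ≤ B :=
    fun N => (Finset.sum_le_sum (fun i _ => (hEi i).2.1)).trans (hBsum N)
  -- divergence of the harmonic-type sum via log log
  have hlog2pos : 0 < Real.log 2 := Real.log_pos (by norm_num)
  set C8 : ℝ := (C7 + 2) * (1/Real.log 2 + 1) with hC8def
  have hC8pos : 0 < C8 := by
    apply mul_pos (by linarith)
    have : 0 < 1 / Real.log 2 := by positivity
    linarith
  have hstep : ∀ i : ℕ, Real.log (Real.log ((seq (i+1):ℝ) + 1))
      - Real.log (Real.log ((seq i:ℝ) + 1)) ≤ C8 / ((seq i:ℝ) + 1) := by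
    intro i
    set u : ℝ := (seq i:ℝ) + 1 with hudef
    set v : ℝ := (seq (i+1):ℝ) + 1 with hvdef
    have hu2 : (2:ℝ) ≤ u := by
      have := hseq1 i
      simp only [hudef]
      have : (1:ℝ) ≤ (seq i:ℝ) := by exact_mod_cast this
      linarith
    have huv : u ≤ v := by
      have := hseq_step i
      simp only [hudef, hvdef]
      have : (seq i:ℝ) + 2 ≤ (seq (i+1):ℝ) := by exact_mod_cast this
      linarith
    have h1 := loglog_diff hu2 huv
    have h2 : v - u ≤ C7 * (1 + Real.log u) + 2 := by
      have h3 := (hEi i).2.2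
      have h4 : (seq (i+1):ℝ) = (E (seq i):ℝ) + 2 := by
        rw [hseqS]; push_cast; ring
      simp only [hudef, hvdef]
      rw [h4]
      linarith
    have hlogu : Real.log 2 ≤ Real.log u := Real.log_le_log (by norm_num) hu2
    have hlogu0 : 0 < Real.log u := lt_of_lt_of_le hlog2pos hlogu
    have h6 : 1 ≤ Real.log u / Real.log 2 := by
      rw [le_div_iff₀ hlog2pos]
      linarith
    have h4 : C7 * (1 + Real.log u) + 2 ≤ C8 * Real.log u := by
      have h7 := mul_le_mul_of_nonneg_left h6 (by linarith : (0:ℝ) ≤ C7 + 2)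
      rw [mul_one] at h7
      have e1 : C8 * Real.log u
          = (C7+2) * (Real.log u / Real.log 2) + (C7+2) * Real.log u := by
        simp only [hC8def]
        field_simp
      rw [e1]
      nlinarith [hlogu0.le, hC70]
    have hu0 : (0:ℝ) < u := by linarith
    have h8 : (v - u) / (u * Real.log u) ≤ (C8 * Real.log u) / (u * Real.log u) :=
      div_le_div_of_nonneg_right (by linarith) (by positivity)
    have h9 : (C8 * Real.log u) / (u * Real.log u) = C8 / u := by
      rw [mul_comm C8 (Real.log u), mul_comm u (Real.log u),
        mul_div_mul_left _ _ hlogu0.ne']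
    linarith
  have htel2 : ∀ N : ℕ, Real.log (Real.log ((seq N:ℝ) + 1))
      - Real.log (Real.log ((seq 0:ℝ) + 1))
      ≤ ∑ i ∈ Finset.range N, C8 / ((seq i:ℝ) + 1) := by
    intro N
    have h1 := Finset.sum_range_sub (fun i => Real.log (Real.log ((seq i:ℝ) + 1))) N
    rw [← h1]
    exact Finset.sum_le_sum (fun i _ => hstep i)
  have hseps : 0 < Real.sqrt eps2 := Real.sqrt_pos.2 heps2
  have hcomb : ∀ N : ℕ, Real.log (Real.log ((seq N:ℝ) + 1))
      ≤ Real.log (Real.log ((seq 0:ℝ) + 1)) + (2 * C8 / Real.sqrt eps2) * B := by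
    intro N
    have h1 := htel2 N
    have h2 : ∑ i ∈ Finset.range N, C8 / ((seq i:ℝ) + 1)
        = (2 * C8 / Real.sqrt eps2) * ∑ i ∈ Finset.range N,
            Real.sqrt eps2 / (2 * ((seq i:ℝ) + 1)) := by
      rw [Finset.mul_sum]
      apply Finset.sum_congr rfl
      intro i _
      have hui : (0:ℝ) < (seq i:ℝ) + 1 := by positivity
      field_simp
    have h3 := hkey2 N
    have h4 : (0:ℝ) ≤ 2 * C8 / Real.sqrt eps2 := by positivity
    have h5 := mul_le_mul_of_nonneg_left h3 h4
    rw [h2] at h1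
    linarith
  -- contradiction: the left side is unbounded
  have hcast : ∀ N : ℕ, (N:ℝ) ≤ (seq N:ℝ) + 1 := by
    intro N
    have := hseq_ge N
    have : (2*N + 1 : ℝ) ≤ (seq N:ℝ) := by exact_mod_cast this
    have hN0 : (0:ℝ) ≤ (N:ℝ) := Nat.cast_nonneg N
    linarith
  have htop : Tendsto (fun N : ℕ => (seq N:ℝ) + 1) atTop atTop :=
    tendsto_atTop_mono hcast tendsto_natCast_atTop_atTop
  have hlltop : Tendsto (fun N : ℕ => Real.log (Real.log ((seq N:ℝ) + 1))) atTop atTop :=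
    Real.tendsto_log_atTop.comp (Real.tendsto_log_atTop.comp htop)
  obtain ⟨N, hNbig⟩ := (hlltop.eventually_gt_atTop
    (Real.log (Real.log ((seq 0:ℝ) + 1)) + (2 * C8 / Real.sqrt eps2) * B)).exists
  exact absurd (hcomb N) (not_le.2 hNbig)





set_option maxHeartbeats 1000000 in
/-- For a convex C² function `f : ℝ → ℝ` attaining its infimum at `x*`
and a gradient flow `x` of `f`, one has
`liminf_{t→∞} t·(log t)²·(f(x(t)) − inf f) = 0`; equivalently, there are no `ε > 0`
and `T > 1` with `f(x(t)) − inf f ≥ ε/(t·(log t)²)` for all `t ≥ T`. -/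
theorem gradient_flow_one_dim_log_square_liminf
    (f : ℝ → ℝ) (hconv : ConvexOn ℝ Set.univ f) (hf : ContDiff ℝ 2 f)
    (xstar : ℝ) (hmin : ∀ y, f xstar ≤ f y)
    (x : ℝ → ℝ)
    (hx : ∀ t ∈ Set.Ici (0:ℝ), HasDerivWithinAt x (-(deriv f (x t))) (Set.Ici 0) t) :
    ¬ ∃ ε > (0:ℝ), ∃ T > (1:ℝ), ∀ t ≥ T,
        ε / (t * (Real.log t) ^ 2) ≤ f (x t) - f xstar := by
  rintro ⟨ε, hε, T, hT, hbd⟩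
  have hd : Differentiable ℝ f := hf.differentiable two_ne_zero
  -- the derivative never vanishes along the trajectory
  have hnz : ∀ t : ℝ, 0 ≤ t → deriv f (x t) ≠ 0 := by
    intro t0 ht0 h0
    have hminx : ∀ z, f (x t0) ≤ f z := by
      intro z
      have := grad_ineq_s11 hconv hd (x t0) z
      rw [h0] at this
      simpa using this
    have hganti : AntitoneOn (fun t => f (x t)) (Set.Ici 0) := by
      apply antitoneOn_of_hasDerivWithinAt_nonpos (convex_Ici 0)
        (f' := fun t => deriv f (x t) * (-(deriv f (x t))))
      · exact hf.continuous.comp_continuousOn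
          (fun t ht => (hx t ht).continuousWithinAt)
      · intro t ht
        rw [interior_Ici] at ht ⊢
        exact (hd (x t)).hasDerivAt.comp_hasDerivWithinAt t
          ((hx t (mem_Ici.2 (le_of_lt ht))).mono (fun s hs => mem_Ici.2 (le_of_lt hs)))
      · intro t _
        nlinarith [sq_nonneg (deriv f (x t))]
    set t1 : ℝ := max T t0 + 1 with ht1def
    have ht1T : T ≤ t1 := by simp only [ht1def]; nlinarith [le_max_left T t0]
    have ht1t0 : t0 ≤ t1 := by simp only [ht1def]; nlinarith [le_max_right T t0]
    have ht1gt : 1 < t1 := by linarith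
    have h1 := hbd t1 ht1T
    have h2 : f (x t1) ≤ f (x t0) :=
      hganti (show t0 ∈ Set.Ici (0:ℝ) from ht0)
        (show t1 ∈ Set.Ici (0:ℝ) by simp only [mem_Ici]; linarith) ht1t0
    have h3 : f (x t0) ≤ f xstar := hminx xstar
    have hlog : 0 < Real.log t1 := Real.log_pos ht1gt
    have h4 : 0 < ε / (t1 * Real.log t1 ^ 2) := by positivity
    linarith
  have hcont : ContinuousOn (fun t => deriv f (x t)) (Set.Ici 0) :=
    (hf.continuous_deriv one_le_two).comp_continuousOn
      (fun t ht => (hx t ht).continuousWithinAt)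
  have hivt : ∀ s t : ℝ, 0 ≤ s → 0 ≤ t → deriv f (x s) < 0 → 0 < deriv f (x t) → False := by
    intro s t hs ht hsneg htpos
    have hsub : Set.uIcc s t ⊆ Set.Ici 0 := by
      intro u hu
      have h1 := hu.1
      have h2 : min s t ≤ u := by
        rcases Set.mem_uIcc.1 hu with ⟨h, _⟩ | ⟨h, _⟩
        · exact le_trans (min_le_left s t) h
        · exact le_trans (min_le_right s t) h
      have : (0:ℝ) ≤ min s t := le_min hs ht
      exact le_trans this h2
    have h0mem : (0:ℝ) ∈ Set.uIcc (deriv f (x s)) (deriv f (x t)) :=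
      Set.mem_uIcc.2 (Or.inl ⟨hsneg.le, htpos.le⟩)
    obtain ⟨u, hu, hu0⟩ := intermediate_value_uIcc (hcont.mono hsub) h0mem
    exact hnz u (hsub hu) hu0
  have hsign : (∀ t:ℝ, 0 ≤ t → 0 < deriv f (x t)) ∨ (∀ t:ℝ, 0 ≤ t → deriv f (x t) < 0) := by
    rcases lt_or_gt_of_ne (hnz 0 le_rfl) with hneg | hpos
    · right
      intro t ht
      rcases lt_or_gt_of_ne (hnz t ht) with h | h
      · exact h
      · exact absurd (hivt 0 t le_rfl ht hneg h) not_false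
    · left
      intro t ht
      rcases lt_or_gt_of_ne (hnz t ht) with h | h
      · exact absurd (hivt t 0 ht le_rfl h hpos) not_false
      · exact h
  rcases hsign with hpos | hneg
  · exact key f hconv hf xstar hmin x hx hpos ε T hε hT hbd
  · -- reflection
    have hconv' : ConvexOn ℝ Set.univ (fun y => f (-y)) := by
      refine ⟨convex_univ, fun a _ b _ μ ν hμ hν hμν => ?_⟩
      have h1 := hconv.2 (mem_univ (-a)) (mem_univ (-b)) hμ hν hμν
      have h2 : μ • (-a) + ν • (-b) = -(μ • a + ν • b) := by
        simp [smul_eq_mul]; ring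
      rw [h2] at h1
      exact h1
    have hf' : ContDiff ℝ 2 (fun y => f (-y)) := hf.comp contDiff_neg
    have hderiv' : ∀ z : ℝ, deriv (fun y => f (-y)) z = -deriv f (-z) := by
      intro z
      have h := ((hd (-z)).hasDerivAt.comp z (hasDerivAt_neg z))
      have h2 := h.deriv
      simpa [Function.comp_def] using h2
    have hmin' : ∀ z, (fun y => f (-y)) (-xstar) ≤ (fun y => f (-y)) z := by
      intro z
      simpa using hmin (-z)
    have hx' : ∀ t ∈ Set.Ici (0:ℝ), HasDerivWithinAt (fun t => -(x t))
        (-(deriv (fun y => f (-y)) ((fun t => -(x t)) t))) (Set.Ici 0) t := by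
      intro t ht
      have h := (hx t ht).neg
      rw [hderiv']
      simp only [neg_neg] at h ⊢
      exact h
    have hp' : ∀ t : ℝ, 0 ≤ t → 0 < deriv (fun y => f (-y)) ((fun t => -(x t)) t) := by
      intro t ht
      rw [hderiv']
      simp only [neg_neg]
      linarith [hneg t ht]
    have hbd' : ∀ t ≥ T, ε / (t * (Real.log t) ^ 2)
        ≤ (fun y => f (-y)) ((fun t => -(x t)) t) - (fun y => f (-y)) (-xstar) := by
      intro t ht
      simpa using hbd t ht
    exact key (fun y => f (-y)) hconv' hf' (-xstar) hmin' (fun t => -(x t)) hx' hp'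
      ε T hε hT hbd'
end

section
/- Let φ : (0,∞) → (0,∞) be a monotone increasing function with lim_{t→∞} φ(t) = +∞. Then there exists a convex differentiable function g : (0,∞) → (0,∞) such that lim_{t→∞} g(t) = 0, ∫₀^∞ √(−g'(t)) dt < ∞, and limsup_{t→∞} t·φ(t)·g(t) = +∞. -/
open Filter MeasureTheory Set

private lemma sqrt_tsum_le {d : ℕ → ℝ} (hd0 : ∀ n, 0 ≤ d n)
    (hss : Summable fun n => Real.sqrt (d n)) :
    Real.sqrt (∑' n, d n) ≤ ∑' n, Real.sqrt (d n) := by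
  set S := ∑' n, Real.sqrt (d n) with hS
  have hS0 : 0 ≤ S := tsum_nonneg fun n => Real.sqrt_nonneg _
  have hterm : ∀ n, d n ≤ Real.sqrt (d n) * S := by
    intro n
    have h2 : Real.sqrt (d n) ≤ S := Summable.le_tsum hss n fun j _ => Real.sqrt_nonneg _
    calc d n = Real.sqrt (d n) * Real.sqrt (d n) := (Real.mul_self_sqrt (hd0 n)).symm
    _ ≤ Real.sqrt (d n) * S := by
        exact mul_le_mul_of_nonneg_left h2 (Real.sqrt_nonneg _)
  have hd : Summable d := Summable.of_nonneg_of_le hd0 hterm (hss.mul_right S)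
  have h1 : ∑' n, d n ≤ S ^ 2 := by
    calc (∑' n, d n) ≤ ∑' n, Real.sqrt (d n) * S :=
          Summable.tsum_le_tsum hterm hd (hss.mul_right S)
    _ = S * S := by rw [tsum_mul_right]
    _ = S ^ 2 := (sq S).symm
  calc Real.sqrt (∑' n, d n) ≤ Real.sqrt (S ^ 2) := Real.sqrt_le_sqrt h1
  _ = S := Real.sqrt_sq hS0

private lemma integral_exp_neg_mul' {l : ℝ} (hl : 0 < l) :
    ∫ x in Ioi (0:ℝ), Real.exp (-l * x) = l⁻¹ := by
  have h := integral_comp_mul_left_Ioi (fun x => Real.exp (-x)) 0 hl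
  simp only [neg_mul, mul_zero, smul_eq_mul] at h ⊢
  rw [h, integral_exp_neg_Ioi, neg_zero, Real.exp_zero, mul_one]

private lemma log_one_add_exp_neg_one : (1:ℝ)/4 ≤ Real.log (1 + Real.exp (-1)) := by
  have h1 : Real.exp (1/4 : ℝ) < 1.3 := by
    have h4 : Real.exp (1/4 : ℝ) ^ 4 = Real.exp 1 := by
      rw [← Real.exp_nat_mul]; norm_num
    have h5 : Real.exp (1/4 : ℝ) ^ 4 < (1.3:ℝ) ^ 4 := by
      rw [h4]; nlinarith [Real.exp_one_lt_d9]
    exact lt_of_pow_lt_pow_left₀ 4 (by norm_num) h5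
  have h2 : (0.3 : ℝ) < Real.exp (-1) := by
    rw [Real.exp_neg]
    have := Real.exp_one_lt_d9
    have := Real.exp_pos (1:ℝ)
    rw [lt_inv_comm₀] <;> nlinarith
  have h3 : Real.exp (1/4:ℝ) ≤ 1 + Real.exp (-1) := by nlinarith
  calc (1:ℝ)/4 = Real.log (Real.exp (1/4)) := by rw [Real.log_exp]
  _ ≤ Real.log (1 + Real.exp (-1)) := Real.log_le_log (Real.exp_pos _) h3

/-- For any monotone increasing `φ : (0,∞) → (0,∞)` with `φ(t) → ∞`
there exists a convex differentiable `g : (0,∞) → (0,∞)` with `g(t) → 0`,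
`∫₀^∞ √(−g'(t)) dt < ∞`, and `limsup_{t→∞} t·φ(t)·g(t) = +∞` (i.e. for every `M`,
frequently `t·φ(t)·g(t) ≥ M`). -/
theorem no_quantitative_improvement_finite_length
    (φ : ℝ → ℝ) (hmono : MonotoneOn φ (Set.Ioi 0))
    (hpos : ∀ t ∈ Set.Ioi (0:ℝ), 0 < φ t)
    (hlim : Filter.Tendsto φ Filter.atTop Filter.atTop) :
    ∃ g : ℝ → ℝ, (∀ t ∈ Set.Ioi (0:ℝ), 0 < g t) ∧
      ConvexOn ℝ (Set.Ioi 0) g ∧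
      DifferentiableOn ℝ g (Set.Ioi 0) ∧
      Filter.Tendsto g Filter.atTop (nhds 0) ∧
      MeasureTheory.IntegrableOn (fun t => Real.sqrt (-(deriv g t))) (Set.Ioi 0) ∧
      ∀ M : ℝ, ∃ᶠ t in Filter.atTop, M ≤ t * φ t * g t := by
  classical
  choose T hT using fun C : ℝ => eventually_atTop.1 (tendsto_atTop.1 hlim C)
  set b : ℕ → ℝ := fun n : ℕ => max ((n:ℝ)+1) (T ((n:ℝ) * (4:ℝ)^n)) with hb_def
  have hbn : ∀ n : ℕ, (n:ℝ)+1 ≤ b n := fun n => le_max_left _ _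
  have hb1 : ∀ n : ℕ, 1 ≤ b n := fun n => by
    have : (1:ℝ) ≤ (n:ℝ)+1 := by nlinarith [Nat.cast_nonneg (α := ℝ) n]
    linarith [hbn n]
  have hbpos : ∀ n : ℕ, (0:ℝ) < b n := fun n => lt_of_lt_of_le one_pos (hb1 n)
  have hphib : ∀ n : ℕ, (n:ℝ) * 4^n ≤ φ (b n) := fun n => hT _ _ (le_max_right _ _)
  set a : ℕ → ℝ := fun n => 1 / (b n * 4^n) with ha_def
  have ha_pos : ∀ n : ℕ, 0 < a n := fun n => by
    have := hbpos n
    simp only [ha_def]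
    positivity
  have ha_le : ∀ n : ℕ, a n ≤ (1/4:ℝ)^n := by
    intro n
    have h1 : (4:ℝ)^n ≤ b n * 4^n := le_mul_of_one_le_left (by positivity) (hb1 n)
    calc a n = 1 / (b n * 4^n) := rfl
    _ ≤ 1 / (4:ℝ)^n := one_div_le_one_div_of_le (by positivity) h1
    _ = (1/4:ℝ)^n := (one_div_pow 4 n).symm
  have hc_le : ∀ n : ℕ, a n / b n ≤ (1/4:ℝ)^n := by
    intro n
    calc a n / b n ≤ a n / 1 := by
          apply div_le_div_of_nonneg_left (ha_pos n).le one_pos (hb1 n)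
    _ = a n := div_one _
    _ ≤ (1/4:ℝ)^n := ha_le n
  -- the building blocks
  set f : ℕ → ℝ → ℝ := fun n t => a n * Real.log (1 + Real.exp (-(t / b n))) with hf_def
  set f' : ℕ → ℝ → ℝ :=
    fun n t => a n * (Real.exp (-(t / b n)) * -(1 / b n) / (1 + Real.exp (-(t / b n))))
    with hf'_def
  have hexp_pos : ∀ (n : ℕ) (t : ℝ), 0 < Real.exp (-(t / b n)) := fun n t => Real.exp_pos _
  have hder : ∀ (n : ℕ) (t : ℝ), HasDerivAt (f n) (f' n t) t := by
    intro n t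
    have h1 : HasDerivAt (fun t : ℝ => -(t / b n)) (-(1 / b n)) t := by
      exact ((hasDerivAt_id t).div_const (b n)).neg
    have h2 := h1.exp
    have h3 : HasDerivAt (fun t : ℝ => 1 + Real.exp (-(t / b n)))
        (Real.exp (-(t / b n)) * -(1 / b n)) t := h2.const_add 1
    have h4 : (1:ℝ) + Real.exp (-(t / b n)) ≠ 0 := by positivity
    exact (h3.log h4).const_mul (a n)
  have hf'le : ∀ (n : ℕ) (t : ℝ), ‖f' n t‖ ≤ (1/4:ℝ)^n := by
    intro n t
    set E := Real.exp (-(t / b n)) with hE_def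
    have hE : 0 < E := hexp_pos n t
    have hb := hbpos n
    have heq : f' n t = -(a n * (E * (1 / b n) / (1 + E))) := by
      simp only [hf'_def]
      ring
    have hnum : 0 ≤ a n * (E * (1 / b n) / (1 + E)) := by positivity
    rw [heq, norm_neg, Real.norm_eq_abs, abs_of_nonneg hnum]
    calc a n * (E * (1 / b n) / (1 + E)) ≤ a n * (1 / b n) := by
          apply mul_le_mul_of_nonneg_left _ (ha_pos n).le
          rw [div_le_iff₀ (by positivity)]
          have h1 : 0 < 1 / b n := by positivity
          nlinarith
    _ = a n / b n := by rw [one_div, div_eq_mul_inv]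
    _ ≤ (1/4:ℝ)^n := hc_le n
  have hu : Summable (fun n : ℕ => (1/4:ℝ)^n) :=
    summable_geometric_of_lt_one (by norm_num) (by norm_num)
  have hf_nonneg : ∀ (n : ℕ) (t : ℝ), 0 ≤ f n t := by
    intro n t
    apply mul_nonneg (ha_pos n).le
    apply Real.log_nonneg
    nlinarith [hexp_pos n t]
  have hf_le : ∀ (n : ℕ) (t : ℝ), 0 ≤ t → f n t ≤ a n := by
    intro n t ht
    have hE1 : Real.exp (-(t / b n)) ≤ 1 := by
      rw [Real.exp_le_one_iff]
      have := hbpos n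
      have : 0 ≤ t / b n := by positivity
      linarith
    calc f n t ≤ a n * Real.log 2 := by
          apply mul_le_mul_of_nonneg_left _ (ha_pos n).le
          apply Real.log_le_log (by positivity)
          linarith
    _ ≤ a n * 1 := by
          apply mul_le_mul_of_nonneg_left _ (ha_pos n).le
          nlinarith [Real.log_two_lt_d9]
    _ = a n := mul_one _
  have hsumf : ∀ t : ℝ, 0 ≤ t → Summable (fun n => f n t) := fun t ht =>
    hu.of_nonneg_of_le (fun n => hf_nonneg n t)
      (fun n => (hf_le n t ht).trans (ha_le n))
  have hsum1 : Summable (fun n => f n 1) := hsumf 1 zero_le_one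
  set g : ℝ → ℝ := fun t => ∑' n, f n t with hg_def
  have hg : ∀ t : ℝ, HasDerivAt g (∑' n, f' n t) t := fun t =>
    hasDerivAt_tsum hu hder hf'le hsum1 t
  have hdiff : Differentiable ℝ g := fun t => (hg t).differentiableAt
  have hderiv : ∀ t, deriv g t = ∑' n, f' n t := fun t => (hg t).deriv
  have hsumf' : ∀ t : ℝ, Summable (fun n => f' n t) := fun t =>
    hu.of_norm_bounded (fun n => hf'le n t)
  -- monotonicity of the derivative, hence convexity
  have hmono' : Monotone (deriv g) := by
    intro x y hxy
    rw [hderiv x, hderiv y]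
    refine Summable.tsum_le_tsum ?_ (hsumf' x) (hsumf' y)
    intro n
    have hb := hbpos n
    set Ex := Real.exp (-(x / b n)) with hEx
    set Ey := Real.exp (-(y / b n)) with hEy
    have hExy : Ey ≤ Ex := by
      apply Real.exp_le_exp.2
      have h0 : x / b n ≤ y / b n := by gcongr
      linarith
    have hEx0 : 0 < Ex := Real.exp_pos _
    have hEy0 : 0 < Ey := Real.exp_pos _
    simp only [hf'_def]
    apply mul_le_mul_of_nonneg_left _ (ha_pos n).le
    rw [div_le_div_iff₀ (by positivity) (by positivity)]
    have h1 : 0 < 1 / b n := by positivity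
    nlinarith
  have hconv : ConvexOn ℝ (Set.Ioi 0) g :=
    (hmono'.convexOn_univ_of_deriv hdiff).subset (subset_univ _) (convex_Ioi 0)
  -- positivity
  have hgpos : ∀ t ∈ Set.Ioi (0:ℝ), 0 < g t := by
    intro t ht
    have h1 : f 0 t ≤ g t := Summable.le_tsum (hsumf t (le_of_lt ht)) 0 (fun j _ => hf_nonneg j t)
    have h2 : 0 < f 0 t := by
      apply mul_pos (ha_pos 0)
      apply Real.log_pos
      nlinarith [hexp_pos 0 t]
    linarith
  -- tendsto 0
  have hlim0 : ∀ n : ℕ, Tendsto (fun t => f n t) atTop (nhds 0) := by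
    intro n
    have h1 : Tendsto (fun t : ℝ => t / b n) atTop atTop :=
      tendsto_id.atTop_div_const (hbpos n)
    have h1' : Tendsto (fun t : ℝ => -(t / b n)) atTop atBot :=
      tendsto_neg_atTop_atBot.comp h1
    have h2 : Tendsto (fun t : ℝ => Real.exp (-(t / b n))) atTop (nhds 0) :=
      Real.tendsto_exp_atBot.comp h1'
    have h3 : Tendsto (fun t : ℝ => 1 + Real.exp (-(t / b n))) atTop (nhds 1) := by
      simpa using tendsto_const_nhds.add h2
    have h4 : Tendsto (fun t : ℝ => Real.log (1 + Real.exp (-(t / b n)))) atTop (nhds 0) := by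
      have h5 := (Real.continuousAt_log (by norm_num : (1:ℝ) ≠ 0)).tendsto.comp h3
      simpa [Function.comp_def] using h5
    simpa using h4.const_mul (a n)
  have htend : Tendsto g atTop (nhds 0) := by
    have h := tendsto_tsum_of_dominated_convergence (𝓕 := atTop)
      (f := fun (t : ℝ) (n : ℕ) => f n t) (g := fun _ : ℕ => (0:ℝ))
      (bound := fun n => (1/4:ℝ)^n) hu (fun n => hlim0 n) ?_
    · simpa using h
    · filter_upwards [eventually_ge_atTop (0:ℝ)] with t ht n
      rw [Real.norm_eq_abs, abs_of_nonneg (hf_nonneg n t)]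
      exact (hf_le n t ht).trans (ha_le n)
  -- integrability
  set w : ℕ → ℝ → ℝ :=
    fun n t => Real.sqrt (a n / b n) * Real.exp (-(1 / (2 * b n)) * t) with hw_def
  have hf'nonpos : ∀ (n : ℕ) (t : ℝ), 0 ≤ -(f' n t) := by
    intro n t
    have hE : 0 < Real.exp (-(t / b n)) := hexp_pos n t
    have hb := hbpos n
    simp only [hf'_def]
    have : a n * (Real.exp (-(t / b n)) * -(1 / b n) / (1 + Real.exp (-(t / b n)))) =
        -(a n * (Real.exp (-(t / b n)) * (1 / b n) / (1 + Real.exp (-(t / b n))))) := by ring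
    rw [this, neg_neg]
    positivity
  have hsqle : ∀ (n : ℕ) (t : ℝ), Real.sqrt (-(f' n t)) ≤ w n t := by
    intro n t
    have hb := hbpos n
    have hE : 0 < Real.exp (-(t / b n)) := hexp_pos n t
    have h1 : -(f' n t) ≤ (a n / b n) * Real.exp (-(t / b n)) := by
      have heq : -(f' n t) =
          a n * (Real.exp (-(t / b n)) * (1 / b n) / (1 + Real.exp (-(t / b n)))) := by
        simp only [hf'_def]; ring
      rw [heq]
      have h2 : Real.exp (-(t / b n)) * (1 / b n) / (1 + Real.exp (-(t / b n)))
          ≤ Real.exp (-(t / b n)) * (1 / b n) := by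
        apply div_le_self (by positivity) (by nlinarith)
      calc a n * (Real.exp (-(t / b n)) * (1 / b n) / (1 + Real.exp (-(t / b n))))
          ≤ a n * (Real.exp (-(t / b n)) * (1 / b n)) :=
            mul_le_mul_of_nonneg_left h2 (ha_pos n).le
      _ = (a n / b n) * Real.exp (-(t / b n)) := by ring
    calc Real.sqrt (-(f' n t)) ≤ Real.sqrt ((a n / b n) * Real.exp (-(t / b n))) :=
          Real.sqrt_le_sqrt h1
    _ = Real.sqrt (a n / b n) * Real.sqrt (Real.exp (-(t / b n))) :=
          Real.sqrt_mul (by positivity) _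
    _ = w n t := by
          rw [← Real.exp_half]
          have hzz : -(t / b n) / 2 = -(1 / (2 * b n)) * t := by
            field_simp
          rw [hzz]
  have hw_le : ∀ (n : ℕ) (t : ℝ), 0 ≤ t → w n t ≤ (1/2:ℝ)^n := by
    intro n t ht
    have hb := hbpos n
    have h1 : Real.exp (-(1 / (2 * b n)) * t) ≤ 1 := by
      rw [Real.exp_le_one_iff]
      have h9 : 0 ≤ 1 / (2 * b n) * t :=
        mul_nonneg (le_of_lt (div_pos one_pos (by linarith))) ht
      linarith [neg_nonpos_of_nonneg h9]
    have h2 : Real.sqrt (a n / b n) ≤ (1/2:ℝ)^n := by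
      have h3 : a n / b n ≤ ((1/2:ℝ)^n)^2 := by
        have h8 : ((1/2:ℝ)^n)^2 = (1/4:ℝ)^n := by
          rw [← pow_mul, mul_comm, pow_mul]
          norm_num
        rw [h8]
        exact hc_le n
      calc Real.sqrt (a n / b n) ≤ Real.sqrt (((1/2:ℝ)^n)^2) := Real.sqrt_le_sqrt h3
      _ = (1/2:ℝ)^n := Real.sqrt_sq (by positivity)
    calc w n t ≤ Real.sqrt (a n / b n) * 1 :=
          mul_le_mul_of_nonneg_left h1 (Real.sqrt_nonneg _)
    _ = Real.sqrt (a n / b n) := mul_one _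
    _ ≤ (1/2:ℝ)^n := h2
  have hu2 : Summable (fun n : ℕ => (1/2:ℝ)^n) :=
    summable_geometric_of_lt_one (by norm_num) (by norm_num)
  have hw_sum : ∀ t : ℝ, 0 ≤ t → Summable (fun n => w n t) := fun t ht =>
    hu2.of_nonneg_of_le (fun n => by positivity) (fun n => hw_le n t ht)
  have hD : ∀ t : ℝ, 0 < t →
      Real.sqrt (-(∑' n, f' n t)) ≤ ∑' n, w n t := by
    intro t ht
    rw [← tsum_neg]
    have hsq_sum : Summable (fun n => Real.sqrt (-(f' n t))) :=
      (hw_sum t ht.le).of_nonneg_of_le (fun n => Real.sqrt_nonneg _)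
        (fun n => hsqle n t)
    exact (sqrt_tsum_le (fun n => hf'nonpos n t) hsq_sum).trans
      (Summable.tsum_le_tsum (fun n => hsqle n t) hsq_sum (hw_sum t ht.le))
  have hcontf' : ∀ n : ℕ, Continuous (f' n) := by
    intro n
    have hcE : Continuous fun t : ℝ => Real.exp (-(t / b n)) :=
      Real.continuous_exp.comp ((continuous_id.div_const _).neg)
    exact continuous_const.mul ((hcE.mul continuous_const).div
      (continuous_const.add hcE)
      (fun t => (by positivity : (0:ℝ) < 1 + Real.exp (-(t / b n))).ne'))
  have hcontD : Continuous (fun t => ∑' n, f' n t) :=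
    continuous_tsum hcontf' hu (fun n t => hf'le n t)
  have hcont2 : Continuous (fun t => Real.sqrt (-(∑' n, f' n t))) :=
    Real.continuous_sqrt.comp hcontD.neg
  have hfun_eq : (fun t => Real.sqrt (-(deriv g t))) =
      fun t => Real.sqrt (-(∑' n, f' n t)) := funext fun t => by rw [hderiv t]
  have hw_int : ∀ n : ℕ, IntegrableOn (w n) (Ioi 0) := by
    intro n
    have hb := hbpos n
    have hl : 0 < 1 / (2 * b n) := by positivity
    exact (exp_neg_integrableOn_Ioi 0 hl).const_mul _
  have hw_int_val : ∀ n : ℕ, ∫ t in Ioi (0:ℝ), w n t ≤ 2 * (1/2:ℝ)^n := by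
    intro n
    have hb := hbpos n
    have hl : 0 < 1 / (2 * b n) := by positivity
    have h1 : ∫ t in Ioi (0:ℝ), w n t
        = Real.sqrt (a n / b n) * (1 / (2 * b n))⁻¹ := by
      rw [hw_def]
      simp only []
      rw [MeasureTheory.integral_const_mul, integral_exp_neg_mul' hl]
    rw [h1]
    have h2 : Real.sqrt (a n / b n) = 1 / (b n * 2^n) := by
      have h3 : a n / b n = (1 / (b n * 2^n))^2 := by
        have h4 : ((2:ℝ)^n)^2 = 4^n := by
          rw [← pow_mul, show (4:ℝ) = 2^2 by norm_num, ← pow_mul]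
          ring_nf
        simp only [ha_def]
        rw [div_pow, one_pow, mul_pow, h4, div_div]
        congr 1
        ring
      rw [h3, Real.sqrt_sq (by positivity)]
    rw [h2]
    have h5 : (1 / (2 * b n))⁻¹ = 2 * b n := by
      rw [one_div, inv_inv]
    rw [h5]
    have h6 : 1 / (b n * 2^n) * (2 * b n) = 2 * (1/2:ℝ)^n := by
      have hbne : b n ≠ 0 := (hbpos n).ne'
      rw [one_div_pow]
      field_simp
    linarith [h6.le]
  have hcontw : ∀ n : ℕ, Continuous (w n) := by
    intro n
    exact continuous_const.mul
      (Real.continuous_exp.comp (continuous_const.mul continuous_id))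
  -- assemble integrability
  have hint : IntegrableOn (fun t => Real.sqrt (-(deriv g t))) (Ioi 0) := by
    rw [hfun_eq]
    refine ⟨hcont2.aestronglyMeasurable, ?_⟩
    rw [hasFiniteIntegral_iff_norm]
    calc ∫⁻ t in Ioi (0:ℝ), ENNReal.ofReal ‖Real.sqrt (-(∑' n, f' n t))‖
        ≤ ∫⁻ t in Ioi (0:ℝ), ∑' n, ENNReal.ofReal (w n t) := by
          apply lintegral_mono_ae
          filter_upwards [ae_restrict_mem measurableSet_Ioi] with t ht
          rw [Real.norm_eq_abs, abs_of_nonneg (Real.sqrt_nonneg _)]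
          calc ENNReal.ofReal (Real.sqrt (-(∑' n, f' n t)))
              ≤ ENNReal.ofReal (∑' n, w n t) := ENNReal.ofReal_le_ofReal (hD t ht)
          _ = ∑' n, ENNReal.ofReal (w n t) :=
              ENNReal.ofReal_tsum_of_nonneg (fun n => by positivity)
                (hw_sum t (le_of_lt ht))
    _ = ∑' n, ∫⁻ t in Ioi (0:ℝ), ENNReal.ofReal (w n t) := by
          apply lintegral_tsum
          intro n
          exact ((hcontw n).measurable.ennreal_ofReal).aemeasurable
    _ ≤ ∑' n, ENNReal.ofReal (2 * (1/2:ℝ)^n) := by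
          apply ENNReal.tsum_le_tsum
          intro n
          rw [← ofReal_integral_eq_lintegral_ofReal (hw_int n)
            (Filter.Eventually.of_forall (fun t => by positivity))]
          exact ENNReal.ofReal_le_ofReal (hw_int_val n)
    _ = ENNReal.ofReal (∑' n : ℕ, 2 * (1/2:ℝ)^n) :=
          (ENNReal.ofReal_tsum_of_nonneg (fun n => by positivity)
            (hu2.mul_left 2)).symm
    _ < ⊤ := ENNReal.ofReal_lt_top
  -- assemble everything
  refine ⟨g, hgpos, hconv, hdiff.differentiableOn, htend, hint, ?_⟩
  intro M
  rw [frequently_atTop]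
  intro a0
  set n : ℕ := max (⌈4*M⌉₊ + 1) ⌈a0⌉₊ with hn_def
  refine ⟨b n, ?_, ?_⟩
  · calc a0 ≤ (⌈a0⌉₊ : ℝ) := Nat.le_ceil a0
    _ ≤ (n : ℝ) := Nat.cast_le.2 (le_max_right _ _)
    _ ≤ (n : ℝ) + 1 := by linarith
    _ ≤ b n := hbn n
  · have hM : 4*M ≤ (n:ℝ) := by
      calc 4*M ≤ (⌈4*M⌉₊ : ℝ) := Nat.le_ceil _
      _ ≤ (n : ℝ) := Nat.cast_le.2 (le_trans (Nat.le_succ _) (le_max_left _ _))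
    have hgb : a n * (1/4) ≤ g (b n) := by
      have h1 : f n (b n) ≤ g (b n) :=
        Summable.le_tsum (hsumf (b n) (hbpos n).le) n (fun j _ => hf_nonneg j (b n))
      have h2 : f n (b n) = a n * Real.log (1 + Real.exp (-1)) := by
        simp only [hf_def]
        rw [div_self (hbpos n).ne']
      calc a n * (1/4) ≤ a n * Real.log (1 + Real.exp (-1)) :=
            mul_le_mul_of_nonneg_left log_one_add_exp_neg_one (ha_pos n).le
      _ = f n (b n) := h2.symm
      _ ≤ g (b n) := h1
    have hφ := hphib n
    have hφpos : 0 < φ (b n) := hpos _ (hbpos n)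
    have hba : b n * a n = ((4:ℝ)^n)⁻¹ := by
      simp only [ha_def]
      field_simp
      exact div_self (hbpos n).ne'
    have h4pos : (0:ℝ) < 4^n := by positivity
    have hba0 : 0 ≤ b n * a n := mul_nonneg (hbpos n).le (ha_pos n).le
    calc M ≤ (n:ℝ)/4 := by linarith
    _ = ((n:ℝ) * 4^n) * (b n * a n) / 4 := by
        rw [hba]
        field_simp
    _ ≤ φ (b n) * (b n * a n) / 4 := by
        have h7 := mul_le_mul_of_nonneg_right hφ hba0
        linarith
    _ = b n * φ (b n) * (a n * (1/4)) := by ring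
    _ ≤ b n * φ (b n) * g (b n) :=
        mul_le_mul_of_nonneg_left hgb (mul_nonneg (hbpos n).le hφpos.le)
end
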